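/- arXiv:2504.20787 — 5 statements merged into one kernel-verified Lean document; each statement's English description precedes it below -/
import Mathlib

section
/- Let G be a finite 2-group such that G/G' has rank 3. Suppose H₁, H₂, H₃ are three pairwise distinct maximal subgroups of G with H₁ ∩ H₂ ⊆ H₃ and such that H₁' = H₂' = H₃' = G'. Then G' = 1, i.e. G is abelian (and in particular H' = G' for every subgroup H of G). -/
open scoped commutatorElement


private lemma exists_sq_one {G : Type*} [Group G] {g : G} (hg : g ≠ 1) {k : ℕ}
    (hk : g ^ (2:ℕ) ^ k = 1) :
    ∃ z : G, z ∈ Subgroup.zpowers g ∧ z ≠ 1 ∧ z * z = 1 := by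
  induction k with
  | zero => simp at hk; exact absurd hk hg
  | succ k ih =>
    by_cases h : g ^ (2:ℕ) ^ k = 1
    · exact ih h
    · refine ⟨g ^ (2:ℕ) ^ k, Subgroup.npow_mem_zpowers g _, h, ?_⟩
      rw [← pow_add, show (2:ℕ) ^ k + 2 ^ k = 2 ^ (k+1) by ring]
      exact hk

private lemma mem_zpowers_sq {G : Type*} [Group G] {z : G} (hz : z * z = 1) {w : G}
    (hw : w ∈ Subgroup.zpowers z) : w = 1 ∨ w = z := by
  have h2 : z ^ (2:ℤ) = 1 := by
    rw [show (2:ℤ) = ((2:ℕ):ℤ) by norm_num, zpow_natCast, pow_two]; exact hz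
  obtain ⟨n, rfl⟩ := hw
  rcases Int.even_or_odd n with ⟨m, rfl⟩ | ⟨m, rfl⟩
  · left; show z ^ (m+m) = 1; rw [← two_mul, zpow_mul, h2, one_zpow]
  · right; show z ^ (2*m+1) = z; rw [zpow_add, zpow_mul, h2, one_zpow, one_mul, zpow_one]

private lemma eq_of_card_le_two {α : Type*} [Group α] [Finite α] (h : Nat.card α ≤ 2)
    {u v : α} (hu : u ≠ 1) (hv : v ≠ 1) : u = v := by
  classical
  by_contra hne
  haveI := Fintype.ofFinite α
  have hc : ({1, u, v} : Finset α).card = 3 := by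
    rw [Finset.card_insert_of_notMem (by simp [Ne.symm hu, Ne.symm hv]),
      Finset.card_insert_of_notMem (by simp [hne]), Finset.card_singleton]
  have hle : ({1, u, v} : Finset α).card ≤ Nat.card α := by
    rw [Nat.card_eq_fintype_card]; exact Finset.card_le_univ _
  omega

private lemma coatom_facts {G : Type*} [Group G] [Finite G] (hG : IsPGroup 2 G)
    {H : Subgroup G} (h : IsCoatom H) :
    H.Normal ∧ H.index = 2 ∧ commutator G ≤ H := by
  haveI : Fact (Nat.Prime 2) := ⟨Nat.prime_two⟩
  haveI hnil : Group.IsNilpotent G := hG.isNilpotent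
  haveI hN : H.Normal := Subgroup.NormalizerCondition.normal_of_coatom H (normalizerCondition_of_isNilpotent) h
  have hQp : IsPGroup 2 (G ⧸ H) := hG.to_quotient H
  obtain ⟨x, hx⟩ : ∃ x : G, x ∉ H := by
    by_contra h'; push_neg at h'
    exact h.1 ((Subgroup.eq_top_iff' H).mpr h')
  haveI hQnt : Nontrivial (G ⧸ H) :=
    ⟨⟨(x : G ⧸ H), 1, by simpa [QuotientGroup.eq_one_iff] using hx⟩⟩
  obtain ⟨k, hk⟩ := IsPGroup.iff_card.mp hQp
  have h2 : (2:ℕ) ∣ Nat.card (G ⧸ H) := by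
    have h1 : 1 < Nat.card (G ⧸ H) := Finite.one_lt_card
    rcases k with _ | k
    · simp at hk; omega
    · exact hk ▸ dvd_pow_self 2 (Nat.succ_ne_zero k)
  obtain ⟨g, hg⟩ := exists_prime_orderOf_dvd_card' 2 h2
  have hsub : ∀ P : Subgroup (G ⧸ H), P = ⊥ ∨ P = ⊤ := by
    intro P
    have hle : H ≤ P.comap (QuotientGroup.mk' H) := by
      intro y hy
      have : ((y : G) : G ⧸ H) = 1 := (QuotientGroup.eq_one_iff y).mpr hy
      simp only [Subgroup.mem_comap]
      show ((y : G) : G ⧸ H) ∈ P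
      rw [this]; exact P.one_mem
    rcases eq_or_lt_of_le hle with heq | hlt
    · left
      have hPm : P = Subgroup.map (QuotientGroup.mk' H) (P.comap (QuotientGroup.mk' H)) :=
        (Subgroup.map_comap_eq_self_of_surjective (QuotientGroup.mk'_surjective H) P).symm
      rw [hPm, ← heq, Subgroup.map_eq_bot_iff, QuotientGroup.ker_mk']
    · right
      have htop := h.2 _ hlt
      have := congrArg (Subgroup.map (QuotientGroup.mk' H)) htop
      rw [Subgroup.map_comap_eq_self_of_surjective (QuotientGroup.mk'_surjective H),
        Subgroup.map_top_of_surjective _ (QuotientGroup.mk'_surjective H)] at this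
      exact this
  have hgt : Subgroup.zpowers g = ⊤ := by
    rcases hsub (Subgroup.zpowers g) with h' | h'
    · rw [Subgroup.zpowers_eq_bot] at h'
      rw [h', orderOf_one] at hg; omega
    · exact h'
  have hcard : Nat.card (G ⧸ H) = 2 := by
    rw [← Subgroup.card_top (G := G ⧸ H), ← hgt, Nat.card_zpowers, hg]
  have hidx : H.index = 2 := by rw [Subgroup.index_eq_card, hcard]
  refine ⟨hN, hidx, ?_⟩
  haveI hcyc : IsCyclic (G ⧸ H) := isCyclic_of_prime_card hcard
  letI : CommGroup (G ⧸ H) := IsCyclic.commGroup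
  rw [_root_.commutator_def, Subgroup.commutator_le]
  intro g₁ _ g₂ _
  rw [← QuotientGroup.eq_one_iff]
  show ((QuotientGroup.mk' H) ⁅g₁, g₂⁆) = 1
  rw [map_commutatorElement]
  exact commutatorElement_eq_one_iff_commute.mpr (mul_comm _ _)

private lemma isCoatom_map {G G₂ : Type*} [Group G] [Group G₂] {f : G →* G₂}
    (hf : Function.Surjective f) {H : Subgroup G} (hker : f.ker ≤ H) (h : IsCoatom H) :
    IsCoatom (Subgroup.map f H) := by
  have hcm : Subgroup.comap f (Subgroup.map f H) = H := by
    rw [Subgroup.comap_map_eq, sup_of_le_left hker]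
  constructor
  · intro htop
    apply h.1
    have := congrArg (Subgroup.comap f) htop
    rw [hcm, Subgroup.comap_top] at this; exact this
  · intro P hPgt
    have h1 : H ≤ Subgroup.comap f P := by
      rw [← hcm]; exact Subgroup.comap_mono hPgt.le
    have hne : H ≠ Subgroup.comap f P := by
      intro hEq
      apply hPgt.ne
      have := congrArg (Subgroup.map f) hEq
      rwa [Subgroup.map_comap_eq_self_of_surjective hf] at this
    have htop := h.2 _ (lt_of_le_of_ne h1 hne)
    have := congrArg (Subgroup.map f) htop
    rwa [Subgroup.map_comap_eq_self_of_surjective hf,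
      Subgroup.map_top_of_surjective _ hf] at this

private lemma reduced_case {G : Type*} [Group G] [Finite G] (hG : IsPGroup 2 G)
    (hrank : Group.rank (G ⧸ commutator G) = 3)
    (H₁ H₂ H₃ : Subgroup G)
    (h12 : H₁ ≠ H₂) (h13 : H₁ ≠ H₃) (h23 : H₂ ≠ H₃)
    (hm1 : IsCoatom H₁) (hm2 : IsCoatom H₂) (hm3 : IsCoatom H₃)
    (hint : H₁ ⊓ H₂ ≤ H₃)
    (hc1 : ⁅H₁, H₁⁆ = commutator G) (hc2 : ⁅H₂, H₂⁆ = commutator G)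
    (hc3 : ⁅H₃, H₃⁆ = commutator G)
    {z : G} (hz1 : z ≠ 1) (hz2 : z * z = 1) (hzc : ∀ g : G, z * g = g * z)
    (hzG : commutator G = Subgroup.zpowers z) : False := by
  classical
  obtain ⟨hN1, hi1, hle1⟩ := coatom_facts hG hm1
  obtain ⟨hN2, hi2, hle2⟩ := coatom_facts hG hm2
  obtain ⟨hN3, hi3, hle3⟩ := coatom_facts hG hm3
  -- commutator element facts
  have hcomm_mem : ∀ g h : G, ⁅g, h⁆ ∈ Subgroup.zpowers z := by
    intro g h
    rw [← hzG, _root_.commutator_def]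
    exact Subgroup.commutator_mem_commutator (Subgroup.mem_top g) (Subgroup.mem_top h)
  have hcomm_cases : ∀ g h : G, ⁅g, h⁆ = 1 ∨ ⁅g, h⁆ = z :=
    fun g h => mem_zpowers_sq hz2 (hcomm_mem g h)
  have hcent : ∀ g h w : G, ⁅g, h⁆ * w = w * ⁅g, h⁆ := by
    intro g h w
    rcases hcomm_cases g h with h' | h' <;> rw [h']
    · rw [one_mul, mul_one]
    · exact hzc w
  have hsq1 : ∀ g h : G, ⁅g, h⁆ * ⁅g, h⁆ = 1 := by
    intro g h
    rcases hcomm_cases g h with h' | h' <;> rw [h']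
    · rw [one_mul]
    · exact hz2
  have hconj : ∀ x g h : G, x * ⁅g, h⁆ * x⁻¹ = ⁅g, h⁆ := by
    intro x g h; rw [← hcent g h x]; group
  have bl1 : ∀ x y w : G, ⁅x * y, w⁆ = ⁅x, w⁆ * ⁅y, w⁆ := by
    intro x y w
    have h1 : ⁅x * y, w⁆ = x * ⁅y, w⁆ * x⁻¹ * ⁅x, w⁆ := by group
    rw [h1, hconj x y w]
    exact hcent y w ⁅x, w⁆
  have bl2 : ∀ x y w : G, ⁅x, y * w⁆ = ⁅x, y⁆ * ⁅x, w⁆ := by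
    intro x y w
    have h1 : ⁅x, y * w⁆ = ⁅x, y⁆ * (y * ⁅x, w⁆ * y⁻¹) := by group
    rw [h1, hconj y x w]
  have hswap : ∀ x y : G, ⁅x, y⁆ = ⁅y, x⁆ := by
    intro x y
    have h1 : ⁅y, x⁆ = ⁅x, y⁆⁻¹ := (commutatorElement_inv x y).symm
    rw [h1]
    exact (inv_eq_of_mul_eq_one_right (hsq1 x y)).symm
  have hself : ∀ g : G, ⁅g, g⁆ = 1 := by
    intro g; rw [commutatorElement_def]; group
  have hsqcen : ∀ x g : G, (x * x) * g = g * (x * x) := by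
    intro x g
    have h1 : ⁅x * x, g⁆ = 1 := by rw [bl1]; exact hsq1 x g
    exact (commutatorElement_eq_one_iff_commute.mp h1).eq
  -- a, b
  have hnle12 : ¬H₁ ≤ H₂ := by
    intro hle
    exact hm2.1 (hm1.2 _ (lt_of_le_of_ne hle h12))
  have hnle21 : ¬H₂ ≤ H₁ := by
    intro hle
    exact hm1.1 (hm2.2 _ (lt_of_le_of_ne hle (Ne.symm h12)))
  obtain ⟨a, ha1, ha2⟩ := SetLike.not_le_iff_exists.mp hnle12
  obtain ⟨b, hb2, hb1⟩ := SetLike.not_le_iff_exists.mp hnle21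
  set K := H₁ ⊓ H₂ with hKdef
  have hmem1 : ∀ u v : G, u ∉ H₁ → v ∉ H₁ → u * v⁻¹ ∈ H₁ := by
    intro u v hu hv
    rw [Subgroup.mul_mem_iff_of_index_two hi1]
    simp [hu, hv]
  have hmem2 : ∀ u v : G, u ∉ H₂ → v ∉ H₂ → u * v⁻¹ ∈ H₂ := by
    intro u v hu hv
    rw [Subgroup.mul_mem_iff_of_index_two hi2]
    simp [hu, hv]
  have ha3 : a ∉ H₃ := by
    intro haH3
    have hle : H₁ ≤ H₃ := by
      intro h hh
      by_cases hh2 : h ∈ H₂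
      · exact hint ⟨hh, hh2⟩
      · have h1 : h * a⁻¹ ∈ H₂ := hmem2 h a hh2 ha2
        have h2 : h * a⁻¹ ∈ H₁ := H₁.mul_mem hh (H₁.inv_mem ha1)
        have h3 : h * a⁻¹ ∈ H₃ := hint ⟨h2, h1⟩
        have h4 := H₃.mul_mem h3 haH3
        simpa using h4
    rcases eq_or_lt_of_le hle with he | hl
    · exact h13 he
    · exact hm3.1 (hm1.2 _ hl)
  have hb3 : b ∉ H₃ := by
    intro hbH3
    have hle : H₂ ≤ H₃ := by
      intro h hh
      by_cases hh1 : h ∈ H₁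
      · exact hint ⟨hh1, hh⟩
      · have h1 : h * b⁻¹ ∈ H₁ := hmem1 h b hh1 hb1
        have h2 : h * b⁻¹ ∈ H₂ := H₂.mul_mem hh (H₂.inv_mem hb2)
        have h3 : h * b⁻¹ ∈ H₃ := hint ⟨h1, h2⟩
        have h4 := H₃.mul_mem h3 hbH3
        simpa using h4
    rcases eq_or_lt_of_le hle with he | hl
    · exact h23 he
    · exact hm3.1 (hm2.2 _ hl)
  have hab3 : a * b ∈ H₃ := by
    rw [Subgroup.mul_mem_iff_of_index_two hi3]
    simp [ha3, hb3]
  have hab1 : a * b ∉ H₁ := by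
    intro h
    exact hb1 (by simpa using H₁.mul_mem (H₁.inv_mem ha1) h)
  have hab2 : a * b ∉ H₂ := by
    intro h
    exact ha2 (by simpa using H₂.mul_mem h (H₂.inv_mem hb2))
  -- decompositions
  have d1 : ∀ h ∈ H₁, h ∈ K ∨ h * a⁻¹ ∈ K := by
    intro h hh
    by_cases hh2 : h ∈ H₂
    · exact Or.inl ⟨hh, hh2⟩
    · exact Or.inr ⟨H₁.mul_mem hh (H₁.inv_mem ha1), hmem2 h a hh2 ha2⟩
  have d2 : ∀ h ∈ H₂, h ∈ K ∨ h * b⁻¹ ∈ K := by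
    intro h hh
    by_cases hh1 : h ∈ H₁
    · exact Or.inl ⟨hh1, hh⟩
    · exact Or.inr ⟨hmem1 h b hh1 hb1, H₂.mul_mem hh (H₂.inv_mem hb2)⟩
  have d3 : ∀ h ∈ H₃, h ∈ K ∨ h * (a * b)⁻¹ ∈ K := by
    intro h hh
    by_cases hhK : h ∈ K
    · exact Or.inl hhK
    · have hh1 : h ∉ H₁ := by
        intro hh1
        have hh2 : h ∉ H₂ := fun hh2 => hhK ⟨hh1, hh2⟩
        have h1 : h * a⁻¹ ∈ K := ⟨H₁.mul_mem hh1 (H₁.inv_mem ha1), hmem2 h a hh2 ha2⟩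
        have h3 : (h * a⁻¹)⁻¹ * h ∈ H₃ := H₃.mul_mem (H₃.inv_mem (hint h1)) hh
        exact ha3 (by simpa [mul_assoc] using h3)
      have hh2 : h ∉ H₂ := by
        intro hh2
        have h1 : h * b⁻¹ ∈ K := ⟨hmem1 h b hh1 hb1, H₂.mul_mem hh2 (H₂.inv_mem hb2)⟩
        have h3 : (h * b⁻¹)⁻¹ * h ∈ H₃ := H₃.mul_mem (H₃.inv_mem (hint h1)) hh
        exact hb3 (by simpa [mul_assoc] using h3)
      have hA : h * (a * b)⁻¹ ∈ H₁ := by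
        rw [Subgroup.mul_mem_iff_of_index_two hi1, Subgroup.inv_mem_iff]; tauto
      have hB : h * (a * b)⁻¹ ∈ H₂ := by
        rw [Subgroup.mul_mem_iff_of_index_two hi2, Subgroup.inv_mem_iff]; tauto
      exact Or.inr ⟨hA, hB⟩
  -- the Frattini-like subgroup
  set Φ : Subgroup G := Subgroup.closure {g : G | ∃ x : G, g = x * x} ⊔ _root_.commutator G
    with hΦdef
  have hΦcenter : Φ ≤ Subgroup.center G := by
    apply sup_le
    · rw [Subgroup.closure_le]
      rintro g ⟨x, rfl⟩
      rw [SetLike.mem_coe, Subgroup.mem_center_iff]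
      intro g'
      exact (hsqcen x g').symm
    · rw [hzG, Subgroup.zpowers_le]
      rw [Subgroup.mem_center_iff]
      intro g
      exact (hzc g).symm
  have hΦcen : ∀ φ ∈ Φ, ∀ g : G, φ * g = g * φ := by
    intro φ hφ g
    exact (Subgroup.mem_center_iff.mp (hΦcenter hφ) g).symm
  have hsqmem : ∀ (x : G) (Hi : Subgroup G), Hi.index = 2 → x * x ∈ Hi := by
    intro x Hi hi
    rw [Subgroup.mul_mem_iff_of_index_two hi]
  have hΦK : Φ ≤ K := by
    apply sup_le
    · rw [Subgroup.closure_le]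
      rintro g ⟨x, rfl⟩
      exact ⟨hsqmem x H₁ hi1, hsqmem x H₂ hi2⟩
    · exact le_inf hle1 hle2
  haveI hΦN : Φ.Normal := by
    constructor
    intro m hm g
    have h1 : g * m * g⁻¹ = m := by rw [← hΦcen m hm g]; group
    rw [h1]; exact hm
  -- the quotient E = G / Φ
  set π := QuotientGroup.mk' Φ with hπdef
  have hπs : Function.Surjective π := QuotientGroup.mk'_surjective Φ
  have hcommΦ : ∀ g h : G, ⁅g, h⁆ ∈ Φ := by
    intro g h
    apply le_sup_right (α := Subgroup G)
    rw [_root_.commutator_def]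
    exact Subgroup.commutator_mem_commutator (Subgroup.mem_top g) (Subgroup.mem_top h)
  have hEcomm : ∀ u v : G ⧸ Φ, u * v = v * u := by
    intro u v
    obtain ⟨g, rfl⟩ := hπs u
    obtain ⟨h, rfl⟩ := hπs v
    have h1 : (π ⁅g, h⁆) = 1 := (QuotientGroup.eq_one_iff _).mpr (hcommΦ g h)
    rw [map_commutatorElement] at h1
    exact (commutatorElement_eq_one_iff_commute.mp h1).eq
  have hEsq : ∀ u : G ⧸ Φ, u * u = 1 := by
    intro u
    obtain ⟨g, rfl⟩ := hπs u
    rw [← map_mul]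
    exact (QuotientGroup.eq_one_iff _).mpr (le_sup_left (α := Subgroup G)
      (Subgroup.subset_closure ⟨g, rfl⟩))
  -- generators from the rank hypothesis
  obtain ⟨S, hScard, hSgen⟩ := Group.rank_spec (G ⧸ _root_.commutator G)
  rw [hrank] at hScard
  obtain ⟨q₁, q₂, q₃, hq12, hq13, hq23, hSeq⟩ := Finset.card_eq_three.mp hScard
  set ψ : (G ⧸ _root_.commutator G) →* (G ⧸ Φ) :=
    QuotientGroup.map _ _ (MonoidHom.id G) (le_sup_right (α := Subgroup G)) with hψdef
  have hψs : Function.Surjective ψ := by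
    intro e
    obtain ⟨g, rfl⟩ := hπs e
    exact ⟨QuotientGroup.mk g, rfl⟩
  have hEgen : Subgroup.closure ({ψ q₁, ψ q₂, ψ q₃} : Set (G ⧸ Φ)) = ⊤ := by
    have h1 : Subgroup.map ψ ⊤ = ⊤ := Subgroup.map_top_of_surjective ψ hψs
    rw [← hSgen, hSeq, MonoidHom.map_closure] at h1
    rw [← h1]
    congr 1
    simp [Set.image_insert_eq]
  have hcond : ∀ (u : G ⧸ Φ) (i i' : Bool),
      (cond i u 1) * (cond i' u 1) = cond (xor i i') u 1 := by
    intro u i i'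
    cases i <;> cases i' <;> simp [hEsq u]
  letI : CommGroup (G ⧸ Φ) := { (inferInstance : Group (G ⧸ Φ)) with mul_comm := hEcomm }
  have hforms : ∀ e : G ⧸ Φ, ∃ i j k : Bool,
      e = (cond i (ψ q₁) 1) * (cond j (ψ q₂) 1) * (cond k (ψ q₃) 1) := by
    intro e
    have he : e ∈ Subgroup.closure ({ψ q₁, ψ q₂, ψ q₃} : Set (G ⧸ Φ)) := by
      rw [hEgen]; trivial
    induction he using Subgroup.closure_induction with
    | mem x hx =>
      simp only [Set.mem_insert_iff, Set.mem_singleton_iff] at hx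
      rcases hx with rfl | rfl | rfl
      · exact ⟨true, false, false, by simp⟩
      · exact ⟨false, true, false, by simp⟩
      · exact ⟨false, false, true, by simp⟩
    | one => exact ⟨false, false, false, by simp⟩
    | mul x y hx hy ihx ihy =>
      obtain ⟨i, j, k, rfl⟩ := ihx
      obtain ⟨i', j', k', rfl⟩ := ihy
      refine ⟨xor i i', xor j j', xor k k', ?_⟩
      rw [mul_mul_mul_comm (cond i (ψ q₁) 1 * cond j (ψ q₂) 1) (cond k (ψ q₃) 1)
          (cond i' (ψ q₁) 1 * cond j' (ψ q₂) 1) (cond k' (ψ q₃) 1),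
        mul_mul_mul_comm (cond i (ψ q₁) 1) (cond j (ψ q₂) 1) (cond i' (ψ q₁) 1)
          (cond j' (ψ q₂) 1),
        hcond, hcond, hcond]
    | inv x hx ihx =>
      obtain ⟨i, j, k, hxe⟩ := ihx
      refine ⟨i, j, k, ?_⟩
      rw [← hxe]
      exact inv_eq_of_mul_eq_one_left (hEsq x)
  have hcardE : Nat.card (G ⧸ Φ) ≤ 8 := by
    have hsurj : Function.Surjective (fun t : Bool × Bool × Bool =>
        (cond t.1 (ψ q₁) 1) * (cond t.2.1 (ψ q₂) 1) * (cond t.2.2 (ψ q₃) 1)) := by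
      intro e
      obtain ⟨i, j, k, he⟩ := hforms e
      exact ⟨(i, j, k), he.symm⟩
    have h8 : Nat.card (Bool × Bool × Bool) = 8 := by
      simp [Nat.card_eq_fintype_card]
    have hle := Nat.card_le_card_of_surjective _ hsurj
    omega
  -- index of K is 4
  have haK : a ∉ K := fun h => ha2 h.2
  have hbK : b ∉ K := fun h => hb1 h.1
  have habK : a * b ∉ K := fun h => hab1 h.1
  have hKle : K.index ≤ 4 := by
    have h := Subgroup.index_inf_le (H := H₁) (K := H₂)
    rw [hi1, hi2] at h
    simpa using h
  have hKge : 4 ≤ K.index := by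
    rw [Subgroup.index_eq_card]
    haveI := Fintype.ofFinite (G ⧸ K)
    rw [Nat.card_eq_fintype_card]
    have hne' : ∀ u v : G, u⁻¹ * v ∉ K → (QuotientGroup.mk u : G ⧸ K) ≠ QuotientGroup.mk v := by
      intro u v h hEq
      exact h (QuotientGroup.eq.mp hEq)
    have n01 : (QuotientGroup.mk (1:G) : G ⧸ K) ≠ QuotientGroup.mk a := by
      apply hne'; simpa using haK
    have n02 : (QuotientGroup.mk (1:G) : G ⧸ K) ≠ QuotientGroup.mk b := by
      apply hne'; simpa using hbK
    have n03 : (QuotientGroup.mk (1:G) : G ⧸ K) ≠ QuotientGroup.mk (a * b) := by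
      apply hne'; simpa using habK
    have n12 : (QuotientGroup.mk a : G ⧸ K) ≠ QuotientGroup.mk b := by
      apply hne'
      intro h
      exact hb1 (by simpa using H₁.mul_mem ha1 h.1)
    have n13 : (QuotientGroup.mk a : G ⧸ K) ≠ QuotientGroup.mk (a * b) := by
      apply hne'
      intro h
      exact hbK (by simpa [mul_assoc] using h)
    have n23 : (QuotientGroup.mk b : G ⧸ K) ≠ QuotientGroup.mk (a * b) := by
      apply hne'
      intro h
      have h2 : b * (b⁻¹ * (a * b)) * b⁻¹ ∈ H₂ :=
        H₂.mul_mem (H₂.mul_mem hb2 h.2) (H₂.inv_mem hb2)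
      exact ha2 (by simpa [mul_assoc] using h2)
    classical
    have hnm1 : (QuotientGroup.mk (1:G) : G ⧸ K) ∉ ({QuotientGroup.mk a, QuotientGroup.mk b,
        QuotientGroup.mk (a * b)} : Finset (G ⧸ K)) := by
      simp only [Finset.mem_insert, Finset.mem_singleton]
      push_neg
      exact ⟨n01, n02, n03⟩
    have hnm2 : (QuotientGroup.mk a : G ⧸ K) ∉ ({QuotientGroup.mk b,
        QuotientGroup.mk (a * b)} : Finset (G ⧸ K)) := by
      simp only [Finset.mem_insert, Finset.mem_singleton]
      push_neg
      exact ⟨n12, n13⟩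
    have hnm3 : (QuotientGroup.mk b : G ⧸ K) ∉ ({QuotientGroup.mk (a * b)} :
        Finset (G ⧸ K)) := by
      simp only [Finset.mem_singleton]
      exact n23
    have hcard4 : ({QuotientGroup.mk 1, QuotientGroup.mk a, QuotientGroup.mk b,
        QuotientGroup.mk (a * b)} : Finset (G ⧸ K)).card = 4 := by
      rw [Finset.card_insert_of_notMem hnm1, Finset.card_insert_of_notMem hnm2,
        Finset.card_insert_of_notMem hnm3, Finset.card_singleton]
    calc 4 = ({QuotientGroup.mk 1, QuotientGroup.mk a, QuotientGroup.mk b,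
          QuotientGroup.mk (a * b)} : Finset (G ⧸ K)).card := hcard4.symm
      _ ≤ Fintype.card (G ⧸ K) := Finset.card_le_univ _
  have hK4 : K.index = 4 := le_antisymm hKle hKge
  -- the image of K in E has at most 2 elements
  have hKbar_index : (Subgroup.map π K).index = 4 := by
    rw [Subgroup.index_map_eq K hπs (by rw [QuotientGroup.ker_mk']; exact hΦK), hK4]
  have hKbar_card : Nat.card (Subgroup.map π K) ≤ 2 := by
    have h1 := Subgroup.card_mul_index (Subgroup.map π K)
    rw [hKbar_index] at h1
    omega
  -- extract c
  obtain ⟨c, hcK, hdec⟩ : ∃ c, c ∈ K ∧ ∀ k ∈ K, k ∈ Φ ∨ c⁻¹ * k ∈ Φ := by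
    by_cases hall : ∀ k ∈ K, k ∈ Φ
    · exact ⟨1, K.one_mem, fun k hk => Or.inl (hall k hk)⟩
    · push_neg at hall
      obtain ⟨c, hcK, hcΦ⟩ := hall
      refine ⟨c, hcK, ?_⟩
      intro k hk
      by_cases hkΦ : k ∈ Φ
      · exact Or.inl hkΦ
      · right
        have h1 : (π c : G ⧸ Φ) ≠ 1 := by
          intro h; exact hcΦ ((QuotientGroup.eq_one_iff c).mp h)
        have h2 : (π k : G ⧸ Φ) ≠ 1 := by
          intro h; exact hkΦ ((QuotientGroup.eq_one_iff k).mp h)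
        have hu : (⟨π k, Subgroup.mem_map_of_mem π hk⟩ : Subgroup.map π K) =
            ⟨π c, Subgroup.mem_map_of_mem π hcK⟩ := by
          apply eq_of_card_le_two hKbar_card
          · intro h; exact h2 (congrArg Subtype.val h)
          · intro h; exact h1 (congrArg Subtype.val h)
        have h3 : (π c : G ⧸ Φ) = π k := (congrArg Subtype.val hu).symm
        exact QuotientGroup.eq.mp h3
  -- normal forms for elements of the three maximal subgroups
  have hform : ∀ (x : G) (Hi : Subgroup G), (∀ h ∈ Hi, h ∈ K ∨ h * x⁻¹ ∈ K) → ∀ h ∈ Hi,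
      ∃ (i j : Bool) (φ : G), φ ∈ Φ ∧ h = (cond j c 1) * (cond i x 1) * φ := by
    intro x Hi hdecHi h hh
    have hKform : ∀ k ∈ K, ∃ (j : Bool) (φ : G), φ ∈ Φ ∧ k = (cond j c 1) * φ := by
      intro k hk
      rcases hdec k hk with h' | h'
      · exact ⟨false, k, h', by simp⟩
      · exact ⟨true, c⁻¹ * k, h', by simp⟩
    rcases hdecHi h hh with h' | h'
    · obtain ⟨j, φ, hφ, hk⟩ := hKform h h'
      exact ⟨false, j, φ, hφ, by simpa using hk⟩
    · obtain ⟨j, φ, hφ, hk⟩ := hKform _ h'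
      refine ⟨true, j, φ, hφ, ?_⟩
      simp only [cond_true]
      have h1 : h = (cond j c 1) * φ * x := by rw [← hk]; group
      rw [h1, mul_assoc, hΦcen φ hφ x, ← mul_assoc]
  -- commutators of normal forms
  have strip : ∀ u v φ φ' : G, φ ∈ Φ → φ' ∈ Φ → ⁅u * φ, v * φ'⁆ = ⁅u, v⁆ := by
    intro u v φ φ' hφ hφ'
    rw [bl1, bl2, bl2]
    have h1 : ⁅u, φ'⁆ = 1 := commutatorElement_eq_one_iff_commute.mpr ((hΦcen φ' hφ' u).symm)
    have h2 : ⁅φ, v⁆ = 1 := commutatorElement_eq_one_iff_commute.mpr (hΦcen φ hφ v)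
    have h3 : ⁅φ, φ'⁆ = 1 := commutatorElement_eq_one_iff_commute.mpr (hΦcen φ hφ φ')
    rw [h1, h2, h3, mul_one, mul_one, mul_one]
  have base : ∀ (x : G) (i j i' j' : Bool),
      ⁅(cond j c 1) * (cond i x 1), (cond j' c 1) * (cond i' x 1)⁆ ∈
        Subgroup.zpowers ⁅x, c⁆ := by
    intro x i j i' j'
    rw [bl1, bl2, bl2]
    cases i <;> cases j <;> cases i' <;> cases j' <;>
      simp only [cond_true, cond_false, commutatorElement_one_left,
        commutatorElement_one_right, one_mul, mul_one, hself, hswap c x] <;>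
      first
      | exact Subgroup.one_mem _
      | exact Subgroup.mem_zpowers _
      | exact Subgroup.mul_mem _ (Subgroup.mem_zpowers _) (Subgroup.mem_zpowers _)
  have hcle : ∀ (x : G) (Hi : Subgroup G), (∀ h ∈ Hi, h ∈ K ∨ h * x⁻¹ ∈ K) →
      ⁅Hi, Hi⁆ ≤ Subgroup.zpowers ⁅x, c⁆ := by
    intro x Hi hd
    rw [Subgroup.commutator_le]
    intro g₁ hg₁ g₂ hg₂
    obtain ⟨i, j, φ, hφ, rfl⟩ := hform x Hi hd g₁ hg₁
    obtain ⟨i', j', φ', hφ', rfl⟩ := hform x Hi hd g₂ hg₂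
    rw [strip _ _ _ _ hφ hφ']
    exact base x i j i' j'
  have hval : ∀ (x : G) (Hi : Subgroup G), ⁅Hi, Hi⁆ = _root_.commutator G →
      (∀ h ∈ Hi, h ∈ K ∨ h * x⁻¹ ∈ K) → ⁅x, c⁆ = z := by
    intro x Hi hci hd
    have h1 : z ∈ Subgroup.zpowers ⁅x, c⁆ := by
      apply hcle x Hi hd
      rw [hci, hzG]
      exact Subgroup.mem_zpowers z
    rcases hcomm_cases x c with h' | h'
    · rw [h', Subgroup.zpowers_one_eq_bot, Subgroup.mem_bot] at h1
      exact absurd h1 hz1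
    · exact h'
  have hA := hval a H₁ hc1 d1
  have hB := hval b H₂ hc2 d2
  have hAB := hval (a * b) H₃ hc3 d3
  rw [bl1, hA, hB] at hAB
  exact hz1 (hAB.symm.trans hz2)

private theorem prop10_aux (n : ℕ) : ∀ (G : Type u) [Group G] [Finite G],
    Nat.card G ≤ n → IsPGroup 2 G → Group.rank (G ⧸ commutator G) = 3 →
    ∀ (H₁ H₂ H₃ : Subgroup G), H₁ ≠ H₂ → H₁ ≠ H₃ → H₂ ≠ H₃ →
    IsCoatom H₁ → IsCoatom H₂ → IsCoatom H₃ → H₁ ⊓ H₂ ≤ H₃ →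
    ⁅H₁, H₁⁆ = commutator G → ⁅H₂, H₂⁆ = commutator G → ⁅H₃, H₃⁆ = commutator G →
    commutator G = ⊥ := by
  induction n with
  | zero =>
    intro G _ _ hcard
    have := Nat.card_pos (α := G)
    omega
  | succ n ih =>
    intro G _ _ hcard hG hrank H₁ H₂ H₃ h12 h13 h23 hm1 hm2 hm3 hint hc1 hc2 hc3
    by_contra hne
    haveI : Fact (Nat.Prime 2) := ⟨Nat.prime_two⟩
    have hGc : IsPGroup 2 (ConjAct G) := hG.of_equiv ConjAct.toConjAct
    have hNp : IsPGroup 2 (commutator G) := hG.to_subgroup (commutator G)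
    obtain ⟨k, hk⟩ := IsPGroup.iff_card.mp hNp
    have hgt1 : 1 < Nat.card (commutator G) :=
      (Subgroup.one_lt_card_iff_ne_bot _).mpr hne
    have hdvd : (2:ℕ) ∣ Nat.card (commutator G) := by
      rcases k with _ | k
      · rw [pow_zero] at hk; omega
      · exact hk ▸ dvd_pow_self 2 (Nat.succ_ne_zero k)
    have h1fix : (1 : commutator G) ∈ MulAction.fixedPoints (ConjAct G) (commutator G) := by
      rw [MulAction.mem_fixedPoints]
      intro g
      apply Subtype.ext
      rw [ConjAct.Subgroup.val_conj_smul]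
      simp [ConjAct.smul_def]
    obtain ⟨w, hwfix, hw1⟩ :=
      hGc.exists_fixed_point_of_prime_dvd_card_of_fixed_point (_root_.commutator G) hdvd h1fix
    have hwcen : (w : G) ∈ Subgroup.center G := by
      rw [Subgroup.mem_center_iff]
      intro g
      have h1 := MulAction.mem_fixedPoints.mp hwfix (ConjAct.toConjAct g)
      have h2 := congrArg Subtype.val h1
      rw [ConjAct.Subgroup.val_conj_smul, ConjAct.toConjAct_smul] at h2
      calc g * ↑w = g * ↑w * g⁻¹ * g := by group
        _ = ↑w * g := by rw [h2]
    have hwne : (w : G) ≠ 1 := fun h => hw1 (Subtype.ext h.symm)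
    obtain ⟨k₀, hk₀⟩ := hG (w : G)
    obtain ⟨z, hzmem, hz1, hz2⟩ := exists_sq_one hwne hk₀
    have hzcen : z ∈ Subgroup.center G := (Subgroup.zpowers_le.mpr hwcen) hzmem
    have hzc : ∀ g : G, z * g = g * z := fun g => (Subgroup.mem_center_iff.mp hzcen g).symm
    have hzG' : z ∈ commutator G := (Subgroup.zpowers_le.mpr w.2) hzmem
    set M := Subgroup.zpowers z with hMdef
    haveI hMnorm : M.Normal := by
      constructor
      intro m hm g
      have hmc : m ∈ Subgroup.center G := (Subgroup.zpowers_le.mpr hzcen) hm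
      have h1 : g * m * g⁻¹ = m := by
        rw [Subgroup.mem_center_iff.mp hmc g]; group
      rw [h1]; exact hm
    have hMleC : M ≤ commutator G := Subgroup.zpowers_le.mpr hzG'
    have hMcard : Nat.card M = 2 := by
      rw [hMdef, Nat.card_zpowers]
      exact orderOf_eq_prime (by rw [pow_two]; exact hz2) hz1
    have hQcard : Nat.card (G ⧸ M) ≤ n := by
      have h1 := Subgroup.card_mul_index M
      rw [hMcard, Subgroup.index_eq_card] at h1
      have h2 := Nat.card_pos (α := G ⧸ M)
      omega
    set f := QuotientGroup.mk' M with hfdef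
    have hfs : Function.Surjective f := QuotientGroup.mk'_surjective M
    have hker : f.ker = M := QuotientGroup.ker_mk' M
    have hGQ : IsPGroup 2 (G ⧸ M) := hG.to_quotient M
    have hcq : _root_.commutator (G ⧸ M) = Subgroup.map f (_root_.commutator G) := by
      rw [_root_.commutator_def, _root_.commutator_def, Subgroup.map_commutator,
        Subgroup.map_top_of_surjective f hfs]
    haveI hmapn : (Subgroup.map f (_root_.commutator G)).Normal := by
      rw [hfdef]; infer_instance
    have hrankQ : Group.rank ((G ⧸ M) ⧸ _root_.commutator (G ⧸ M)) = 3 := by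
      rw [Group.rank_congr (QuotientGroup.quotientMulEquivOfEq hcq)]
      rw [Group.rank_congr (QuotientGroup.quotientQuotientEquivQuotient M
        (_root_.commutator G) hMleC)]
      exact hrank
    have hcomap : ∀ H : Subgroup G, M ≤ H → Subgroup.comap f (Subgroup.map f H) = H := by
      intro H hMH
      rw [Subgroup.comap_map_eq, hker, sup_of_le_left hMH]
    obtain ⟨-, -, hleC1⟩ := coatom_facts hG hm1
    obtain ⟨-, -, hleC2⟩ := coatom_facts hG hm2
    obtain ⟨-, -, hleC3⟩ := coatom_facts hG hm3
    have hMle1 : M ≤ H₁ := hMleC.trans hleC1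
    have hMle2 : M ≤ H₂ := hMleC.trans hleC2
    have hMle3 : M ≤ H₃ := hMleC.trans hleC3
    have hne12 : Subgroup.map f H₁ ≠ Subgroup.map f H₂ := by
      intro h; apply h12
      rw [← hcomap H₁ hMle1, ← hcomap H₂ hMle2, h]
    have hne13 : Subgroup.map f H₁ ≠ Subgroup.map f H₃ := by
      intro h; apply h13
      rw [← hcomap H₁ hMle1, ← hcomap H₃ hMle3, h]
    have hne23 : Subgroup.map f H₂ ≠ Subgroup.map f H₃ := by
      intro h; apply h23
      rw [← hcomap H₂ hMle2, ← hcomap H₃ hMle3, h]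
    have hcm1 : IsCoatom (Subgroup.map f H₁) :=
      isCoatom_map hfs (by rw [hker]; exact hMle1) hm1
    have hcm2 : IsCoatom (Subgroup.map f H₂) :=
      isCoatom_map hfs (by rw [hker]; exact hMle2) hm2
    have hcm3 : IsCoatom (Subgroup.map f H₃) :=
      isCoatom_map hfs (by rw [hker]; exact hMle3) hm3
    have hintQ : Subgroup.map f H₁ ⊓ Subgroup.map f H₂ ≤ Subgroup.map f H₃ := by
      intro x hx
      obtain ⟨hx1, hx2⟩ := Subgroup.mem_inf.mp hx
      obtain ⟨y, rfl⟩ := hfs x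
      have hy1 : y ∈ H₁ := by
        rw [← hcomap H₁ hMle1]; exact Subgroup.mem_comap.mpr hx1
      have hy2 : y ∈ H₂ := by
        rw [← hcomap H₂ hMle2]; exact Subgroup.mem_comap.mpr hx2
      exact Subgroup.mem_map_of_mem f (hint ⟨hy1, hy2⟩)
    have hc1' : ⁅Subgroup.map f H₁, Subgroup.map f H₁⁆ = _root_.commutator (G ⧸ M) := by
      rw [← Subgroup.map_commutator, hc1, ← hcq]
    have hc2' : ⁅Subgroup.map f H₂, Subgroup.map f H₂⁆ = _root_.commutator (G ⧸ M) := by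
      rw [← Subgroup.map_commutator, hc2, ← hcq]
    have hc3' : ⁅Subgroup.map f H₃, Subgroup.map f H₃⁆ = _root_.commutator (G ⧸ M) := by
      rw [← Subgroup.map_commutator, hc3, ← hcq]
    have hres := ih (G ⧸ M) hQcard hGQ hrankQ _ _ _ hne12 hne13 hne23 hcm1 hcm2 hcm3
      hintQ hc1' hc2' hc3'
    rw [hcq] at hres
    have hle : commutator G ≤ M := by
      rw [← hker]; exact (Subgroup.map_eq_bot_iff _).mp hres
    exact reduced_case hG hrank H₁ H₂ H₃ h12 h13 h23 hm1 hm2 hm3 hint hc1 hc2 hc3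
      hz1 hz2 hzc (le_antisymm hle hMleC)

/-- **Proposition 10.** Let `G` be a finite 2-group such that `G/G'` has rank 3. Suppose
`H₁, H₂, H₃` are three pairwise distinct maximal subgroups of `G` with `H₁ ∩ H₂ ⊆ H₃` and
such that `H₁' = H₂' = H₃' = G'`. Then `G' = 1`, i.e. `G` is abelian. -/
theorem stmt_0 (G : Type*) [Group G] [Finite G] (hG : IsPGroup 2 G)
    (hrank : Group.rank (G ⧸ commutator G) = 3)
    (H₁ H₂ H₃ : Subgroup G)
    (h12 : H₁ ≠ H₂) (h13 : H₁ ≠ H₃) (h23 : H₂ ≠ H₃)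
    (hm1 : IsCoatom H₁) (hm2 : IsCoatom H₂) (hm3 : IsCoatom H₃)
    (hint : H₁ ⊓ H₂ ≤ H₃)
    (hc1 : ⁅H₁, H₁⁆ = commutator G) (hc2 : ⁅H₂, H₂⁆ = commutator G)
    (hc3 : ⁅H₃, H₃⁆ = commutator G) :
    commutator G = ⊥ := by
  exact prop10_aux (Nat.card G) G le_rfl hG hrank H₁ H₂ H₃ h12 h13 h23 hm1 hm2 hm3
    hint hc1 hc2 hc3
end

section
/- Let G be a finite 2-group generated by elements a₁, a₂, a₃ satisfying a₁² ≡ [a₁,a₂], a₂² ≡ [a₂,a₃], and a₃² ≡ [a₁,a₃] modulo G₃ (these congruences hold whenever G/G₃ is isomorphic to the group 64.150). Then the commutator subgroup satisfies G' = ⟨a₁², a₂², a₃²⟩ = ⟨[a₁,a₂], [a₂,a₃], [a₁,a₃]⟩. -/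
open Subgroup Pointwise
open scoped commutatorElement

namespace Prop11

variable {G : Type*} [Group G]





/-- The subgroup generated by the squares of elements of `H`. -/
def sq (H : Subgroup G) : Subgroup G :=
  Subgroup.closure {x : G | ∃ y ∈ H, y ^ 2 = x}

lemma mem_sq {H : Subgroup G} {y : G} (hy : y ∈ H) : y ^ 2 ∈ sq H :=
  Subgroup.subset_closure ⟨y, hy, rfl⟩

lemma sq_le {H : Subgroup G} : sq H ≤ H := by
  refine Subgroup.closure_le _ |>.mpr ?_
  rintro x ⟨y, hy, rfl⟩
  exact pow_mem hy 2

lemma sq_mono {H K : Subgroup G} (h : H ≤ K) : sq H ≤ sq K := by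
  refine Subgroup.closure_le _ |>.mpr ?_
  rintro x ⟨y, hy, rfl⟩
  exact mem_sq (h hy)

lemma map_sq {H : Type*} [Group H] (f : G →* H) (K : Subgroup G) :
    Subgroup.map f (sq K) = sq (Subgroup.map f K) := by
  rw [sq, sq, MonoidHom.map_closure]
  congr 1
  ext x
  constructor
  · rintro ⟨a, ⟨y, hy, rfl⟩, rfl⟩
    exact ⟨f y, ⟨y, hy, rfl⟩, by rw [map_pow]⟩
  · rintro ⟨a, ⟨y, hy, rfl⟩, rfl⟩
    exact ⟨y ^ 2, ⟨y, hy, rfl⟩, by rw [map_pow]⟩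

/-- basic commutator expansion -/
lemma comm_mul_left (u v g : G) : ⁅u * v, g⁆ = u * ⁅v, g⁆ * u⁻¹ * ⁅u, g⁆ := by
  simp only [commutatorElement_def]; group

lemma comm_mul_right (x g h : G) : ⁅x, g * h⁆ = ⁅x, g⁆ * (g * ⁅x, h⁆ * g⁻¹) := by
  simp only [commutatorElement_def]; group

/-- the key square identity -/
lemma comm_sq' (x g : G) : ⁅x * x, g⁆ = ⁅⁅x, g⁆, x⁆⁻¹ * (⁅x, g⁆ * ⁅x, g⁆) := by
  simp only [commutatorElement_def]; group; rw [zpow_two]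

lemma comm_sq (x g : G) : ⁅x ^ 2, g⁆ = ⁅⁅x, g⁆, x⁆⁻¹ * ⁅x, g⁆ ^ 2 := by
  rw [pow_two, pow_two]; exact comm_sq' x g

lemma comm_add_left {u v g : G} (h1 : Commute u ⁅v, g⁆) (h2 : Commute ⁅u, g⁆ ⁅v, g⁆) :
    ⁅u * v, g⁆ = ⁅u, g⁆ * ⁅v, g⁆ := by
  rw [comm_mul_left]
  have e : u * ⁅v, g⁆ * u⁻¹ = ⁅v, g⁆ := by rw [h1.eq]; group
  rw [e]
  exact h2.eq.symm

lemma comm_add_right {x g h : G} (h1 : Commute g ⁅x, h⁆) :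
    ⁅x, g * h⁆ = ⁅x, g⁆ * ⁅x, h⁆ := by
  rw [comm_mul_right]
  have e : g * ⁅x, h⁆ * g⁻¹ = ⁅x, h⁆ := by rw [h1.eq]; group
  rw [e]

lemma comm_inv_left {u g : G} (h1 : Commute u⁻¹ ⁅u, g⁆) (h2 : Commute ⁅u⁻¹, g⁆ ⁅u, g⁆) :
    ⁅u⁻¹, g⁆ = ⁅u, g⁆⁻¹ := by
  have e : ⁅u⁻¹ * u, g⁆ = ⁅u⁻¹, g⁆ * ⁅u, g⁆ := comm_add_left h1 h2
  rw [inv_mul_cancel, commutatorElement_one_left] at e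
  exact eq_inv_of_mul_eq_one_left e.symm

lemma comm_inv_right {x g : G} (h1 : Commute g⁻¹ ⁅x, g⁆) :
    ⁅x, g⁻¹⁆ = ⁅x, g⁆⁻¹ := by
  have e : ⁅x, g⁻¹ * g⁆ = ⁅x, g⁻¹⁆ * ⁅x, g⁆ := comm_add_right h1
  rw [inv_mul_cancel, commutatorElement_one_right] at e
  exact eq_inv_of_mul_eq_one_left e.symm

lemma comm_erase_left {ν t g : G} (h1 : Commute ν ⁅t, g⁆) (h2 : Commute ν g) :
    ⁅ν * t, g⁆ = ⁅t, g⁆ := by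
  rw [comm_mul_left, h2.commutator_eq, mul_one, h1.eq]; group

lemma comm_erase_right {t ν g : G} (h2 : Commute ν g) :
    ⁅t * ν, g⁆ = ⁅t, g⁆ := by
  rw [comm_mul_left, h2.commutator_eq, mul_one]; group

lemma commute_of_commutator_bot {A B : Subgroup G} (h : ⁅A, B⁆ = ⊥) :
    ∀ a ∈ A, ∀ b ∈ B, Commute a b := by
  intro a ha b hb
  have : ⁅a, b⁆ ∈ (⊥ : Subgroup G) := h ▸ Subgroup.commutator_mem_commutator ha hb
  rw [Subgroup.mem_bot] at this
  exact commutatorElement_eq_one_iff_commute.mp this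

lemma mem_sup_central {X M : Subgroup G} (hM : ∀ z ∈ M, ∀ y : G, Commute z y) {x : G}
    (hx : x ∈ X ⊔ M) : ∃ t ∈ X, ∃ v ∈ M, t * v = x := by
  haveI : M.Normal := ⟨fun m hm g => by
    have h := (hM m hm g).eq
    have e : g * m * g⁻¹ = m := by rw [← h]; group
    rw [e]; exact hm⟩
  have hx2 : x ∈ ((X : Set G) * (M : Set G)) := by
    rw [← Subgroup.mul_normal]; exact hx
  rwa [Set.mem_mul] at hx2

/-- three subgroups lemma, `≤ N` version -/
lemma three_le {H₁ H₂ H₃ N : Subgroup G} [N.Normal]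
    (h1 : ⁅⁅H₂, H₃⁆, H₁⁆ ≤ N) (h2 : ⁅⁅H₃, H₁⁆, H₂⁆ ≤ N) : ⁅⁅H₁, H₂⁆, H₃⁆ ≤ N := by
  let π := QuotientGroup.mk' N
  have key : ∀ {K : Subgroup G}, K ≤ N → Subgroup.map π K = ⊥ := by
    intro K hK
    rw [Subgroup.map_eq_bot_iff _, QuotientGroup.ker_mk']
    exact hK
  have key2 : ∀ {K : Subgroup G}, Subgroup.map π K = ⊥ → K ≤ N := by
    intro K hK
    have := (Subgroup.map_eq_bot_iff _).mp hK
    rwa [QuotientGroup.ker_mk'] at this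
  apply key2
  rw [Subgroup.map_commutator, Subgroup.map_commutator]
  apply Subgroup.commutator_commutator_eq_bot_of_rotate
  · rw [← Subgroup.map_commutator, ← Subgroup.map_commutator]
    exact key h1
  · rw [← Subgroup.map_commutator, ← Subgroup.map_commutator]
    exact key h2

lemma lcs_comm_le : ∀ (j i : ℕ),
    ⁅(⊤ : Subgroup G).lowerCentralSeries i, (⊤ : Subgroup G).lowerCentralSeries j⁆ ≤ (⊤ : Subgroup G).lowerCentralSeries (i + j + 1) := by
  intro j
  induction j with
  | zero =>
      intro i
      have e : (⊤ : Subgroup G).lowerCentralSeries (i + 1) = ⁅(⊤ : Subgroup G).lowerCentralSeries i, ⊤⁆ := rfl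
      rw [Subgroup.lowerCentralSeries_zero]
      exact le_of_eq e.symm
  | succ j ih =>
      intro i
      have e : (⊤ : Subgroup G).lowerCentralSeries (j + 1) = ⁅(⊤ : Subgroup G).lowerCentralSeries j, ⊤⁆ := rfl
      rw [Subgroup.commutator_comm, e]
      have h1 : ⁅⁅(⊤ : Subgroup G), (⊤ : Subgroup G).lowerCentralSeries i⁆, (⊤ : Subgroup G).lowerCentralSeries j⁆ ≤
          (⊤ : Subgroup G).lowerCentralSeries (i + (j + 1) + 1) := by
        rw [Subgroup.commutator_comm (⊤ : Subgroup G) ((⊤ : Subgroup G).lowerCentralSeries i)]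
        have e2 : ⁅(⊤ : Subgroup G).lowerCentralSeries i, (⊤ : Subgroup G)⁆ = (⊤ : Subgroup G).lowerCentralSeries (i + 1) := rfl
        rw [e2]
        have := ih (i + 1)
        rwa [show i + 1 + j + 1 = i + (j + 1) + 1 from by omega] at this
      have h2 : ⁅⁅(⊤ : Subgroup G).lowerCentralSeries i, (⊤ : Subgroup G).lowerCentralSeries j⁆, (⊤ : Subgroup G)⁆ ≤
          (⊤ : Subgroup G).lowerCentralSeries (i + (j + 1) + 1) := by
        refine le_trans (Subgroup.commutator_mono (ih i) le_rfl) ?_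
        have e2 : ⁅(⊤ : Subgroup G).lowerCentralSeries (i + j + 1), (⊤ : Subgroup G)⁆ =
            (⊤ : Subgroup G).lowerCentralSeries (i + j + 2) := rfl
        rw [e2, show i + (j+1) + 1 = i + j + 2 from by omega]
      exact three_le h1 h2

lemma lcs_map_eq {H : Type*} [Group H] (f : G →* H) (hf : Function.Surjective f) :
    ∀ k, Subgroup.map f ((⊤ : Subgroup G).lowerCentralSeries k) = (⊤ : Subgroup H).lowerCentralSeries k := by
  intro k
  induction k with
  | zero => simpa using Subgroup.map_top_of_surjective f hf
  | succ k ih =>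
      have e : (⊤ : Subgroup G).lowerCentralSeries (k + 1) = ⁅(⊤ : Subgroup G).lowerCentralSeries k, ⊤⁆ := rfl
      have e2 : (⊤ : Subgroup H).lowerCentralSeries (k + 1) = ⁅(⊤ : Subgroup H).lowerCentralSeries k, ⊤⁆ := rfl
      rw [e, e2, Subgroup.map_commutator, ih, Subgroup.map_top_of_surjective f hf]

/-- Nakayama-style descent for central `N` in a finite 2-group. -/
lemma shrink [Finite G] (hG : IsPGroup 2 G) (X N : Subgroup G)
    (hNcen : ∀ z ∈ N, ∀ y : G, Commute z y)
    (hNsq : N ≤ sq (X ⊔ N)) : X ⊔ N = X := by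
  haveI : Fact (Nat.Prime 2) := ⟨Nat.prime_two⟩
  let Q : ℕ → Subgroup G := fun k => Nat.rec N (fun _ M => sq M) k
  have hQs : ∀ k, Q (k + 1) = sq (Q k) := fun k => rfl
  have hQle : ∀ k, Q k ≤ N := by
    intro k; induction k with
    | zero => exact le_rfl
    | succ k ih => exact sq_le.trans ih
  have hQcen : ∀ k, ∀ z ∈ Q k, ∀ y : G, Commute z y := fun k z hz y => hNcen z (hQle k hz) y
  have hsup : ∀ k, sq (X ⊔ Q k) ≤ X ⊔ Q (k + 1) := by
    intro k
    refine Subgroup.closure_le _ |>.mpr ?_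
    rintro x ⟨y, hy, rfl⟩
    obtain ⟨t, ht, v, hv, rfl⟩ := mem_sup_central (hQcen k) hy
    have hc : Commute t v := ((hQcen k) v hv t).symm
    rw [hc.mul_pow]
    exact Subgroup.mul_mem _ (Subgroup.mem_sup_left (pow_mem ht 2))
      (Subgroup.mem_sup_right (mem_sq hv))
  have key1 : ∀ k, Q k ≤ X ⊔ Q (k + 1) := by
    intro k; induction k with
    | zero => exact hNsq.trans (hsup 0)
    | succ k ih =>
        rw [hQs]
        exact (sq_mono ih).trans (hsup (k + 1))
  have key2 : ∀ k, N ≤ X ⊔ Q k := by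
    intro k; induction k with
    | zero => exact le_sup_right
    | succ k ih => exact ih.trans (sup_le le_sup_left (key1 k))
  obtain ⟨e, he⟩ := hG.exists_card_eq
  have hexp : ∀ x : G, x ^ (2 ^ e) = 1 := by intro x; rw [← he]; exact pow_card_eq_one'
  have key3 : ∀ j k, (∀ x ∈ Q k, x ^ (2 ^ j) = 1) → Q (k + j) = ⊥ := by
    intro j
    induction j with
    | zero =>
        intro k h
        exact (Subgroup.eq_bot_iff_forall _).mpr fun x hx => by simpa using h x hx
    | succ j ih =>
        intro k h
        have h' : ∀ x ∈ Q (k + 1), x ^ (2 ^ j) = 1 := by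
          intro x hx
          rw [hQs] at hx
          refine Subgroup.closure_induction ?_ ?_ ?_ ?_ hx
          · rintro x ⟨y, hy, rfl⟩
            rw [← pow_mul, show 2 * 2 ^ j = 2 ^ (j + 1) from (pow_succ' 2 j).symm]
            exact h y hy
          · exact one_pow _
          · intro a b ha hb hpa hpb
            rw [(hQcen (k + 1) a ha b).mul_pow, hpa, hpb, one_mul]
          · intro a ha hpa
            rw [inv_pow, hpa, inv_one]
        have := ih (k + 1) h'
        rwa [show (k + 1) + j = k + (j + 1) from by omega] at this
  have hbot : Q e = ⊥ := by
    have := key3 e 0 (fun x _ => hexp x)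
    simpa using this
  have hNX : N ≤ X := by
    have := key2 e
    rwa [hbot, sup_bot_eq] at this
  exact sup_eq_left.mpr hNX





/-- Class ≤ 2 case: with the exact relations the commutator subgroup is generated by the
three basic commutators. -/
lemma caseA (a₁ a₂ a₃ : G)
    (hgen : Subgroup.closure {a₁, a₂, a₃} = ⊤)
    (hL2 : (⊤ : Subgroup G).lowerCentralSeries 2 = ⊥) :
    commutator G = Subgroup.closure {⁅a₁, a₂⁆, ⁅a₂, a₃⁆, ⁅a₁, a₃⁆} := by
  have hbot : ⁅commutator G, (⊤ : Subgroup G)⁆ = ⊥ := hL2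
  have hcen : ∀ z ∈ commutator G, ∀ y : G, Commute z y := fun z hz y =>
    commute_of_commutator_bot hbot z hz y (Subgroup.mem_top y)
  have hmemc : ∀ x y : G, ⁅x, y⁆ ∈ commutator G := fun x y =>
    Subgroup.commutator_mem_commutator (Subgroup.mem_top x) (Subgroup.mem_top y)
  have commW : ∀ x y w : G, Commute w ⁅x, y⁆ := fun x y w => (hcen _ (hmemc x y) w).symm
  set K := Subgroup.closure {⁅a₁, a₂⁆, ⁅a₂, a₃⁆, ⁅a₁, a₃⁆} with hK
  apply le_antisymm
  · rw [commutator_def, Subgroup.commutator_le]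
    intro g _ h _
    have hg : g ∈ Subgroup.closure {a₁, a₂, a₃} := by rw [hgen]; exact Subgroup.mem_top g
    have hh : h ∈ Subgroup.closure {a₁, a₂, a₃} := by rw [hgen]; exact Subgroup.mem_top h
    have base : ∀ x ∈ ({a₁, a₂, a₃} : Set G), ∀ y ∈ ({a₁, a₂, a₃} : Set G), ⁅x, y⁆ ∈ K := by
      intro x hx y hy
      simp only [Set.mem_insert_iff, Set.mem_singleton_iff] at hx hy
      have m1 : ⁅a₁, a₂⁆ ∈ K := Subgroup.subset_closure (by simp)
      have m2 : ⁅a₂, a₃⁆ ∈ K := Subgroup.subset_closure (by simp)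
      have m3 : ⁅a₁, a₃⁆ ∈ K := Subgroup.subset_closure (by simp)
      rcases hx with rfl | rfl | rfl <;> rcases hy with rfl | rfl | rfl
      · rw [commutatorElement_self]; exact one_mem _
      · exact m1
      · exact m3
      · rw [← commutatorElement_inv]; exact inv_mem m1
      · rw [commutatorElement_self]; exact one_mem _
      · exact m2
      · rw [← commutatorElement_inv]; exact inv_mem m3
      · rw [← commutatorElement_inv]; exact inv_mem m2
      · rw [commutatorElement_self]; exact one_mem _
    have inner : ∀ x ∈ ({a₁, a₂, a₃} : Set G), ⁅x, h⁆ ∈ K := by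
      intro x hxS
      refine Subgroup.closure_induction (p := fun y _ => ⁅x, y⁆ ∈ K)
        (fun y hy => base x hxS y hy) ?_ ?_ ?_ hh
      · simp only [commutatorElement_one_left, commutatorElement_one_right]; exact one_mem _
      · intro g1 g2 _ _ p1 p2
        rw [comm_add_right (commW x g2 g1)]
        exact mul_mem p1 p2
      · intro g1 _ p1
        rw [comm_inv_right (commW x g1 g1⁻¹)]
        exact inv_mem p1
    refine Subgroup.closure_induction (p := fun g _ => ⁅g, h⁆ ∈ K)
      (fun x hx => inner x hx) ?_ ?_ ?_ hg
    · simp only [commutatorElement_one_left, commutatorElement_one_right]; exact one_mem _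
    · intro u v _ _ pu pv
      rw [comm_add_left (commW v h u) (commW v h ⁅u, h⁆)]
      exact mul_mem pu pv
    · intro u _ pu
      rw [comm_inv_left (commW u h u⁻¹) (commW u h ⁅u⁻¹, h⁆)]
      exact inv_mem pu
  · rw [hK]
    refine Subgroup.closure_le _ |>.mpr ?_
    intro x hx
    simp only [Set.mem_insert_iff, Set.mem_singleton_iff] at hx
    rcases hx with rfl | rfl | rfl
    · exact hmemc a₁ a₂
    · exact hmemc a₂ a₃
    · exact hmemc a₁ a₃

universe u

theorem key : ∀ (n : ℕ) (G : Type u) [Group G] [Finite G], IsPGroup 2 G →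
    ∀ a₁ a₂ a₃ : G, Subgroup.closure {a₁, a₂, a₃} = ⊤ →
    a₁ ^ 2 * ⁅a₁, a₂⁆⁻¹ ∈ (⊤ : Subgroup G).lowerCentralSeries 2 →
    a₂ ^ 2 * ⁅a₂, a₃⁆⁻¹ ∈ (⊤ : Subgroup G).lowerCentralSeries 2 →
    a₃ ^ 2 * ⁅a₁, a₃⁆⁻¹ ∈ (⊤ : Subgroup G).lowerCentralSeries 2 →
    Nat.card G ≤ n →
    (commutator G = Subgroup.closure {a₁ ^ 2, a₂ ^ 2, a₃ ^ 2} ∧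
     commutator G = Subgroup.closure {⁅a₁, a₂⁆, ⁅a₂, a₃⁆, ⁅a₁, a₃⁆} ∧
     ∀ k, 1 ≤ k → (⊤ : Subgroup G).lowerCentralSeries (k + 1) ≤ sq ((⊤ : Subgroup G).lowerCentralSeries k)) := by
  intro n
  induction n with
  | zero =>
      intro G _ _ _ a₁ a₂ a₃ _ _ _ _ hcard
      exact absurd hcard (by have := Nat.card_pos (α := G); omega)
  | succ n ih =>
      intro G instG instF hG a₁ a₂ a₃ hgen h1 h2 h3 hcard
      classical
      haveI : Fact (Nat.Prime 2) := ⟨Nat.prime_two⟩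
      by_cases hL2 : (⊤ : Subgroup G).lowerCentralSeries 2 = ⊥
      · -- base case: class at most 2, relations are exact
        rw [hL2, Subgroup.mem_bot] at h1 h2 h3
        have e1 : a₁ ^ 2 = ⁅a₁, a₂⁆ := mul_inv_eq_one.mp h1
        have e2 : a₂ ^ 2 = ⁅a₂, a₃⁆ := mul_inv_eq_one.mp h2
        have e3 : a₃ ^ 2 = ⁅a₁, a₃⁆ := mul_inv_eq_one.mp h3
        have hKeq := caseA a₁ a₂ a₃ hgen hL2
        refine ⟨?_, hKeq, ?_⟩
        · rw [hKeq, e1, e2, e3]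
        · intro k hk
          refine le_trans (Subgroup.lowerCentralSeries_antitone ⊤ (show 2 ≤ k + 1 by omega)) ?_
          rw [hL2]; exact bot_le
      · -- inductive case
        have hnil : Group.IsNilpotent G := hG.isNilpotent
        have hex : ∃ m, (⊤ : Subgroup G).lowerCentralSeries m = ⊥ :=
          Subgroup.nilpotent_iff_lowerCentralSeries.mp hnil
        have hm : (⊤ : Subgroup G).lowerCentralSeries (Nat.find hex) = ⊥ := Nat.find_spec hex
        have hmin : ∀ k < Nat.find hex, (⊤ : Subgroup G).lowerCentralSeries k ≠ ⊥ := fun k hk =>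
          Nat.find_min hex hk
        have hm3 : 3 ≤ Nat.find hex := by
          by_contra hcon
          push_neg at hcon
          have hle : (⊤ : Subgroup G).lowerCentralSeries 2 ≤ (⊤ : Subgroup G).lowerCentralSeries (Nat.find hex) :=
            Subgroup.lowerCentralSeries_antitone ⊤ (by omega)
          rw [hm] at hle
          exact hL2 (le_bot_iff.mp hle)
        obtain ⟨q, hq⟩ : ∃ q, Nat.find hex = q + 3 := ⟨Nat.find hex - 3, by omega⟩
        set N := (⊤ : Subgroup G).lowerCentralSeries (q + 2) with hN
        have hNbot : N ≠ ⊥ := hmin (q + 2) (by omega)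
        have hmq : (⊤ : Subgroup G).lowerCentralSeries (q + 3) = ⊥ := by rw [← hq]; exact hm
        have hNtop : ⁅N, (⊤ : Subgroup G)⁆ = ⊥ := hmq
        have hNcen : ∀ z ∈ N, ∀ y : G, Commute z y := fun z hz y =>
          commute_of_commutator_bot hNtop z hz y (Subgroup.mem_top y)
        -- the quotient
        set π := QuotientGroup.mk' N with hπ
        have hsurj : Function.Surjective π := QuotientGroup.mk'_surjective N
        haveI : Finite (G ⧸ N) := Finite.of_surjective π hsurj
        have hGQ : IsPGroup 2 (G ⧸ N) := hG.to_quotient N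
        have hcardQ : Nat.card (G ⧸ N) ≤ n := by
          have hprod : Nat.card G = Nat.card (G ⧸ N) * Nat.card N :=
            Subgroup.card_eq_card_quotient_mul_card_subgroup N
          have h1N : 1 < Nat.card N := (Subgroup.one_lt_card_iff_ne_bot N).mpr hNbot
          have hposQ : 0 < Nat.card (G ⧸ N) := Nat.card_pos
          have hlt : Nat.card (G ⧸ N) < Nat.card G := by
            rw [hprod]
            exact (Nat.lt_mul_iff_one_lt_right hposQ).mpr h1N
          omega
        have hgenQ : Subgroup.closure {π a₁, π a₂, π a₃} = ⊤ := by
          have hmap := congrArg (Subgroup.map π) hgen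
          rwa [MonoidHom.map_closure, Subgroup.map_top_of_surjective π hsurj,
            Set.image_insert_eq, Set.image_insert_eq, Set.image_singleton] at hmap
        have hmem2 : ∀ x ∈ (⊤ : Subgroup G).lowerCentralSeries 2, π x ∈ (⊤ : Subgroup (G ⧸ N)).lowerCentralSeries 2 := by
          intro x hx
          rw [← lcs_map_eq π hsurj 2]
          exact Subgroup.mem_map_of_mem π hx
        have h1Q : (π a₁) ^ 2 * ⁅π a₁, π a₂⁆⁻¹ ∈ (⊤ : Subgroup (G ⧸ N)).lowerCentralSeries 2 := by
          have := hmem2 _ h1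
          simpa only [map_mul, map_pow, map_inv, map_commutatorElement] using this
        have h2Q : (π a₂) ^ 2 * ⁅π a₂, π a₃⁆⁻¹ ∈ (⊤ : Subgroup (G ⧸ N)).lowerCentralSeries 2 := by
          have := hmem2 _ h2
          simpa only [map_mul, map_pow, map_inv, map_commutatorElement] using this
        have h3Q : (π a₃) ^ 2 * ⁅π a₁, π a₃⁆⁻¹ ∈ (⊤ : Subgroup (G ⧸ N)).lowerCentralSeries 2 := by
          have := hmem2 _ h3
          simpa only [map_mul, map_pow, map_inv, map_commutatorElement] using this
        obtain ⟨HQ1, HQ2, HQ3⟩ := ih (G ⧸ N) hGQ (π a₁) (π a₂) (π a₃) hgenQ h1Q h2Q h3Q hcardQ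
        -- pull information back
        have hcomm_map : Subgroup.map π (commutator G) = commutator (G ⧸ N) := by
          have := lcs_map_eq π hsurj 1
          rwa [Subgroup.lowerCentralSeries_one, Subgroup.lowerCentralSeries_one] at this
        have hNleG' : N ≤ commutator G := by
          have h := Subgroup.lowerCentralSeries_antitone ⊤ (G := G) (show 1 ≤ q + 2 by omega)
          rwa [Subgroup.lowerCentralSeries_one] at h
        set T := Subgroup.closure {a₁ ^ 2, a₂ ^ 2, a₃ ^ 2} with hT
        set K := Subgroup.closure {⁅a₁, a₂⁆, ⁅a₂, a₃⁆, ⁅a₁, a₃⁆} with hKdef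
        have hmapT : Subgroup.map π T =
            Subgroup.closure {(π a₁) ^ 2, (π a₂) ^ 2, (π a₃) ^ 2} := by
          rw [hT, MonoidHom.map_closure, Set.image_insert_eq, Set.image_insert_eq,
            Set.image_singleton, map_pow, map_pow, map_pow]
        have hmapK : Subgroup.map π K =
            Subgroup.closure {⁅π a₁, π a₂⁆, ⁅π a₂, π a₃⁆, ⁅π a₁, π a₃⁆} := by
          rw [hKdef, MonoidHom.map_closure, Set.image_insert_eq, Set.image_insert_eq,
            Set.image_singleton, map_commutatorElement, map_commutatorElement,
            map_commutatorElement]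
        have hGT : commutator G = T ⊔ N := by
          have e : Subgroup.map π (commutator G) = Subgroup.map π T := by
            rw [hcomm_map, hmapT, ← HQ1]
          have e2 := congrArg (Subgroup.comap π) e
          rwa [Subgroup.comap_map_eq, Subgroup.comap_map_eq, QuotientGroup.ker_mk',
            sup_eq_left.mpr hNleG'] at e2
        have hGK : commutator G = K ⊔ N := by
          have e : Subgroup.map π (commutator G) = Subgroup.map π K := by
            rw [hcomm_map, hmapK, ← HQ2]
          have e2 := congrArg (Subgroup.comap π) e
          rwa [Subgroup.comap_map_eq, Subgroup.comap_map_eq, QuotientGroup.ker_mk',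
            sup_eq_left.mpr hNleG'] at e2
        have hpull : ∀ k, 1 ≤ k →
            (⊤ : Subgroup G).lowerCentralSeries (k + 1) ≤ sq ((⊤ : Subgroup G).lowerCentralSeries k) ⊔ N := by
          intro k hk
          have t1 : Subgroup.map π ((⊤ : Subgroup G).lowerCentralSeries (k + 1)) ≤
              Subgroup.map π (sq ((⊤ : Subgroup G).lowerCentralSeries k)) := by
            rw [lcs_map_eq π hsurj, map_sq, lcs_map_eq π hsurj]
            exact HQ3 k hk
          refine le_trans (Subgroup.map_le_iff_le_comap.mp t1) ?_
          rw [Subgroup.comap_map_eq, QuotientGroup.ker_mk']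
        -- THE KEY STEP
        have KEY : N ≤ sq ((⊤ : Subgroup G).lowerCentralSeries (q + 1)) := by
          have hNc : N = ⁅(⊤ : Subgroup G).lowerCentralSeries (q + 1), (⊤ : Subgroup G)⁆ := rfl
          rw [hNc]
          rw [Subgroup.commutator_le]
          rcases Nat.eq_zero_or_pos q with rfl | hqpos
          · -- q = 0 : the computation with the relations, L2 is central
            have hL1 : ∀ x y : G, ⁅x, y⁆ ∈ (⊤ : Subgroup G).lowerCentralSeries 1 := fun x y =>
              Subgroup.commutator_mem_commutator (Subgroup.mem_top x) (Subgroup.mem_top y)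
            have hD : ∀ x ∈ (⊤ : Subgroup G).lowerCentralSeries 1, ∀ g : G, ⁅x, g⁆ ∈ N := fun x hx g =>
              Subgroup.commutator_mem_commutator hx (Subgroup.mem_top g)
            have hDc : ∀ x ∈ (⊤ : Subgroup G).lowerCentralSeries 1, ∀ g w : G, Commute w ⁅x, g⁆ :=
              fun x hx g w => (hNcen _ (hD x hx g) w).symm
            have hcomm1 : ∀ g : G, ⁅a₁ ^ 2, g⁆ = ⁅⁅a₁, a₂⁆, g⁆ := by
              intro g
              conv_lhs => rw [← inv_mul_cancel_right (a₁ ^ 2) ⁅a₁, a₂⁆]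
              exact comm_erase_left ((hNcen _ h1 _)) ((hNcen _ h1 g))
            have hcomm2 : ∀ g : G, ⁅a₂ ^ 2, g⁆ = ⁅⁅a₂, a₃⁆, g⁆ := by
              intro g
              conv_lhs => rw [← inv_mul_cancel_right (a₂ ^ 2) ⁅a₂, a₃⁆]
              exact comm_erase_left ((hNcen _ h2 _)) ((hNcen _ h2 g))
            have hcomm3 : ∀ g : G, ⁅a₃ ^ 2, g⁆ = ⁅⁅a₁, a₃⁆, g⁆ := by
              intro g
              conv_lhs => rw [← inv_mul_cancel_right (a₃ ^ 2) ⁅a₁, a₃⁆]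
              exact comm_erase_left ((hNcen _ h3 _)) ((hNcen _ h3 g))
            have F1 : ⁅⁅a₁, a₂⁆, a₁⁆ = 1 := by
              rw [← hcomm1 a₁]
              exact ((Commute.refl a₁).pow_left 2).commutator_eq
            have F2 : ⁅⁅a₂, a₃⁆, a₂⁆ = 1 := by
              rw [← hcomm2 a₂]
              exact ((Commute.refl a₂).pow_left 2).commutator_eq
            have F3 : ⁅⁅a₁, a₃⁆, a₃⁆ = 1 := by
              rw [← hcomm3 a₃]
              exact ((Commute.refl a₃).pow_left 2).commutator_eq
            have V12 : ⁅⁅a₁, a₂⁆, a₂⁆ = ⁅a₁, a₂⁆ ^ 2 := by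
              have hs := comm_sq a₁ a₂
              rwa [hcomm1 a₂, F1, inv_one, one_mul] at hs
            have V23 : ⁅⁅a₂, a₃⁆, a₃⁆ = ⁅a₂, a₃⁆ ^ 2 := by
              have hs := comm_sq a₂ a₃
              rwa [hcomm2 a₃, F2, inv_one, one_mul] at hs
            have V31 : ⁅⁅a₁, a₃⁆, a₁⁆ = (⁅a₁, a₃⁆⁻¹) ^ 2 := by
              have hs := comm_sq a₃ a₁
              rw [hcomm3 a₁] at hs
              have hinv : ⁅a₃, a₁⁆ = ⁅a₁, a₃⁆⁻¹ := (commutatorElement_inv a₁ a₃).symm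
              rw [hinv] at hs
              have hc : Commute ⁅a₁, a₃⁆ a₃ := commutatorElement_eq_one_iff_commute.mp F3
              rwa [hc.inv_left.commutator_eq, inv_one, one_mul] at hs
            have hD9 : ∀ x ∈ ({a₁, a₂, a₃} : Set G), ∀ y ∈ ({a₁, a₂, a₃} : Set G),
                ⁅x ^ 2, y⁆ ∈ sq ((⊤ : Subgroup G).lowerCentralSeries 1) := by
              intro x hx y hy
              rw [comm_sq]
              refine mul_mem (inv_mem ?_) (mem_sq (hL1 x y))
              simp only [Set.mem_insert_iff, Set.mem_singleton_iff] at hx hy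
              rcases hx with hx | hx | hx <;> rcases hy with hy | hy | hy <;> rw [hx, hy]
              · rw [commutatorElement_self, commutatorElement_one_left]; exact one_mem _
              · rw [F1]; exact one_mem _
              · rw [V31]; exact mem_sq (inv_mem (hL1 a₁ a₃))
              · rw [(commutatorElement_inv a₁ a₂).symm,
                  comm_inv_left (hDc _ (hL1 a₁ a₂) a₂ _) (hDc _ (hL1 a₁ a₂) a₂ _), V12]
                exact inv_mem (mem_sq (hL1 a₁ a₂))
              · rw [commutatorElement_self, commutatorElement_one_left]; exact one_mem _
              · rw [F2]; exact one_mem _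
              · have hc : Commute ⁅a₁, a₃⁆ a₃ := commutatorElement_eq_one_iff_commute.mp F3
                rw [(commutatorElement_inv a₁ a₃).symm, hc.inv_left.commutator_eq]
                exact one_mem _
              · rw [(commutatorElement_inv a₂ a₃).symm,
                  comm_inv_left (hDc _ (hL1 a₂ a₃) a₃ _) (hDc _ (hL1 a₂ a₃) a₃ _), V23]
                exact inv_mem (mem_sq (hL1 a₂ a₃))
              · rw [commutatorElement_self, commutatorElement_one_left]; exact one_mem _
            have hTle : T ≤ (⊤ : Subgroup G).lowerCentralSeries 1 := by
              rw [hT]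
              refine Subgroup.closure_le _ |>.mpr ?_
              intro x hx
              simp only [Set.mem_insert_iff, Set.mem_singleton_iff] at hx
              rcases hx with hx | hx | hx <;> rw [hx]
              · rw [← inv_mul_cancel_right (a₁ ^ 2) ⁅a₁, a₂⁆]
                exact mul_mem (hNleG' h1) (hL1 a₁ a₂)
              · rw [← inv_mul_cancel_right (a₂ ^ 2) ⁅a₂, a₃⁆]
                exact mul_mem (hNleG' h2) (hL1 a₂ a₃)
              · rw [← inv_mul_cancel_right (a₃ ^ 2) ⁅a₁, a₃⁆]
                exact mul_mem (hNleG' h3) (hL1 a₁ a₃)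
            have hmain : ∀ t ∈ T, ∀ g : G, ⁅t, g⁆ ∈ sq ((⊤ : Subgroup G).lowerCentralSeries 1) := by
              intro t ht
              refine Subgroup.closure_induction
                (p := fun t _ => ∀ g : G, ⁅t, g⁆ ∈ sq ((⊤ : Subgroup G).lowerCentralSeries 1)) ?_ ?_ ?_ ?_ ht
              · intro x hxS g
                have hg : g ∈ Subgroup.closure {a₁, a₂, a₃} := by
                  rw [hgen]; exact Subgroup.mem_top g
                have hxT : x ∈ T := Subgroup.subset_closure hxS
                have hxL1 : x ∈ (⊤ : Subgroup G).lowerCentralSeries 1 := hTle hxT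
                refine Subgroup.closure_induction
                  (p := fun g _ => ⁅x, g⁆ ∈ sq ((⊤ : Subgroup G).lowerCentralSeries 1)) ?_ ?_ ?_ ?_ hg
                · intro y hyS
                  simp only [Set.mem_insert_iff, Set.mem_singleton_iff] at hxS
                  rcases hxS with hx1 | hx1 | hx1 <;> rw [hx1]
                  · exact hD9 a₁ (by simp) y hyS
                  · exact hD9 a₂ (by simp) y hyS
                  · exact hD9 a₃ (by simp) y hyS
                · simp only [commutatorElement_one_left, commutatorElement_one_right]; exact one_mem _
                · intro g1 g2 _ _ p1 p2
                  rw [comm_add_right (hDc x hxL1 g2 g1)]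
                  exact mul_mem p1 p2
                · intro g1 _ p1
                  rw [comm_inv_right (hDc x hxL1 g1 g1⁻¹)]
                  exact inv_mem p1
              · intro g; simp only [commutatorElement_one_left, commutatorElement_one_right]; exact one_mem _
              · intro u v hu hv pu pv g
                have hvL : v ∈ (⊤ : Subgroup G).lowerCentralSeries 1 := hTle hv
                rw [comm_add_left ((hDc v hvL g u)) ((hDc v hvL g ⁅u, g⁆))]
                exact mul_mem (pu g) (pv g)
              · intro u hu pu g
                have huL : u ∈ (⊤ : Subgroup G).lowerCentralSeries 1 := hTle hu
                rw [comm_inv_left (hDc u huL g u⁻¹) (hDc u huL g ⁅u⁻¹, g⁆)]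
                exact inv_mem (pu g)
            intro x hx g _
            have hx2 : x ∈ T ⊔ N := by rw [← hGT]; exact hx
            obtain ⟨t, ht, v, hv, rfl⟩ := mem_sup_central hNcen hx2
            rw [comm_erase_right (hNcen v hv g)]
            exact hmain t ht g
          · -- q ≥ 1 : purely structural
            obtain ⟨r, rfl⟩ : ∃ r, q = r + 1 := ⟨q - 1, by omega⟩
            have hbotdeep : ∀ k, r + 4 ≤ k → (⊤ : Subgroup G).lowerCentralSeries k = ⊥ := by
              intro k hk
              refine le_bot_iff.mp ?_
              rw [← hmq]
              exact Subgroup.lowerCentralSeries_antitone ⊤ (by omega)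
            have hcross : ∀ x ∈ (⊤ : Subgroup G).lowerCentralSeries (r + 2),
                ∀ y ∈ (⊤ : Subgroup G).lowerCentralSeries (r + 1), Commute x y := by
              apply commute_of_commutator_bot
              refine le_bot_iff.mp (le_trans (lcs_comm_le (r + 1) (r + 2)) ?_)
              rw [hbotdeep (r + 2 + (r + 1) + 1) (by omega)]
            have hself : ∀ x ∈ (⊤ : Subgroup G).lowerCentralSeries (r + 2),
                ∀ y ∈ (⊤ : Subgroup G).lowerCentralSeries (r + 2), Commute x y := by
              apply commute_of_commutator_bot
              refine le_bot_iff.mp (le_trans (lcs_comm_le (r + 2) (r + 2)) ?_)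
              rw [hbotdeep (r + 2 + (r + 2) + 1) (by omega)]
            have hmemc : ∀ y ∈ (⊤ : Subgroup G).lowerCentralSeries (r + 1), ∀ g : G,
                ⁅y, g⁆ ∈ (⊤ : Subgroup G).lowerCentralSeries (r + 2) := fun y hy g =>
              Subgroup.commutator_mem_commutator hy (Subgroup.mem_top g)
            have hmain : ∀ s ∈ sq ((⊤ : Subgroup G).lowerCentralSeries (r + 1)), ∀ g : G,
                ⁅s, g⁆ ∈ sq ((⊤ : Subgroup G).lowerCentralSeries (r + 2)) := by
              intro s hs
              refine Subgroup.closure_induction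
                (p := fun s _ => ∀ g : G, ⁅s, g⁆ ∈ sq ((⊤ : Subgroup G).lowerCentralSeries (r + 2)))
                ?_ ?_ ?_ ?_ hs
              · rintro y ⟨z, hz, rfl⟩ g'
                rw [comm_sq]
                have h1' : ⁅⁅z, g'⁆, z⁆ = 1 :=
                  (hcross _ (hmemc z hz g') z hz).commutator_eq
                rw [h1', inv_one, one_mul]
                exact mem_sq (hmemc z hz g')
              · intro g'; simp only [commutatorElement_one_left, commutatorElement_one_right]; exact one_mem _
              · intro u v hu hv pu pv g'
                have huL : u ∈ (⊤ : Subgroup G).lowerCentralSeries (r + 1) := sq_le hu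
                have hvL : v ∈ (⊤ : Subgroup G).lowerCentralSeries (r + 1) := sq_le hv
                have c1 : Commute u ⁅v, g'⁆ := (hcross _ (hmemc v hvL g') u huL).symm
                have c2 : Commute ⁅u, g'⁆ ⁅v, g'⁆ :=
                  hself _ (hmemc u huL g') _ (hmemc v hvL g')
                rw [comm_add_left c1 c2]
                exact mul_mem (pu g') (pv g')
              · intro u hu pu g'
                have huL : u ∈ (⊤ : Subgroup G).lowerCentralSeries (r + 1) := sq_le hu
                have huL' : u⁻¹ ∈ (⊤ : Subgroup G).lowerCentralSeries (r + 1) := inv_mem huL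
                have c1 : Commute u⁻¹ ⁅u, g'⁆ := (hcross _ (hmemc u huL g') u⁻¹ huL').symm
                have c2 : Commute ⁅u⁻¹, g'⁆ ⁅u, g'⁆ :=
                  hself _ (hmemc _ huL' g') _ (hmemc u huL g')
                rw [comm_inv_left c1 c2]
                exact inv_mem (pu g')
            intro x hx g _
            have hx2 : x ∈ sq ((⊤ : Subgroup G).lowerCentralSeries (r + 1)) ⊔ N := hpull (r + 1) (by omega) hx
            obtain ⟨s, hs, v, hv, rfl⟩ := mem_sup_central hNcen hx2
            rw [comm_erase_right (hNcen v hv g)]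
            exact hmain s hs g
        -- finish
        have hNsqG : N ≤ sq (commutator G) := by
          refine le_trans KEY (sq_mono ?_)
          have h := Subgroup.lowerCentralSeries_antitone ⊤ (G := G) (show 1 ≤ q + 1 by omega)
          rwa [Subgroup.lowerCentralSeries_one] at h
        have hTfin : commutator G = T := by
          rw [hGT]
          refine shrink hG T N hNcen ?_
          rw [← hGT]; exact hNsqG
        have hKfin : commutator G = K := by
          rw [hGK]
          refine shrink hG K N hNcen ?_
          rw [← hGK]; exact hNsqG
        refine ⟨hTfin, hKfin, ?_⟩
        intro k hk
        by_cases hbig : q + 3 ≤ k + 1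
        · refine le_trans (Subgroup.lowerCentralSeries_antitone ⊤ hbig) ?_
          rw [hmq]; exact bot_le
        · have hNk : N ≤ sq ((⊤ : Subgroup G).lowerCentralSeries k) :=
            le_trans KEY (sq_mono (Subgroup.lowerCentralSeries_antitone ⊤ (by omega)))
          exact le_trans (hpull k hk) (sup_le le_rfl hNk)

end Prop11

/-- **Proposition 11 (first part).** Let `G` be a finite 2-group generated by `a₁, a₂, a₃`
with `a₁² ≡ ⁅a₁,a₂⁆`, `a₂² ≡ ⁅a₂,a₃⁆`, `a₃² ≡ ⁅a₁,a₃⁆` modulo `G₃` (as when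
`G/G₃ ≃ 64.150`). Then `G' = ⟨a₁², a₂², a₃²⟩ = ⟨⁅a₁,a₂⁆, ⁅a₂,a₃⁆, ⁅a₁,a₃⁆⟩`. -/
theorem stmt_2 (G : Type*) [Group G] [Finite G] (hG : IsPGroup 2 G)
    (a₁ a₂ a₃ : G) (hgen : Subgroup.closure {a₁, a₂, a₃} = ⊤)
    (h1 : a₁ ^ 2 * ⁅a₁, a₂⁆⁻¹ ∈ (⊤ : Subgroup G).lowerCentralSeries 2)
    (h2 : a₂ ^ 2 * ⁅a₂, a₃⁆⁻¹ ∈ (⊤ : Subgroup G).lowerCentralSeries 2)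
    (h3 : a₃ ^ 2 * ⁅a₁, a₃⁆⁻¹ ∈ (⊤ : Subgroup G).lowerCentralSeries 2) :
    commutator G = Subgroup.closure {a₁ ^ 2, a₂ ^ 2, a₃ ^ 2} ∧
      commutator G = Subgroup.closure {⁅a₁, a₂⁆, ⁅a₂, a₃⁆, ⁅a₁, a₃⁆} := by
  obtain ⟨hT, hK, -⟩ := Prop11.key (Nat.card G) G hG a₁ a₂ a₃ hgen h1 h2 h3 le_rfl
  exact ⟨hT, hK⟩
end

section
/- Let G be a finite 2-group generated by elements a₁, a₂, a₃ satisfying a₁² ≡ [a₁,a₂], a₂² ≡ [a₂,a₃], and a₃² ≡ [a₁,a₃] modulo G₃. Then for every j ≥ 2, the j-th term of the lower central series satisfies G_j = ⟨a₁^{2^{j-1}}, a₂^{2^{j-1}}, a₃^{2^{j-1}}⟩ = (G₂)^{2^{j-2}}, where (G₂)^{2^{j-2}} denotes the subgroup generated by the 2^{j-2}-th powers of elements of G' = G₂. -/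
open Subgroup
open scoped commutatorElement

namespace S3

abbrev lowerCentralSeries (G : Type*) [Group G] (n : ℕ) : Subgroup G :=
  (⊤ : Subgroup G).lowerCentralSeries n

lemma lowerCentralSeries_one {G : Type*} [Group G] :
    lowerCentralSeries G 1 = commutator G := rfl

lemma lowerCentralSeries_antitone {G : Type*} [Group G] :
    Antitone (lowerCentralSeries G) :=
  Subgroup.lowerCentralSeries_antitone _

instance lowerCentralSeries_normal {G : Type*} [Group G] (n : ℕ) :
    (lowerCentralSeries G n).Normal :=
  Subgroup.lowerCentralSeries_normal _ n

lemma nilpotent_iff_lowerCentralSeries {G : Type*} [Group G] :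
    Group.IsNilpotent G ↔ ∃ n, lowerCentralSeries G n = ⊥ :=
  Subgroup.nilpotent_iff_lowerCentralSeries

variable {G : Type*} [Group G]

lemma id_mul_left (x y z : G) : ⁅x*y, z⁆ = x*⁅y,z⁆*x⁻¹*⁅x,z⁆ := by group
lemma id_mul_right (x y z : G) : ⁅x, y*z⁆ = ⁅x,y⁆*(y*⁅x,z⁆*y⁻¹) := by group
lemma id_sq_left (x z : G) : ⁅x^2, z⁆ = ⁅x,⁅x,z⁆⁆*⁅x,z⁆^2 := by
  rw [pow_two, pow_two]; group
lemma id_sq_right (x z : G) : ⁅x, z^2⁆ = ⁅x,z⁆*(z*⁅x,z⁆*z⁻¹) := by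
  rw [pow_two]; group
lemma id_inv_left (x z : G) : ⁅x⁻¹,z⁆ = x⁻¹*⁅x,z⁆⁻¹*x := by group
lemma id_sq_mul (x y : G) : (x*y)^2 = x^2*y^2*(y⁻¹*⁅y⁻¹,x⁻¹⁆*y) := by
  rw [pow_two, pow_two, pow_two]; group

lemma conj_of_central {c : G} (h : ∀ g : G, Commute c g) (x : G) : x*c*x⁻¹ = c := by
  rw [(h x).symm.eq, mul_inv_cancel_right]

lemma conj_of_central' {c : G} (h : ∀ g : G, Commute c g) (x : G) : x⁻¹*c*x = c := by
  rw [(h x⁻¹).symm.eq, inv_mul_cancel_right]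

lemma cc_mul_left {x y z : G} (h : ∀ g : G, Commute ⁅y,z⁆ g) :
    ⁅x*y,z⁆ = ⁅x,z⁆*⁅y,z⁆ := by
  rw [id_mul_left, conj_of_central h, (h ⁅x,z⁆).eq]

lemma cc_mul_right {x y z : G} (h : ∀ g : G, Commute ⁅x,z⁆ g) :
    ⁅x,y*z⁆ = ⁅x,y⁆*⁅x,z⁆ := by
  rw [id_mul_right, conj_of_central h]

lemma cc_inv_left {x z : G} (h : ∀ g : G, Commute ⁅x,z⁆ g) :
    ⁅x⁻¹,z⁆ = ⁅x,z⁆⁻¹ := by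
  rw [id_inv_left, conj_of_central' (fun g => (h g).inv_left)]

lemma cc_sq_mul {x y : G} (h : ∀ g : G, Commute ⁅y⁻¹,x⁻¹⁆ g) :
    (x*y)^2 = x^2*y^2*⁅y⁻¹,x⁻¹⁆ := by
  rw [id_sq_mul, conj_of_central' h]


variable {G : Type*} [Group G]

lemma closure_comm_of {s : Set G} (h : ∀ x ∈ s, ∀ y ∈ s, Commute x y) :
    ∀ x ∈ closure s, ∀ y ∈ closure s, Commute x y := by
  intro x hx y hy
  induction hx, hy using closure_induction₂ with
  | mem x y hx hy => exact h x hx y hy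
  | one_left x hx => exact Commute.one_left x
  | one_right x hx => exact Commute.one_right x
  | mul_left x y z hx hy hz h1 h2 => exact h1.mul_left h2
  | mul_right y z x hy hz hx h1 h2 => exact h1.mul_right h2
  | inv_left x y hx hy h1 => exact h1.inv_left
  | inv_right x y hx hy h1 => exact h1.inv_right

/-- squares of a closure of pairwise-commuting generators land in any subgroup
containing the squares of the generators. -/
lemma sq_mem_closure_comm {s : Set G} {K : Subgroup G}
    (hc : ∀ x ∈ s, ∀ y ∈ s, Commute x y) (hs : ∀ g ∈ s, g^2 ∈ K) :
    ∀ x ∈ closure s, x^2 ∈ K := by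
  intro x hx
  induction hx using closure_induction with
  | mem g hg => exact hs g hg
  | one => simpa using K.one_mem
  | mul x y hx hy h1 h2 =>
      rw [(closure_comm_of hc x hx y hy).mul_pow]
      exact K.mul_mem h1 h2
  | inv x hx h1 => rw [inv_pow]; exact K.inv_mem h1

/-- variant: generators' squares in normal K, and commutators of the closure lie in K. -/
lemma sq_mem_closure_normal {s : Set G} {K : Subgroup G} [K.Normal]
    (hcomm : ∀ x ∈ closure s, ∀ y ∈ closure s, ⁅y⁻¹,x⁻¹⁆ ∈ K)
    (hs : ∀ g ∈ s, g^2 ∈ K) :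
    ∀ x ∈ closure s, x^2 ∈ K := by
  intro x hx
  induction hx using closure_induction with
  | mem g hg => exact hs g hg
  | one => simpa using K.one_mem
  | mul x y hx hy h1 h2 =>
      rw [id_sq_mul]
      refine K.mul_mem (K.mul_mem h1 h2) ?_
      have := hcomm x hx y hy
      simpa using (‹K.Normal›).conj_mem _ this y⁻¹
  | inv x hx h1 => rw [inv_pow]; exact K.inv_mem h1

variable {G : Type*} [Group G]

lemma lcs_succ (n : ℕ) : lowerCentralSeries G (n+1) = ⁅lowerCentralSeries G n, ⊤⁆ := rfl

lemma mem_lcs_succ {x y : G} {n : ℕ} (hx : x ∈ lowerCentralSeries G n) :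
    ⁅x, y⁆ ∈ lowerCentralSeries G (n+1) := by
  rw [lcs_succ]
  exact commutator_mem_commutator hx (mem_top y)

lemma lcs_map_surj {H : Type*} [Group H] (f : G →* H) (hf : Function.Surjective f) (n : ℕ) :
    Subgroup.map f (lowerCentralSeries G n) = lowerCentralSeries H n := by
  induction n with
  | zero => simpa using map_top_of_surjective f hf
  | succ n ih => rw [lcs_succ, lcs_succ, Subgroup.map_commutator, ih,
      map_top_of_surjective f hf]

variable {G : Type*} [Group G]

lemma id_inv_right (x y : G) : ⁅x,y⁻¹⁆ = y⁻¹*⁅x,y⁆⁻¹*y := by group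

lemma cc_inv_right {x y : G} (h : ∀ g : G, Commute ⁅x,y⁆ g) :
    ⁅x,y⁻¹⁆ = ⁅x,y⁆⁻¹ := by
  rw [id_inv_right]
  have : ∀ g : G, Commute ⁅x,y⁆⁻¹ g := fun g => (h g).inv_left
  rw [(this y⁻¹).symm.eq, inv_mul_cancel_right]

lemma pow2_split {k t : ℕ} (h : k ≤ t) (a : G) :
    a^(2^t) = (a^(2^k))^(2^(t-k)) := by
  rw [← pow_mul, ← pow_add, Nat.add_sub_cancel' h]

lemma pow2_sq {k : ℕ} (hk : 1 ≤ k) (a : G) :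
    a^(2^k) = (a^(2^(k-1)))^2 := by
  have h2 : a^(2^k) = (a^(2^(k-1)))^(2^(k-(k-1))) := pow2_split (Nat.sub_le k 1) a
  have : k - (k-1) = 1 := by omega
  rw [this, pow_one] at h2
  exact h2


/-- The three target statements, for all k ≥ 1. -/
def Concl (a₁ a₂ a₃ : G) : Prop :=
  ∀ k : ℕ, 1 ≤ k →
    (lowerCentralSeries G k = Subgroup.closure {a₁^2^k, a₂^2^k, a₃^2^k} ∧
     lowerCentralSeries G k
       = Subgroup.closure ((fun x => x^2^(k-1)) '' ((commutator G : Subgroup G) : Set G)) ∧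
     a₁^2^k * ⁅a₁^2^(k-1), a₂⁆⁻¹ ∈ lowerCentralSeries G (k+1) ∧
     a₂^2^k * ⁅a₂^2^(k-1), a₃⁆⁻¹ ∈ lowerCentralSeries G (k+1) ∧
     a₃^2^k * ⁅a₁, a₃^2^(k-1)⁆⁻¹ ∈ lowerCentralSeries G (k+1))

lemma case_abelian (a₁ a₂ a₃ : G)
    (h1 : a₁ ^ 2 * ⁅a₁, a₂⁆⁻¹ ∈ lowerCentralSeries G 2)
    (h2 : a₂ ^ 2 * ⁅a₂, a₃⁆⁻¹ ∈ lowerCentralSeries G 2)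
    (h3 : a₃ ^ 2 * ⁅a₁, a₃⁆⁻¹ ∈ lowerCentralSeries G 2)
    (hab : commutator G = ⊥) : Concl a₁ a₂ a₃ := by
  have hL : ∀ k : ℕ, 1 ≤ k → lowerCentralSeries G k = ⊥ := by
    intro k hk
    refine le_bot_iff.mp ?_
    calc lowerCentralSeries G k ≤ lowerCentralSeries G 1 := lowerCentralSeries_antitone hk
    _ = ⊥ := by rw [lowerCentralSeries_one, hab]
  have hcomm : ∀ x y : G, ⁅x,y⁆ = 1 := by
    intro x y
    have : ⁅x,y⁆ ∈ commutator G := commutator_mem_commutator (mem_top x) (mem_top y)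
    rw [hab] at this; exact this
  have hL2 : lowerCentralSeries G 2 = ⊥ := hL 2 (by norm_num)
  rw [hL2] at h1 h2 h3
  have e1 : a₁^2 = 1 := by simpa [hcomm] using h1
  have e2 : a₂^2 = 1 := by simpa [hcomm] using h2
  have e3 : a₃^2 = 1 := by simpa [hcomm] using h3
  have hpow : ∀ i : G, i^2 = 1 → ∀ k : ℕ, 1 ≤ k → i^2^k = 1 := by
    intro i hi k hk
    rw [pow2_split hk i]
    norm_num [hi]
  intro k hk
  refine ⟨?_, ?_, ?_, ?_, ?_⟩
  · rw [hL k hk]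
    symm; rw [eq_bot_iff, closure_le]
    rintro x hx
    simp only [Set.mem_insert_iff, Set.mem_singleton_iff] at hx
    rcases hx with rfl | rfl | rfl
    · simp [hpow a₁ e1 k hk]
    · simp [hpow a₂ e2 k hk]
    · simp [hpow a₃ e3 k hk]
  · rw [hL k hk]
    symm; rw [eq_bot_iff, closure_le]
    rintro x ⟨y, hy, rfl⟩
    have hy1 : y = 1 := by rw [← Subgroup.mem_bot, ← hab]; exact hy
    simp [hy1]
  · simpa [hpow a₁ e1 k hk, hcomm] using (lowerCentralSeries G (k+1)).one_mem
  · simpa [hpow a₂ e2 k hk, hcomm] using (lowerCentralSeries G (k+1)).one_mem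
  · simpa [hpow a₃ e3 k hk, hcomm] using (lowerCentralSeries G (k+1)).one_mem


lemma case_class2 (a₁ a₂ a₃ : G) (hgen : Subgroup.closure {a₁, a₂, a₃} = ⊤)
    (h1 : a₁ ^ 2 * ⁅a₁, a₂⁆⁻¹ ∈ lowerCentralSeries G 2)
    (h2 : a₂ ^ 2 * ⁅a₂, a₃⁆⁻¹ ∈ lowerCentralSeries G 2)
    (h3 : a₃ ^ 2 * ⁅a₁, a₃⁆⁻¹ ∈ lowerCentralSeries G 2)
    (hL2 : lowerCentralSeries G 2 = ⊥) : Concl a₁ a₂ a₃ := by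
  have hcen : ∀ x ∈ commutator G, ∀ g : G, Commute x g := by
    intro x hx g
    have : ⁅x,g⁆ ∈ lowerCentralSeries G 2 := by
      rw [lcs_succ 1]
      exact commutator_mem_commutator (by rwa [lowerCentralSeries_one]) (mem_top g)
    rw [hL2, Subgroup.mem_bot] at this
    exact commutatorElement_eq_one_iff_commute.mp this
  have hccen : ∀ x y : G, ∀ g : G, Commute ⁅x,y⁆ g := fun x y =>
    hcen ⁅x,y⁆ (commutator_mem_commutator (mem_top x) (mem_top y))
  rw [hL2, Subgroup.mem_bot] at h1 h2 h3
  have hc12 : ⁅a₁,a₂⁆ = a₁^2 := (mul_inv_eq_one.mp h1).symm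
  have hc23 : ⁅a₂,a₃⁆ = a₂^2 := (mul_inv_eq_one.mp h2).symm
  have hc13 : ⁅a₁,a₃⁆ = a₃^2 := (mul_inv_eq_one.mp h3).symm
  set H1 : Subgroup G := Subgroup.closure {a₁^2, a₂^2, a₃^2} with hH1
  have hmem1 : a₁^2 ∈ H1 := subset_closure (by simp)
  have hmem2 : a₂^2 ∈ H1 := subset_closure (by simp)
  have hmem3 : a₃^2 ∈ H1 := subset_closure (by simp)
  have m1 : a₁^2 ∈ commutator G :=
    hc12 ▸ commutator_mem_commutator (mem_top a₁) (mem_top a₂)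
  have m2 : a₂^2 ∈ commutator G :=
    hc23 ▸ commutator_mem_commutator (mem_top a₂) (mem_top a₃)
  have m3 : a₃^2 ∈ commutator G :=
    hc13 ▸ commutator_mem_commutator (mem_top a₁) (mem_top a₃)
  have claim1 : ∀ y : G, ⁅a₁, y⁆ ∈ H1 ∧ ⁅a₂, y⁆ ∈ H1 ∧ ⁅a₃, y⁆ ∈ H1 := by
    intro y
    have hy : y ∈ Subgroup.closure {a₁, a₂, a₃} := by rw [hgen]; exact mem_top y
    induction hy using closure_induction with
    | mem y hy =>
        simp only [Set.mem_insert_iff, Set.mem_singleton_iff] at hy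
        rcases hy with rfl | rfl | rfl
        · exact ⟨by rw [commutatorElement_self]; exact H1.one_mem,
            by rw [← commutatorElement_inv, hc12]; exact H1.inv_mem hmem1,
            by rw [← commutatorElement_inv, hc13]; exact H1.inv_mem hmem3⟩
        · exact ⟨by rw [hc12]; exact hmem1,
            by rw [commutatorElement_self]; exact H1.one_mem,
            by rw [← commutatorElement_inv, hc23]; exact H1.inv_mem hmem2⟩
        · exact ⟨by rw [hc13]; exact hmem3, by rw [hc23]; exact hmem2,
            by rw [commutatorElement_self]; exact H1.one_mem⟩
    | one => exact ⟨by rw [commutatorElement_one_right]; exact H1.one_mem,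
        by rw [commutatorElement_one_right]; exact H1.one_mem,
        by rw [commutatorElement_one_right]; exact H1.one_mem⟩
    | mul y z _ _ iy iz =>
        exact ⟨by rw [cc_mul_right (hccen _ _)]; exact H1.mul_mem iy.1 iz.1,
          by rw [cc_mul_right (hccen _ _)]; exact H1.mul_mem iy.2.1 iz.2.1,
          by rw [cc_mul_right (hccen _ _)]; exact H1.mul_mem iy.2.2 iz.2.2⟩
    | inv y _ iy =>
        exact ⟨by rw [cc_inv_right (hccen _ _)]; exact H1.inv_mem iy.1,
          by rw [cc_inv_right (hccen _ _)]; exact H1.inv_mem iy.2.1,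
          by rw [cc_inv_right (hccen _ _)]; exact H1.inv_mem iy.2.2⟩
  have claim2 : ∀ x y : G, ⁅x, y⁆ ∈ H1 := by
    intro x y
    have hx : x ∈ Subgroup.closure {a₁, a₂, a₃} := by rw [hgen]; exact mem_top x
    induction hx using closure_induction with
    | mem x hx =>
        simp only [Set.mem_insert_iff, Set.mem_singleton_iff] at hx
        rcases hx with rfl | rfl | rfl
        · exact (claim1 y).1
        · exact (claim1 y).2.1
        · exact (claim1 y).2.2
    | one => rw [commutatorElement_one_left]; exact H1.one_mem
    | mul x z _ _ ix iz => rw [cc_mul_left (hccen _ _)]; exact H1.mul_mem ix iz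
    | inv x _ ix => rw [cc_inv_left (hccen _ _)]; exact H1.inv_mem ix
  have hH1comm : H1 = commutator G := by
    refine le_antisymm ((closure_le _).mpr ?_) ?_
    · rintro x hx
      simp only [Set.mem_insert_iff, Set.mem_singleton_iff] at hx
      rcases hx with rfl | rfl | rfl
      · exact m1
      · exact m2
      · exact m3
    · show ⁅(⊤ : Subgroup G), (⊤ : Subgroup G)⁆ ≤ H1
      exact commutator_le.mpr fun x _ y _ => claim2 x y
  have sq1 : (a₁^2)^2 = 1 := by
    have hid := id_sq_left a₁ a₂
    rw [hc12] at hid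
    have hz : ⁅a₁^2, a₂⁆ = 1 :=
      ((hcen (a₁^2) m1 a₂)).commutator_eq
    have hz2 : ⁅a₁, a₁^2⁆ = 1 :=
      ((hcen (a₁^2) m1 a₁)).symm.commutator_eq
    rw [hz, hz2, one_mul] at hid
    exact hid.symm
  have sq2 : (a₂^2)^2 = 1 := by
    have hid := id_sq_left a₂ a₃
    rw [hc23] at hid
    have hz : ⁅a₂^2, a₃⁆ = 1 :=
      ((hcen (a₂^2) m2 a₃)).commutator_eq
    have hz2 : ⁅a₂, a₂^2⁆ = 1 :=
      ((hcen (a₂^2) m2 a₂)).symm.commutator_eq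
    rw [hz, hz2, one_mul] at hid
    exact hid.symm
  have sq3 : (a₃^2)^2 = 1 := by
    have hid := id_sq_right a₁ a₃
    rw [hc13] at hid
    have hz : ⁅a₁, a₃^2⁆ = 1 :=
      ((hcen (a₃^2) m3 a₁)).symm.commutator_eq
    rw [hz, conj_of_central (hcen (a₃^2) m3)] at hid
    rw [pow_two]
    exact hid.symm
  have elem : ∀ x ∈ commutator G, x^2 = 1 := by
    intro x hx
    rw [← hH1comm] at hx
    have := sq_mem_closure_comm (K := (⊥ : Subgroup G))
      (fun u hu v hv => by
        simp only [Set.mem_insert_iff, Set.mem_singleton_iff] at hu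
        rcases hu with rfl | rfl | rfl
        · exact hcen _ m1 v
        · exact hcen _ m2 v
        · exact hcen _ m3 v)
      (fun g hg => by
        simp only [Set.mem_insert_iff, Set.mem_singleton_iff] at hg
        rcases hg with rfl | rfl | rfl
        · rw [sq1]; exact Subgroup.one_mem _
        · rw [sq2]; exact Subgroup.one_mem _
        · rw [sq3]; exact Subgroup.one_mem _)
      x hx
    rwa [Subgroup.mem_bot] at this
  intro k hk
  rcases Nat.lt_or_ge k 2 with hk2 | hk2
  · have hk1 : k = 1 := by omega
    subst hk1
    refine ⟨?_, ?_, ?_, ?_, ?_⟩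
    · rw [lowerCentralSeries_one, ← hH1comm]
      norm_num
      exact hH1
    · rw [lowerCentralSeries_one]
      have himg : (fun x : G => x^2^(1-1)) '' ((commutator G : Subgroup G) : Set G)
          = ((commutator G : Subgroup G) : Set G) := by
        simp [pow_one]
      rw [himg, closure_eq]
    · have : a₁^2^1 * ⁅a₁^2^0, a₂⁆⁻¹ = 1 := by
        norm_num [hc12]
      rw [this]; exact Subgroup.one_mem _
    · have : a₂^2^1 * ⁅a₂^2^0, a₃⁆⁻¹ = 1 := by
        norm_num [hc23]
      rw [this]; exact Subgroup.one_mem _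
    · have : a₃^2^1 * ⁅a₁, a₃^2^0⁆⁻¹ = 1 := by
        norm_num [hc13]
      rw [this]; exact Subgroup.one_mem _
  · have hLk : lowerCentralSeries G k = ⊥ := by
      refine le_bot_iff.mp ?_
      calc lowerCentralSeries G k ≤ lowerCentralSeries G 2 := lowerCentralSeries_antitone hk2
      _ = ⊥ := hL2
    have hfour : ∀ i : G, (i^2)^2 = 1 → i^2^k = 1 := by
      intro i hi
      rw [pow2_split hk2 i, show (2:ℕ)^2 = 2*2 from rfl, pow_mul, hi, one_pow]
    have p1 : a₁^2^k = 1 := hfour a₁ sq1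
    have p2 : a₂^2^k = 1 := hfour a₂ sq2
    have p3 : a₃^2^k = 1 := hfour a₃ sq3
    have hhalf : ∀ i : G, i^2 ∈ commutator G → i^2^(k-1) ∈ commutator G := by
      intro i hi
      rw [pow2_split (show 1 ≤ k-1 by omega) i, show (2:ℕ)^1 = 2 from rfl]
      exact pow_mem hi _
    have q : ∀ x ∈ commutator G, x^2^(k-1) = 1 := by
      intro x hx
      rw [pow2_split (show 1 ≤ k-1 by omega) x, show (2:ℕ)^1 = 2 from rfl, elem x hx, one_pow]
    refine ⟨?_, ?_, ?_, ?_, ?_⟩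
    · rw [hLk]
      symm; rw [eq_bot_iff, closure_le]
      rintro x hx
      simp only [Set.mem_insert_iff, Set.mem_singleton_iff] at hx
      rcases hx with rfl | rfl | rfl
      · simp [p1]
      · simp [p2]
      · simp [p3]
    · rw [hLk]
      symm; rw [eq_bot_iff, closure_le]
      rintro x ⟨y, hy, rfl⟩
      simp [q y hy]
    · have : a₁^2^k * ⁅a₁^2^(k-1), a₂⁆⁻¹ = 1 := by
        rw [p1, ((hcen _ (hhalf a₁ m1)) a₂).commutator_eq]; group
      rw [this]; exact Subgroup.one_mem _
    · have : a₂^2^k * ⁅a₂^2^(k-1), a₃⁆⁻¹ = 1 := by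
        rw [p2, ((hcen _ (hhalf a₂ m2)) a₃).commutator_eq]; group
      rw [this]; exact Subgroup.one_mem _
    · have : a₃^2^k * ⁅a₁, a₃^2^(k-1)⁆⁻¹ = 1 := by
        rw [p3, ((hcen _ (hhalf a₃ m3)) a₁).symm.commutator_eq]; group
      rw [this]; exact Subgroup.one_mem _


section Main
variable {G : Type*} [Group G]

lemma case_main (a₁ a₂ a₃ : G) (hgen : Subgroup.closure {a₁, a₂, a₃} = ⊤)
    (h1 : a₁ ^ 2 * ⁅a₁, a₂⁆⁻¹ ∈ lowerCentralSeries G 2)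
    (h2 : a₂ ^ 2 * ⁅a₂, a₃⁆⁻¹ ∈ lowerCentralSeries G 2)
    (h3 : a₃ ^ 2 * ⁅a₁, a₃⁆⁻¹ ∈ lowerCentralSeries G 2)
    (c : ℕ) (hc : 2 ≤ c)
    (hctop : lowerCentralSeries G (c+1) = ⊥)
    (hQ : Concl ((QuotientGroup.mk' (lowerCentralSeries G c)) a₁)
                ((QuotientGroup.mk' (lowerCentralSeries G c)) a₂)
                ((QuotientGroup.mk' (lowerCentralSeries G c)) a₃)) :
    Concl a₁ a₂ a₃ := by
  set N := lowerCentralSeries G c with hNdef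
  set π : G →* G ⧸ N := QuotientGroup.mk' N with hπdef
  have hπs : Function.Surjective π := QuotientGroup.mk'_surjective N
  have hker : π.ker = N := QuotientGroup.ker_mk' N
  have hNc : ∀ x ∈ N, ∀ g : G, Commute x g := by
    intro x hx g
    have h := mem_lcs_succ (y := g) hx
    rw [hctop, Subgroup.mem_bot] at h
    exact commutatorElement_eq_one_iff_commute.mp h
  have hβN : ∀ x ∈ lowerCentralSeries G (c-1), ∀ y : G, ⁅x,y⁆ ∈ N := by
    intro x hx y
    have h := mem_lcs_succ (y := y) hx
    rwa [show c - 1 + 1 = c by omega] at h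
  have hβc : ∀ x ∈ lowerCentralSeries G (c-1), ∀ y g : G, Commute ⁅x,y⁆ g :=
    fun x hx y g => hNc _ (hβN x hx y) g
  have hmap : ∀ k : ℕ, Subgroup.map π (lowerCentralSeries G k)
      = lowerCentralSeries (G ⧸ N) k := lcs_map_surj π hπs
  have hHmap : ∀ k : ℕ, Subgroup.map π (Subgroup.closure {a₁^2^k, a₂^2^k, a₃^2^k})
      = Subgroup.closure {(π a₁)^2^k, (π a₂)^2^k, (π a₃)^2^k} := by
    intro k
    rw [MonoidHom.map_closure]
    congr 1
    rw [Set.image_insert_eq, Set.image_insert_eq, Set.image_singleton,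
      map_pow, map_pow, map_pow]
  have hsup1 : ∀ k : ℕ, 1 ≤ k →
      lowerCentralSeries G k ⊔ N = Subgroup.closure {a₁^2^k, a₂^2^k, a₃^2^k} ⊔ N := by
    intro k hk
    have e : Subgroup.map π (lowerCentralSeries G k)
        = Subgroup.map π (Subgroup.closure {a₁^2^k, a₂^2^k, a₃^2^k}) := by
      rw [hmap k, (hQ k hk).1, hHmap k]
    have e2 := congrArg (Subgroup.comap π) e
    rwa [Subgroup.comap_map_eq, Subgroup.comap_map_eq, hker] at e2
  have hcommmap : Subgroup.map π (commutator G) = commutator (G ⧸ N) := by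
    show Subgroup.map π ⁅(⊤ : Subgroup G), ⊤⁆ = ⁅(⊤ : Subgroup (G ⧸ N)), ⊤⁆
    rw [Subgroup.map_commutator, map_top_of_surjective π hπs]
  have hPmap : ∀ k : ℕ, Subgroup.map π
      (Subgroup.closure ((fun x => x^2^(k-1)) '' ((commutator G : Subgroup G) : Set G)))
      = Subgroup.closure ((fun x => x^2^(k-1)) ''
          ((commutator (G ⧸ N) : Subgroup (G ⧸ N)) : Set (G ⧸ N))) := by
    intro k
    rw [MonoidHom.map_closure]
    congr 1
    rw [← hcommmap, Subgroup.coe_map, Set.image_image, Set.image_image]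
    apply Set.image_congr
    intro x _
    exact map_pow π x _
  have hsup2 : ∀ k : ℕ, 1 ≤ k →
      lowerCentralSeries G k ⊔ N
      = Subgroup.closure ((fun x => x^2^(k-1)) '' ((commutator G : Subgroup G) : Set G)) ⊔ N := by
    intro k hk
    have e : Subgroup.map π (lowerCentralSeries G k)
        = Subgroup.map π
          (Subgroup.closure ((fun x => x^2^(k-1)) '' ((commutator G : Subgroup G) : Set G))) := by
      rw [hmap k, (hQ k hk).2.1, hPmap k]
    have e2 := congrArg (Subgroup.comap π) e
    rwa [Subgroup.comap_map_eq, Subgroup.comap_map_eq, hker] at e2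
  have hr1 : ∀ k : ℕ, 1 ≤ k →
      a₁^2^k * ⁅a₁^2^(k-1), a₂⁆⁻¹ ∈ lowerCentralSeries G (k+1) ⊔ N := by
    intro k hk
    have hmem := (hQ k hk).2.2.1
    have heq : π (a₁^2^k * ⁅a₁^2^(k-1), a₂⁆⁻¹)
        = (π a₁)^2^k * ⁅(π a₁)^2^(k-1), π a₂⁆⁻¹ := by
      rw [map_mul, map_inv, map_commutatorElement, map_pow, map_pow]
    have : a₁^2^k * ⁅a₁^2^(k-1), a₂⁆⁻¹ ∈ Subgroup.comap π (lowerCentralSeries (G ⧸ N) (k+1)) := by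
      rw [Subgroup.mem_comap, heq]; exact hmem
    rwa [← hmap (k+1), Subgroup.comap_map_eq, hker] at this
  have hr2 : ∀ k : ℕ, 1 ≤ k →
      a₂^2^k * ⁅a₂^2^(k-1), a₃⁆⁻¹ ∈ lowerCentralSeries G (k+1) ⊔ N := by
    intro k hk
    have hmem := (hQ k hk).2.2.2.1
    have heq : π (a₂^2^k * ⁅a₂^2^(k-1), a₃⁆⁻¹)
        = (π a₂)^2^k * ⁅(π a₂)^2^(k-1), π a₃⁆⁻¹ := by
      rw [map_mul, map_inv, map_commutatorElement, map_pow, map_pow]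
    have : a₂^2^k * ⁅a₂^2^(k-1), a₃⁆⁻¹ ∈ Subgroup.comap π (lowerCentralSeries (G ⧸ N) (k+1)) := by
      rw [Subgroup.mem_comap, heq]; exact hmem
    rwa [← hmap (k+1), Subgroup.comap_map_eq, hker] at this
  have hr3 : ∀ k : ℕ, 1 ≤ k →
      a₃^2^k * ⁅a₁, a₃^2^(k-1)⁆⁻¹ ∈ lowerCentralSeries G (k+1) ⊔ N := by
    intro k hk
    have hmem := (hQ k hk).2.2.2.2
    have heq : π (a₃^2^k * ⁅a₁, a₃^2^(k-1)⁆⁻¹)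
        = (π a₃)^2^k * ⁅π a₁, (π a₃)^2^(k-1)⁆⁻¹ := by
      rw [map_mul, map_inv, map_commutatorElement, map_pow, map_pow]
    have : a₃^2^k * ⁅a₁, a₃^2^(k-1)⁆⁻¹ ∈ Subgroup.comap π (lowerCentralSeries (G ⧸ N) (k+1)) := by
      rw [Subgroup.mem_comap, heq]; exact hmem
    rwa [← hmap (k+1), Subgroup.comap_map_eq, hker] at this
  haveI hNnorm : N.Normal := lowerCentralSeries_normal c
  have hNle : ∀ k : ℕ, k ≤ c → N ≤ lowerCentralSeries G k := by
    intro k hkc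
    exact hNdef ▸ lowerCentralSeries_antitone hkc
  have hLH : ∀ k : ℕ, 1 ≤ k → k ≤ c →
      lowerCentralSeries G k = Subgroup.closure {a₁^2^k, a₂^2^k, a₃^2^k} ⊔ N := by
    intro k h1k hkc
    rw [← hsup1 k h1k, sup_eq_left.mpr (hNle k hkc)]
  -- collapse of the relation hypotheses
  have hrelN1 : a₁^2^(c-1) * ⁅a₁^2^(c-2), a₂⁆⁻¹ ∈ N := by
    have h := hr1 (c-1) (by omega)
    rwa [show c-1+1 = c by omega, show c-1-1 = c-2 by omega, ← hNdef, sup_idem] at h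
  have hrelN2 : a₂^2^(c-1) * ⁅a₂^2^(c-2), a₃⁆⁻¹ ∈ N := by
    have h := hr2 (c-1) (by omega)
    rwa [show c-1+1 = c by omega, show c-1-1 = c-2 by omega, ← hNdef, sup_idem] at h
  have hrelN3 : a₃^2^(c-1) * ⁅a₁, a₃^2^(c-2)⁆⁻¹ ∈ N := by
    have h := hr3 (c-1) (by omega)
    rwa [show c-1+1 = c by omega, show c-1-1 = c-2 by omega, ← hNdef, sup_idem] at h
  -- step 3 : a_i^(2^c) ∈ N
  have hmemH3 : ∀ b : G, b ∈ ({a₁^2^(c-1), a₂^2^(c-1), a₃^2^(c-1)} : Set G) →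
      b ∈ lowerCentralSeries G (c-1) := by
    intro b hb
    rw [hLH (c-1) (by omega) (by omega)]
    exact Subgroup.mem_sup_left (subset_closure hb)
  have hsmem1 : a₁^2^(c-1) ∈ lowerCentralSeries G (c-1) := hmemH3 _ (by left; rfl)
  have hsmem2 : a₂^2^(c-1) ∈ lowerCentralSeries G (c-1) := hmemH3 _ (by right; left; rfl)
  have hsmem3 : a₃^2^(c-1) ∈ lowerCentralSeries G (c-1) := hmemH3 _ (by right; right; rfl)
  have hcol : lowerCentralSeries G (c+1) ⊔ N = N := by rw [hctop, bot_sup_eq]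
  have hpowc1 : a₁^2^c ∈ N := by
    have h := hr1 c (by omega)
    rw [hcol] at h
    have h2 : ⁅a₁^2^(c-1), a₂⁆ ∈ N := hβN _ hsmem1 a₂
    have h3 := N.mul_mem h h2
    rwa [inv_mul_cancel_right] at h3
  have hpowc2 : a₂^2^c ∈ N := by
    have h := hr2 c (by omega)
    rw [hcol] at h
    have h2 : ⁅a₂^2^(c-1), a₃⁆ ∈ N := hβN _ hsmem2 a₃
    have h3 := N.mul_mem h h2
    rwa [inv_mul_cancel_right] at h3
  have hpowc3 : a₃^2^c ∈ N := by
    have h := hr3 c (by omega)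
    rw [hcol] at h
    have h2 : ⁅a₁, a₃^2^(c-1)⁆ ∈ N := by
      rw [← commutatorElement_inv]
      exact N.inv_mem (hβN _ hsmem3 a₁)
    have h3 := N.mul_mem h h2
    rwa [inv_mul_cancel_right] at h3
  -- description of L (c-1) as a closure
  have hLc1 : lowerCentralSeries G (c-1)
      = Subgroup.closure (({a₁^2^(c-1), a₂^2^(c-1), a₃^2^(c-1)} : Set G) ∪ (N : Set G)) := by
    rw [Subgroup.closure_union, Subgroup.closure_eq, hLH (c-1) (by omega) (by omega)]
  -- step 4 : squares of L (c-1) lie in N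
  have hsqLc1N : ∀ x ∈ lowerCentralSeries G (c-1), x^2 ∈ N := by
    have key := sq_mem_closure_normal
      (s := ({a₁^2^(c-1), a₂^2^(c-1), a₃^2^(c-1)} : Set G) ∪ (N : Set G)) (K := N)
      (fun x hx y hy => by
        rw [← hLc1] at hx hy
        exact hβN _ ((lowerCentralSeries G (c-1)).inv_mem hy) _)
      (fun g hg => by
        rcases hg with hg | hg
        · simp only [Set.mem_insert_iff, Set.mem_singleton_iff] at hg
          rcases hg with rfl | rfl | rfl
          · rw [← pow2_sq (show 1 ≤ c by omega)]; exact hpowc1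
          · rw [← pow2_sq (show 1 ≤ c by omega)]; exact hpowc2
          · rw [← pow2_sq (show 1 ≤ c by omega)]; exact hpowc3
        · exact N.pow_mem hg 2)
    intro x hx
    rw [hLc1] at hx
    exact key x hx
  -- step 5 : N is elementary abelian
  have helem : ∀ n ∈ N, n^2 = 1 := by
    have hNcl : N = Subgroup.closure
        {g : G | ∃ g₁ ∈ lowerCentralSeries G (c-1), ∃ g₂ ∈ (⊤ : Subgroup G), ⁅g₁,g₂⁆ = g} := by
      rw [hNdef, show c = (c-1)+1 by omega, lcs_succ, Subgroup.commutator_def,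
        show c-1+1-1 = c-1 by omega]
    intro n hn
    have key := sq_mem_closure_comm
      (s := {g : G | ∃ g₁ ∈ lowerCentralSeries G (c-1), ∃ g₂ ∈ (⊤ : Subgroup G), ⁅g₁,g₂⁆ = g})
      (K := (⊥ : Subgroup G))
      (fun x hx y hy => by
        obtain ⟨x₁, hx₁, x₂, -, rfl⟩ := hx
        exact hβc _ hx₁ _ _)
      (fun g hg => by
        obtain ⟨x, hx, y, -, rfl⟩ := hg
        have hid := id_sq_left x y
        have e1 : ⁅x^2, y⁆ = 1 := ((hNc _ (hsqLc1N x hx)) y).commutator_eq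
        have e2 : ⁅x, ⁅x,y⁆⁆ = 1 := ((hβc x hx y x).symm).commutator_eq
        rw [e1, e2, one_mul] at hid
        rw [← hid]
        exact Subgroup.one_mem _)
    rw [hNcl] at hn
    have := key n hn
    rwa [Subgroup.mem_bot] at this
  -- basic transfer lemmas
  have hslot1N : ∀ n ∈ N, ∀ q y : G, ⁅n*q, y⁆ = ⁅q, y⁆ := by
    intro n hn q y
    rw [id_mul_left, (hNc n hn ⁅q,y⁆).eq, mul_inv_cancel_right,
      (hNc n hn y).commutator_eq, mul_one]
  have hslot2N : ∀ n ∈ N, ∀ g q : G, ⁅g, n*q⁆ = ⁅g, q⁆ := by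
    intro n hn g q
    rw [id_mul_right, (hNc n hn ⁅g,q⁆).eq, mul_inv_cancel_right,
      ((hNc n hn g).symm).commutator_eq, one_mul]
  -- right slot square kill
  have hsqr : ∀ x ∈ lowerCentralSeries G (c-1), ∀ h : G, ⁅x, h^2⁆ = 1 := by
    intro x hx h
    rw [id_sq_right, conj_of_central (hβc x hx h), ← pow_two]
    exact helem _ (hβN x hx h)
  have epow : ∀ b : G, b^2^(c-1) = (b^2^(c-2))^2 := by
    intro b
    have h := pow2_sq (show 1 ≤ c-1 by omega) b
    rwa [show c-1-1 = c-2 by omega] at h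
  have hgensq : ∀ b : G, b^2^c = (b^2^(c-1))^2 := fun b => pow2_sq (by omega) b
  have idconj : ∀ x c' : G, x*c'*x⁻¹ = ⁅x,c'⁆*c' := by intro x c'; group
  -- the exact top-level relations
  have hX1 : a₁^2^c = ⁅a₁^2^(c-1), a₂⁆ := by
    set u := a₁^2^(c-2) with hu
    set z := ⁅u, a₂⁆ with hz
    set w := a₁^2^(c-1) * z⁻¹ with hw
    have hwN : w ∈ N := hrelN1
    have hs : a₁^2^(c-1) = w * z := by rw [hw, inv_mul_cancel_right]
    have hzu : ⁅z, u⁆ = 1 := by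
      have : z = w⁻¹ * (a₁^2^(c-1)) := by rw [hs]; group
      rw [this, hslot1N w⁻¹ (N.inv_mem hwN)]
      exact ((Commute.refl a₁).pow_pow _ _).commutator_eq
    have huz : ⁅u, z⁆ = 1 := by
      rw [← commutatorElement_inv, hzu, inv_one]
    have lhs : a₁^2^c = z^2 := by
      rw [hgensq, hs, ((hNc w hwN z).mul_pow 2), helem w hwN, one_mul]
    have rhs : ⁅a₁^2^(c-1), a₂⁆ = z^2 := by
      rw [show a₁^2^(c-1) = u^2 from epow a₁, id_sq_left, ← hz, huz, one_mul]
    rw [lhs, rhs]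
  have hX2 : a₂^2^c = ⁅a₂^2^(c-1), a₃⁆ := by
    set u := a₂^2^(c-2) with hu
    set z := ⁅u, a₃⁆ with hz
    set w := a₂^2^(c-1) * z⁻¹ with hw
    have hwN : w ∈ N := hrelN2
    have hs : a₂^2^(c-1) = w * z := by rw [hw, inv_mul_cancel_right]
    have hzu : ⁅z, u⁆ = 1 := by
      have : z = w⁻¹ * (a₂^2^(c-1)) := by rw [hs]; group
      rw [this, hslot1N w⁻¹ (N.inv_mem hwN)]
      exact ((Commute.refl a₂).pow_pow _ _).commutator_eq
    have huz : ⁅u, z⁆ = 1 := by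
      rw [← commutatorElement_inv, hzu, inv_one]
    have lhs : a₂^2^c = z^2 := by
      rw [hgensq, hs, ((hNc w hwN z).mul_pow 2), helem w hwN, one_mul]
    have rhs : ⁅a₂^2^(c-1), a₃⁆ = z^2 := by
      rw [show a₂^2^(c-1) = u^2 from epow a₂, id_sq_left, ← hz, huz, one_mul]
    rw [lhs, rhs]
  have hX3 : a₃^2^c = ⁅a₁, a₃^2^(c-1)⁆ := by
    set u := a₃^2^(c-2) with hu
    set z := ⁅a₁, u⁆ with hz
    set w := a₃^2^(c-1) * z⁻¹ with hw
    have hwN : w ∈ N := hrelN3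
    have hs : a₃^2^(c-1) = w * z := by rw [hw, inv_mul_cancel_right]
    have hzu : ⁅z, u⁆ = 1 := by
      have hz2 : z = w⁻¹ * (a₃^2^(c-1)) := by rw [hs]; group
      rw [hz2, hslot1N w⁻¹ (N.inv_mem hwN)]
      exact ((Commute.refl a₃).pow_pow _ _).commutator_eq
    have huz : ⁅u, z⁆ = 1 := by
      rw [← commutatorElement_inv, hzu, inv_one]
    have lhs : a₃^2^c = z^2 := by
      rw [hgensq, hs, ((hNc w hwN z).mul_pow 2), helem w hwN, one_mul]
    have rhs : ⁅a₁, a₃^2^(c-1)⁆ = z^2 := by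
      rw [show a₃^2^(c-1) = u^2 from epow a₃, id_sq_right, ← hz, idconj, huz, one_mul, pow_two]
    rw [lhs, rhs]
  -- Hc and membership facts
  set Hc : Subgroup G := Subgroup.closure {a₁^2^c, a₂^2^c, a₃^2^c} with hHcdef
  have hHg1 : a₁^2^c ∈ Hc := subset_closure (by left; rfl)
  have hHg2 : a₂^2^c ∈ Hc := subset_closure (by right; left; rfl)
  have hHg3 : a₃^2^c ∈ Hc := subset_closure (by right; right; rfl)
  have hβcInv : ∀ z ∈ lowerCentralSeries G (c-1), ∀ g g' : G, Commute ⁅g,z⁆ g' := by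
    intro z hz g g'
    have h := (hβc z hz g g').inv_left
    rwa [commutatorElement_inv] at h
  have T1 : ∀ g p q : G, p * q⁻¹ ∈ N → ⁅g, p⁆ = ⁅g, q⁆ := by
    intro g p q h
    conv_lhs => rw [show p = (p*q⁻¹)*q by group]
    exact hslot2N _ h g q
  have T3 : ∀ g z : G, z ∈ lowerCentralSeries G (c-1) → ⁅g, z⁻¹⁆ = ⁅g,z⁆⁻¹ := by
    intro g z hz
    exact cc_inv_right (hβcInv z hz g)
  -- pairwise commutation of the generators of L (c-1) mod N
  have hscomm : ∀ x ∈ ({a₁^2^(c-1), a₂^2^(c-1), a₃^2^(c-1)} : Set G),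
      ∀ y ∈ ({a₁^2^(c-1), a₂^2^(c-1), a₃^2^(c-1)} : Set G), Commute x y := by
    intro x hx y hy
    have hxL := hmemH3 x hx
    simp only [Set.mem_insert_iff, Set.mem_singleton_iff] at hy
    rcases hy with rfl | rfl | rfl
    · exact commutatorElement_eq_one_iff_commute.mp (by rw [epow a₁]; exact hsqr x hxL _)
    · exact commutatorElement_eq_one_iff_commute.mp (by rw [epow a₂]; exact hsqr x hxL _)
    · exact commutatorElement_eq_one_iff_commute.mp (by rw [epow a₃]; exact hsqr x hxL _)
  have hsqH : ∀ h ∈ Subgroup.closure ({a₁^2^(c-1), a₂^2^(c-1), a₃^2^(c-1)} : Set G),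
      h^2 ∈ Hc := by
    refine sq_mem_closure_comm hscomm ?_
    intro g hg
    simp only [Set.mem_insert_iff, Set.mem_singleton_iff] at hg
    rcases hg with rfl | rfl | rfl
    · rw [← hgensq]; exact hHg1
    · rw [← hgensq]; exact hHg2
    · rw [← hgensq]; exact hHg3
  have hsqL : ∀ x ∈ lowerCentralSeries G (c-1), x^2 ∈ Hc := by
    intro x hx
    rw [hLH (c-1) (by omega) (by omega)] at hx
    rw [← SetLike.mem_coe, Subgroup.mul_normal] at hx
    obtain ⟨h, hh, n, hn, rfl⟩ := hx
    rw [((hNc n hn h).symm).mul_pow 2, helem n hn, mul_one]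
    exact hsqH h hh
  -- membership of the 2^(c-2) powers
  have humem : ∀ b ∈ ({a₁,a₂,a₃} : Set G), b^2^(c-2) ∈ lowerCentralSeries G (c-2) := by
    intro b hb
    rcases Nat.lt_or_ge c 3 with h3 | h3
    · have e0 : c - 2 = 0 := by omega
      rw [e0]
      exact mem_top _
    · rw [hLH (c-2) (by omega) (by omega)]
      apply Subgroup.mem_sup_left
      apply Subgroup.subset_closure
      simp only [Set.mem_insert_iff, Set.mem_singleton_iff] at hb ⊢
      rcases hb with rfl | rfl | rfl
      · left; rfl
      · right; left; rfl
      · right; right; rfl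
  have hzmem : ∀ b ∈ ({a₁,a₂,a₃} : Set G), ∀ y : G,
      ⁅b^2^(c-2), y⁆ ∈ lowerCentralSeries G (c-1) := by
    intro b hb y
    have h := mem_lcs_succ (y := y) (humem b hb)
    rwa [show c-2+1 = c-1 by omega] at h
  have hdelta : ∀ b ∈ ({a₁,a₂,a₃} : Set G), ∀ y : G, 3 ≤ c →
      ⁅b^2^(c-2), ⁅b^2^(c-2), y⁆⁆ = 1 := by
    intro b hb y h3
    have hzz : ⁅⁅b^2^(c-2), y⁆, b^2^(c-2)⁆ = 1 := by
      have e : b^2^(c-2) = (b^2^(c-3))^2 := by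
        have h := pow2_sq (show 1 ≤ c-2 by omega) b
        rwa [show c-2-1 = c-3 by omega] at h
      have h2 := hsqr _ (hzmem b hb y) (b^2^(c-3))
      rwa [← e] at h2
    rw [← commutatorElement_inv, hzz, inv_one]
  have hvred : ∀ b y : G, ⁅b^2^(c-1), y⁆
      = ⁅b^2^(c-2), ⁅b^2^(c-2), y⁆⁆ * ⁅b^2^(c-2), y⁆^2 := by
    intro b y
    rw [epow b, id_sq_left]
  -- the nine basic commutators land in Hc
  have hvdiag : ∀ b : G, ⁅b^2^(c-1), b⁆ = 1 :=
    fun b => (((Commute.refl b).pow_left _)).commutator_eq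
  have hval : ∀ b ∈ ({a₁,a₂,a₃} : Set G), ∀ y ∈ ({a₁,a₂,a₃} : Set G),
      ⁅b^2^(c-1), y⁆ ∈ Hc := by
    have hLL : 2 ≤ c → c = 2 → ∀ x y : G, ⁅x,y⁆ ∈ lowerCentralSeries G (c-1) := by
      intro _ hc2 x y
      rw [show c - 1 = 1 by omega]
      exact mem_lcs_succ (mem_top x)
    have hoff : ∀ b ∈ ({a₁,a₂,a₃} : Set G), ∀ y : G,
        (c = 2 → ⁅b^2^(c-2), ⁅b^2^(c-2), y⁆⁆ ∈ Hc) → ⁅b^2^(c-1), y⁆ ∈ Hc := by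
      intro b hb y hd2
      rw [hvred]
      refine Hc.mul_mem ?_ (hsqL _ (hzmem b hb y))
      rcases Nat.lt_or_ge c 3 with h3 | h3
      · exact hd2 (by omega)
      · rw [hdelta b hb y h3]; exact Hc.one_mem
    intro b hb y hy
    have hc2pow : c = 2 → ∀ g : G, g^2^(c-2) = g := by
      intro hc2 g
      rw [show c - 2 = 0 by omega, pow_zero, pow_one]
    simp only [Set.mem_insert_iff, Set.mem_singleton_iff] at hb hy
    rcases hb with hb | hb | hb <;> rcases hy with hy | hy | hy <;> rw [hb, hy]
    · rw [hvdiag]; exact Hc.one_mem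
    · rw [← hX1]; exact hHg1
    · -- pair (1,3)
      refine hoff _ (by left; rfl) _ ?_
      intro hc2
      rw [hc2pow hc2]
      have e2 : ⁅a₁,a₃⁆ * (a₃^2^(c-1))⁻¹ ∈ N := by
        have h := N.inv_mem hrelN3
        rwa [mul_inv_rev, inv_inv, hc2pow hc2] at h
      rw [T1 a₁ _ _ e2, ← hX3]
      exact hHg3
    · -- pair (2,1)
      refine hoff _ (by right; left; rfl) _ ?_
      intro hc2
      rw [hc2pow hc2]
      have e1 : ⁅a₂,a₁⁆ = ⁅a₁,a₂⁆⁻¹ := (commutatorElement_inv a₁ a₂).symm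
      have e2 : ⁅a₁,a₂⁆ * (a₁^2^(c-1))⁻¹ ∈ N := by
        have h := N.inv_mem hrelN1
        rwa [mul_inv_rev, inv_inv, hc2pow hc2] at h
      rw [e1, T3 a₂ _ (hLL hc hc2 a₁ a₂), T1 a₂ _ _ e2,
        show ⁅a₂, a₁^2^(c-1)⁆ = ⁅a₁^2^(c-1), a₂⁆⁻¹ from (commutatorElement_inv _ _).symm,
        ← hX1, inv_inv]
      exact hHg1
    · rw [hvdiag]; exact Hc.one_mem
    · rw [← hX2]; exact hHg2
    · -- pair (3,1)
      refine hoff _ (by right; right; rfl) _ ?_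
      intro hc2
      rw [hc2pow hc2]
      have e1 : ⁅a₃,a₁⁆ = ⁅a₁,a₃⁆⁻¹ := (commutatorElement_inv a₁ a₃).symm
      have e2 : ⁅a₁,a₃⁆ * (a₃^2^(c-1))⁻¹ ∈ N := by
        have h := N.inv_mem hrelN3
        rwa [mul_inv_rev, inv_inv, hc2pow hc2] at h
      rw [e1, T3 a₃ _ (hLL hc hc2 a₁ a₃), T1 a₃ _ _ e2,
        ((Commute.refl a₃).pow_right _).commutator_eq, inv_one]
      exact Hc.one_mem
    · -- pair (3,2)
      refine hoff _ (by right; right; rfl) _ ?_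
      intro hc2
      rw [hc2pow hc2]
      have e1 : ⁅a₃,a₂⁆ = ⁅a₂,a₃⁆⁻¹ := (commutatorElement_inv a₂ a₃).symm
      have e2 : ⁅a₂,a₃⁆ * (a₂^2^(c-1))⁻¹ ∈ N := by
        have h := N.inv_mem hrelN2
        rwa [mul_inv_rev, inv_inv, hc2pow hc2] at h
      rw [e1, T3 a₃ _ (hLL hc hc2 a₂ a₃), T1 a₃ _ _ e2,
        show ⁅a₃, a₂^2^(c-1)⁆ = ⁅a₂^2^(c-1), a₃⁆⁻¹ from (commutatorElement_inv _ _).symm,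
        ← hX2, inv_inv]
      exact hHg2
    · rw [hvdiag]; exact Hc.one_mem
  -- step 11 : L c ≤ Hc
  have hval2 : ∀ b ∈ ({a₁,a₂,a₃} : Set G), ∀ y : G, ⁅b^2^(c-1), y⁆ ∈ Hc := by
    intro b hb y
    have hbL : b^2^(c-1) ∈ lowerCentralSeries G (c-1) := by
      apply hmemH3
      simp only [Set.mem_insert_iff, Set.mem_singleton_iff] at hb ⊢
      rcases hb with hb | hb | hb
      · left; rw [hb]
      · right; left; rw [hb]
      · right; right; rw [hb]
    have hy' : y ∈ Subgroup.closure {a₁,a₂,a₃} := by rw [hgen]; exact mem_top y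
    induction hy' using closure_induction with
    | mem z hz => exact hval b hb z hz
    | one => rw [commutatorElement_one_right]; exact Hc.one_mem
    | mul u v hu hv ihu ihv => rw [cc_mul_right (hβc _ hbL _)]; exact Hc.mul_mem ihu ihv
    | inv u hu ihu => rw [cc_inv_right (hβc _ hbL _)]; exact Hc.inv_mem ihu
  have hLcHc : lowerCentralSeries G c ≤ Hc := by
    have hrw : lowerCentralSeries G c = ⁅lowerCentralSeries G (c-1), (⊤ : Subgroup G)⁆ := by
      have h := lcs_succ (G := G) (c-1)
      rwa [show c-1+1 = c by omega] at h
    rw [hrw]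
    refine commutator_le.mpr ?_
    intro x hx y _
    rw [hLc1] at hx
    induction hx using closure_induction with
    | mem g hg =>
        rcases hg with hg | hg
        · simp only [Set.mem_insert_iff, Set.mem_singleton_iff] at hg
          rcases hg with hg | hg | hg
          · rw [hg]; exact hval2 a₁ (by left; rfl) y
          · rw [hg]; exact hval2 a₂ (by right; left; rfl) y
          · rw [hg]; exact hval2 a₃ (by right; right; rfl) y
        · rw [(hNc g hg y).commutator_eq]; exact Hc.one_mem
    | one => rw [commutatorElement_one_left]; exact Hc.one_mem
    | mul u v hu hv ihu ihv =>
        rw [← hLc1] at hv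
        rw [cc_mul_left (hβc v hv y)]
        exact Hc.mul_mem ihu ihv
    | inv u hu ihu =>
        rw [← hLc1] at hu
        rw [cc_inv_left (hβc u hu y)]
        exact Hc.inv_mem ihu
  -- step 12 : Hc = N
  have hHcN : Hc = N := by
    refine le_antisymm ?_ hLcHc
    rw [hHcdef]
    refine (closure_le _).mpr ?_
    rintro x hx
    simp only [Set.mem_insert_iff, Set.mem_singleton_iff] at hx
    rcases hx with rfl | rfl | rfl
    · exact hpowc1
    · exact hpowc2
    · exact hpowc3
  -- triviality of high powers
  have htriv : ∀ b : G, b^2^c ∈ N → ∀ k : ℕ, c+1 ≤ k → b^2^k = 1 := by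
    intro b hb k hkc
    have e : b^2^k = (b^2^c)^2^(k-c) := pow2_split (by omega) b
    rw [e, pow2_sq (show 1 ≤ k-c by omega)]
    exact helem _ (N.pow_mem hb _)
  have hafter : ∀ b : G, b^2^c ∈ N → ∀ m : ℕ, c ≤ m → b^2^m ∈ N := by
    intro b hb m hm
    rcases Nat.eq_or_lt_of_le hm with he | hlt
    · rwa [← he]
    · rw [htriv b hb m (by omega)]; exact N.one_mem
  -- step 13 : first statement
  have hHgen : ∀ k : ℕ, 1 ≤ k →
      lowerCentralSeries G k = Subgroup.closure {a₁^2^k, a₂^2^k, a₃^2^k} := by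
    intro k hk
    rcases Nat.lt_or_ge c k with hck | hck
    · have hLk : lowerCentralSeries G k = ⊥ := by
        refine le_bot_iff.mp ?_
        calc lowerCentralSeries G k ≤ lowerCentralSeries G (c+1) :=
          lowerCentralSeries_antitone (by omega)
        _ = ⊥ := hctop
      rw [hLk]
      symm; rw [eq_bot_iff, closure_le]
      rintro x hx
      simp only [Set.mem_insert_iff, Set.mem_singleton_iff] at hx
      rcases hx with rfl | rfl | rfl
      · simp [htriv a₁ hpowc1 k (by omega)]
      · simp [htriv a₂ hpowc2 k (by omega)]
      · simp [htriv a₃ hpowc3 k (by omega)]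
    · rw [hLH k hk hck]
      refine sup_eq_left.mpr ?_
      rw [← hHcN, hHcdef]
      refine (closure_le _).mpr ?_
      rintro x hx
      simp only [Set.mem_insert_iff, Set.mem_singleton_iff] at hx
      rcases hx with rfl | rfl | rfl
      · rw [pow2_split hck a₁]
        exact Subgroup.pow_mem _ (subset_closure (by left; rfl)) _
      · rw [pow2_split hck a₂]
        exact Subgroup.pow_mem _ (subset_closure (by right; left; rfl)) _
      · rw [pow2_split hck a₃]
        exact Subgroup.pow_mem _ (subset_closure (by right; right; rfl)) _
  -- step 14 : squares descend
  have hSq : ∀ j : ℕ, 1 ≤ j → ∀ x ∈ lowerCentralSeries G j,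
      x^2 ∈ lowerCentralSeries G (j+1) := by
    intro j hj x hx
    have e : ∀ b : G, (b^2^j)^2 = b^2^(j+1) := by
      intro b
      have h := pow2_sq (show 1 ≤ j+1 by omega) b
      rw [show j+1-1 = j by omega] at h
      exact h.symm
    refine sq_mem_closure_normal (s := ({a₁^2^j, a₂^2^j, a₃^2^j} : Set G))
      (K := lowerCentralSeries G (j+1)) ?_ ?_ x (by rwa [hHgen j hj] at hx)
    · intro u hu v hv
      rw [← hHgen j hj] at hv
      exact mem_lcs_succ ((lowerCentralSeries G j).inv_mem hv)
    · rintro g hg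
      simp only [Set.mem_insert_iff, Set.mem_singleton_iff] at hg
      rcases hg with rfl | rfl | rfl
      · rw [e a₁, hHgen (j+1) (by omega)]
        exact subset_closure (by left; rfl)
      · rw [e a₂, hHgen (j+1) (by omega)]
        exact subset_closure (by right; left; rfl)
      · rw [e a₃, hHgen (j+1) (by omega)]
        exact subset_closure (by right; right; rfl)
  -- squares of generators lie in the commutator subgroup
  have hsqcomm : ∀ p q : G, q ∈ commutator G → p^2 * q⁻¹ ∈ lowerCentralSeries G 2 →
      p^2 ∈ commutator G := by
    intro p q hq h
    have h2 : p^2 * q⁻¹ ∈ commutator G := by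
      rw [← lowerCentralSeries_one]
      exact lowerCentralSeries_antitone (by norm_num) h
    have h3 := (commutator G).mul_mem h2 hq
    rwa [inv_mul_cancel_right] at h3
  have hsq1 : a₁^2 ∈ commutator G :=
    hsqcomm a₁ _ (commutator_mem_commutator (mem_top a₁) (mem_top a₂)) h1
  have hsq2 : a₂^2 ∈ commutator G :=
    hsqcomm a₂ _ (commutator_mem_commutator (mem_top a₂) (mem_top a₃)) h2
  have hsq3 : a₃^2 ∈ commutator G :=
    hsqcomm a₃ _ (commutator_mem_commutator (mem_top a₁) (mem_top a₃)) h3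
  -- iterated squares of commutator elements
  have hiter : ∀ x ∈ commutator G, ∀ t : ℕ, x^2^t ∈ lowerCentralSeries G (1+t) := by
    intro x hx t
    induction t with
    | zero =>
        rw [pow_zero, pow_one]
        rwa [lowerCentralSeries_one]
    | succ t ih =>
        have e : x^2^(t+1) = (x^2^t)^2 := by rw [pow_succ, pow_mul]
        rw [e]
        have h := hSq (1+t) (by omega) _ ih
        rwa [show 1+t+1 = 1+(t+1) by omega] at h
  -- step 15 : second statement
  have hPgen : ∀ k : ℕ, 1 ≤ k → lowerCentralSeries G k
      = Subgroup.closure ((fun x => x^2^(k-1)) '' ((commutator G : Subgroup G) : Set G)) := by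
    intro k hk
    rcases Nat.lt_or_ge c k with hck | hck
    · have hLk : lowerCentralSeries G k = ⊥ := by
        refine le_bot_iff.mp ?_
        calc lowerCentralSeries G k ≤ lowerCentralSeries G (c+1) :=
          lowerCentralSeries_antitone (by omega)
        _ = ⊥ := hctop
      rw [hLk]
      symm; rw [eq_bot_iff, closure_le]
      rintro x ⟨y, hy, rfl⟩
      have hyN : y^2^(c-1) ∈ N := by
        have h := hiter y hy (c-1)
        rwa [show 1+(c-1) = c by omega, ← hNdef] at h
      have e : y^2^(k-1) = (y^2^(c-1))^2^(k-c) := by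
        rw [pow2_split (show c-1 ≤ k-1 by omega) y, show k-1-(c-1) = k-c by omega]
      have : y^2^(k-1) = 1 := by
        rw [e, pow2_sq (show 1 ≤ k-c by omega)]
        exact helem _ (N.pow_mem hyN _)
      simp [this]
    · have hLkN : lowerCentralSeries G k ⊔ N = lowerCentralSeries G k :=
        sup_eq_left.mpr (hNle k hck)
      rw [← hLkN, hsup2 k hk]
      refine sup_eq_left.mpr ?_
      rw [← hHcN, hHcdef]
      refine (closure_le _).mpr ?_
      rintro x hx
      simp only [Set.mem_insert_iff, Set.mem_singleton_iff] at hx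
      have key : ∀ b : G, b^2 ∈ commutator G → b^2^c ∈
          Subgroup.closure ((fun x => x^2^(k-1)) '' ((commutator G : Subgroup G) : Set G)) := by
        intro b hb
        have e1 : b^2^c = (b^2)^2^(c-1) := by
          have h := pow2_split (show 1 ≤ c by omega) b
          rwa [pow_one] at h
        have e2 : (b^2)^2^(c-1) = ((b^2)^2^(c-k))^2^(k-1) := by
          rw [pow2_split (show c-k ≤ c-1 by omega) (b^2), show c-1-(c-k) = k-1 by omega]
        rw [e1, e2]
        exact subset_closure ⟨(b^2)^2^(c-k), (commutator G).pow_mem hb _, rfl⟩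
      rcases hx with rfl | rfl | rfl
      · exact key a₁ hsq1
      · exact key a₂ hsq2
      · exact key a₃ hsq3
  -- step 16 : the relations
  have hRmain : ∀ k : ℕ, 1 ≤ k →
      (a₁^2^k * ⁅a₁^2^(k-1), a₂⁆⁻¹ ∈ lowerCentralSeries G (k+1) ∧
       a₂^2^k * ⁅a₂^2^(k-1), a₃⁆⁻¹ ∈ lowerCentralSeries G (k+1) ∧
       a₃^2^k * ⁅a₁, a₃^2^(k-1)⁆⁻¹ ∈ lowerCentralSeries G (k+1)) := by
    intro k hk
    rcases Nat.lt_or_ge k c with hkc | hkc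
    · -- k ≤ c - 1
      have hcol2 : lowerCentralSeries G (k+1) ⊔ N = lowerCentralSeries G (k+1) :=
        sup_eq_left.mpr (hNle (k+1) (by omega))
      exact ⟨by have h := hr1 k hk; rwa [hcol2] at h,
        by have h := hr2 k hk; rwa [hcol2] at h,
        by have h := hr3 k hk; rwa [hcol2] at h⟩
    · rcases Nat.eq_or_lt_of_le hkc with hkc2 | hkc2
      · -- k = c
        subst hkc2
        refine ⟨?_, ?_, ?_⟩
        · rw [← hX1, mul_inv_cancel]; exact Subgroup.one_mem _
        · rw [← hX2, mul_inv_cancel]; exact Subgroup.one_mem _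
        · rw [← hX3, mul_inv_cancel]; exact Subgroup.one_mem _
      · -- k ≥ c + 1
        have hk1 : a₁^2^k = 1 := htriv a₁ hpowc1 k (by omega)
        have hk2' : a₂^2^k = 1 := htriv a₂ hpowc2 k (by omega)
        have hk3 : a₃^2^k = 1 := htriv a₃ hpowc3 k (by omega)
        have hm1 : a₁^2^(k-1) ∈ N := hafter a₁ hpowc1 (k-1) (by omega)
        have hm2 : a₂^2^(k-1) ∈ N := hafter a₂ hpowc2 (k-1) (by omega)
        have hm3 : a₃^2^(k-1) ∈ N := hafter a₃ hpowc3 (k-1) (by omega)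
        refine ⟨?_, ?_, ?_⟩
        · rw [hk1, (hNc _ hm1 a₂).commutator_eq]
          simpa using Subgroup.one_mem _
        · rw [hk2', (hNc _ hm2 a₃).commutator_eq]
          simpa using Subgroup.one_mem _
        · rw [hk3, ((hNc _ hm3 a₁).symm).commutator_eq]
          simpa using Subgroup.one_mem _
  intro k hk
  exact ⟨hHgen k hk, hPgen k hk, (hRmain k hk).1, (hRmain k hk).2.1, (hRmain k hk).2.2⟩

end Main

universe u

theorem master : ∀ (n : ℕ) (G : Type u) [Group G] [Finite G], Nat.card G ≤ n →
    IsPGroup 2 G → ∀ (a₁ a₂ a₃ : G), Subgroup.closure {a₁,a₂,a₃} = ⊤ →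
    a₁ ^ 2 * ⁅a₁, a₂⁆⁻¹ ∈ lowerCentralSeries G 2 →
    a₂ ^ 2 * ⁅a₂, a₃⁆⁻¹ ∈ lowerCentralSeries G 2 →
    a₃ ^ 2 * ⁅a₁, a₃⁆⁻¹ ∈ lowerCentralSeries G 2 →
    Concl a₁ a₂ a₃ := by
  intro n
  induction n using Nat.strong_induction_on with
  | _ n IH =>
    intro G _ _ hcard hP a₁ a₂ a₃ hgen h1 h2 h3
    classical
    by_cases hab : commutator G = ⊥
    · exact case_abelian a₁ a₂ a₃ h1 h2 h3 hab
    · haveI : Fact (Nat.Prime 2) := ⟨Nat.prime_two⟩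
      haveI hnil : Group.IsNilpotent G := hP.isNilpotent
      have hex : ∃ m, lowerCentralSeries G m = ⊥ :=
        nilpotent_iff_lowerCentralSeries.mp hnil
      have hd : lowerCentralSeries G (Nat.find hex) = ⊥ := Nat.find_spec hex
      have hd2 : 2 ≤ Nat.find hex := by
        rcases Nat.lt_or_ge (Nat.find hex) 2 with h | h
        · exfalso
          apply hab
          have hd1 : lowerCentralSeries G 1 = ⊥ := by
            refine le_bot_iff.mp ?_
            rw [← hd]
            exact lowerCentralSeries_antitone (by omega)
          rwa [lowerCentralSeries_one] at hd1
        · exact h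
      set c : ℕ := Nat.find hex - 1 with hcdef
      have hcne : lowerCentralSeries G c ≠ ⊥ := Nat.find_min hex (by omega)
      have hctop : lowerCentralSeries G (c+1) = ⊥ := by
        rwa [show c+1 = Nat.find hex by omega]
      rcases Nat.lt_or_ge c 2 with hc1 | hc2
      · refine case_class2 a₁ a₂ a₃ hgen h1 h2 h3 ?_
        have hceq : c = 1 := by omega
        rw [show (2:ℕ) = c+1 by omega]
        exact hctop
      · set N := lowerCentralSeries G c with hNdef
        haveI : N.Normal := lowerCentralSeries_normal c
        have hlt : Nat.card (G ⧸ N) < Nat.card G := by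
          have h1' := Subgroup.card_eq_card_quotient_mul_card_subgroup N
          have h2' : 1 < Nat.card N := (Subgroup.one_lt_card_iff_ne_bot N).mpr hcne
          have h3' : 0 < Nat.card (G ⧸ N) := Nat.card_pos
          nlinarith [h1', h2', h3']
        set π := QuotientGroup.mk' N with hπdef
        have hπs : Function.Surjective π := QuotientGroup.mk'_surjective N
        have hPQ : IsPGroup 2 (G ⧸ N) := hP.to_quotient N
        have hgenQ : Subgroup.closure {π a₁, π a₂, π a₃} = ⊤ := by
          rw [show ({π a₁, π a₂, π a₃} : Set (G ⧸ N)) = π '' {a₁,a₂,a₃} by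
            rw [Set.image_insert_eq, Set.image_insert_eq, Set.image_singleton],
            ← MonoidHom.map_closure, hgen]
          exact map_top_of_surjective π hπs
        have hmapL : Subgroup.map π (lowerCentralSeries G 2)
            = lowerCentralSeries (G ⧸ N) 2 := lcs_map_surj π hπs 2
        have h1Q : (π a₁)^2 * ⁅π a₁, π a₂⁆⁻¹ ∈ lowerCentralSeries (G ⧸ N) 2 := by
          rw [← hmapL]
          exact ⟨_, h1, by rw [map_mul, map_inv, map_commutatorElement, map_pow]⟩
        have h2Q : (π a₂)^2 * ⁅π a₂, π a₃⁆⁻¹ ∈ lowerCentralSeries (G ⧸ N) 2 := by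
          rw [← hmapL]
          exact ⟨_, h2, by rw [map_mul, map_inv, map_commutatorElement, map_pow]⟩
        have h3Q : (π a₃)^2 * ⁅π a₁, π a₃⁆⁻¹ ∈ lowerCentralSeries (G ⧸ N) 2 := by
          rw [← hmapL]
          exact ⟨_, h3, by rw [map_mul, map_inv, map_commutatorElement, map_pow]⟩
        have hQ := IH (Nat.card (G ⧸ N)) (by omega) (G ⧸ N) le_rfl hPQ
          (π a₁) (π a₂) (π a₃) hgenQ h1Q h2Q h3Q
        exact case_main a₁ a₂ a₃ hgen h1 h2 h3 c hc2 hctop hQ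

end S3


/-- **Proposition 11 (second part).** Let `G` be a finite 2-group generated by `a₁, a₂, a₃`
with `a₁² ≡ ⁅a₁,a₂⁆`, `a₂² ≡ ⁅a₂,a₃⁆`, `a₃² ≡ ⁅a₁,a₃⁆` modulo `G₃`. Then for every `j ≥ 2`
the `j`-th term of the lower central series (which is `lowerCentralSeries G (j-1)` in
Mathlib's indexing) satisfies
`G_j = ⟨a₁^(2^(j-1)), a₂^(2^(j-1)), a₃^(2^(j-1))⟩ = (G₂)^(2^(j-2))`. -/
theorem stmt_3 (G : Type*) [Group G] [Finite G] (hG : IsPGroup 2 G)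
    (a₁ a₂ a₃ : G) (hgen : Subgroup.closure {a₁, a₂, a₃} = ⊤)
    (h1 : a₁ ^ 2 * ⁅a₁, a₂⁆⁻¹ ∈ (⊤ : Subgroup G).lowerCentralSeries 2)
    (h2 : a₂ ^ 2 * ⁅a₂, a₃⁆⁻¹ ∈ (⊤ : Subgroup G).lowerCentralSeries 2)
    (h3 : a₃ ^ 2 * ⁅a₁, a₃⁆⁻¹ ∈ (⊤ : Subgroup G).lowerCentralSeries 2) :
    ∀ j : ℕ, 2 ≤ j →
      (⊤ : Subgroup G).lowerCentralSeries (j - 1) =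
        Subgroup.closure {a₁ ^ 2 ^ (j - 1), a₂ ^ 2 ^ (j - 1), a₃ ^ 2 ^ (j - 1)} ∧
      (⊤ : Subgroup G).lowerCentralSeries (j - 1) =
        Subgroup.closure ((fun x => x ^ 2 ^ (j - 2)) '' (commutator G : Set G)) := by
  have hconcl := S3.master (Nat.card G) G le_rfl hG a₁ a₂ a₃ hgen h1 h2 h3
  intro j hj
  obtain ⟨hA, hB, -, -, -⟩ := hconcl (j-1) (by omega)
  refine ⟨hA, ?_⟩
  rwa [show j-1-1 = j-2 by omega] at hB
end

section
/- Let G be a group, let a, b ∈ G, and set c = [a,b]. If a²c⁻¹ ∈ G₃ (i.e. a² ≡ [a,b] modulo G₃), then [c,a] ∈ G₄ and [c,b] ≡ c² modulo G₄, where G₃ and G₄ denote the third and fourth terms of the lower central series of G. -/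
open scoped commutatorElement

/-- Let `G` be a group, `a, b ∈ G` and `c = ⁅a,b⁆`. If `a²c⁻¹ ∈ G₃` (i.e. `a² ≡ ⁅a,b⁆` modulo
`G₃`), then `⁅c,a⁆ ∈ G₄` and `⁅c,b⁆ ≡ c²` modulo `G₄` (in Mathlib's indexing
`G₃ = (⊤ : Subgroup G).lowerCentralSeries 2` and `G₄ = (⊤ : Subgroup G).lowerCentralSeries 3`). -/
theorem stmt_4 (G : Type*) [Group G] (a b c : G) (hc : c = ⁅a, b⁆)
    (h : a ^ 2 * c⁻¹ ∈ (⊤ : Subgroup G).lowerCentralSeries 2) :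
    ⁅c, a⁆ ∈ (⊤ : Subgroup G).lowerCentralSeries 3 ∧ ⁅c, b⁆ * (c ^ 2)⁻¹ ∈ (⊤ : Subgroup G).lowerCentralSeries 3 := by
  have hmem : ∀ x ∈ (⊤ : Subgroup G).lowerCentralSeries 2, ∀ y : G, ⁅x, y⁆ ∈ (⊤ : Subgroup G).lowerCentralSeries 3 := by
    intro x hx y
    have : ⁅x, y⁆ ∈ ⁅(⊤ : Subgroup G).lowerCentralSeries 2, (⊤ : Subgroup G)⁆ :=
      Subgroup.commutator_mem_commutator hx (Subgroup.mem_top y)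
    exact this
  have hd := h
  have h1 : ⁅c, a⁆ ∈ (⊤ : Subgroup G).lowerCentralSeries 3 := by
    have key : ⁅c, a⁆ = ⁅(a ^ 2 * c⁻¹)⁻¹, a⁆ := by group
    rw [key]
    exact hmem _ (inv_mem hd) a
  refine ⟨h1, ?_⟩
  have hnorm : ((⊤ : Subgroup G).lowerCentralSeries 3).Normal := Subgroup.lowerCentralSeries_normal _ 3
  have g1 : ⁅(a ^ 2 * c⁻¹)⁻¹, b⁆ ∈ (⊤ : Subgroup G).lowerCentralSeries 3 := hmem _ (inv_mem hd) b
  have g2 : ⁅a, c⁆ ∈ (⊤ : Subgroup G).lowerCentralSeries 3 := by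
    have : ⁅a, c⁆ = ⁅c, a⁆⁻¹ := by group
    rw [this]; exact inv_mem h1
  have g3 : ⁅(a ^ 2 * c⁻¹)⁻¹, c ^ 2⁆ ∈ (⊤ : Subgroup G).lowerCentralSeries 3 := hmem _ (inv_mem hd) _
  have key : ⁅c, b⁆ * (c ^ 2)⁻¹ =
      ((a ^ 2 * c⁻¹)⁻¹ * ⁅a, c⁆ * (a ^ 2 * c⁻¹)) * ⁅(a ^ 2 * c⁻¹)⁻¹, c ^ 2⁆ *
        (c ^ 2 * ⁅(a ^ 2 * c⁻¹)⁻¹, b⁆ * (c ^ 2)⁻¹) := by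
    subst hc; simp only [pow_two, commutatorElement_def]; group
  rw [key]
  exact mul_mem (mul_mem
    (by simpa only [inv_inv] using hnorm.conj_mem _ g2 (a ^ 2 * c⁻¹)⁻¹) g3)
    (hnorm.conj_mem _ g1 (c ^ 2))
end

section
/- Let G be a finite 2-group generated by elements a₁, a₂, a₃ satisfying a₁² ≡ [a₁,a₂], a₂² ≡ [a₂,a₃], and a₃² ≡ [a₁,a₃] modulo G₃, and suppose that x⁴ ∈ G'' for every x ∈ G'. Then G'' = G₄, the fourth term of the lower central series of G. -/
open scoped commutatorElement

private theorem gid_mul_right {Q : Type*} [Group Q] (x g h : Q) :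
    ⁅x, g * h⁆ = ⁅x, g⁆ * (g * ⁅x, h⁆ * g⁻¹) := by
  simp only [commutatorElement_def]; group

private theorem gid_mul_left {Q : Type*} [Group Q] (x y g : Q) :
    ⁅x * y, g⁆ = (x * ⁅y, g⁆ * x⁻¹) * ⁅x, g⁆ := by
  simp only [commutatorElement_def]; group

private theorem gid_inv_left {Q : Type*} [Group Q] (x g : Q) :
    ⁅x⁻¹, g⁆ = x⁻¹ * ⁅x, g⁆⁻¹ * x := by
  simp only [commutatorElement_def]; group

private theorem gid_inv_right {Q : Type*} [Group Q] (x g : Q) :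
    ⁅x, g⁻¹⁆ = g⁻¹ * ⁅x, g⁆⁻¹ * g := by
  simp only [commutatorElement_def]; group

private theorem gid_sq_left {Q : Type*} [Group Q] (g h : Q) :
    ⁅g ^ 2, h⁆ = ⁅⁅g, h⁆, g⁆⁻¹ * (⁅g, h⁆ * ⁅g, h⁆) := by
  simp only [commutatorElement_def]; group

private theorem gid_sq_right {Q : Type*} [Group Q] (x h : Q) :
    ⁅x, h ^ 2⁆ = ⁅x, h⁆ * (h * ⁅x, h⁆ * h⁻¹) := by
  rw [pow_two]; exact gid_mul_right x h h

private theorem gid_conj {Q : Type*} [Group Q] (w x : Q) :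
    w * x * w⁻¹ = x * ⁅x⁻¹, w⁆ := by
  simp only [commutatorElement_def]; group

private theorem conj_self {Q : Type*} [Group Q] {w x : Q} (h : x * w = w * x) :
    w * x * w⁻¹ = x := by
  rw [← h, mul_inv_cancel_right]

private theorem gconj_inv {Q : Type*} [Group Q] (w x : Q) :
    (w * x * w⁻¹)⁻¹ = w * x⁻¹ * w⁻¹ := by
  simp [mul_inv_rev, mul_assoc]

private theorem conj_self' {Q : Type*} [Group Q] {w x : Q} (h : x * w = w * x) :
    w⁻¹ * x * w = x := by
  rw [mul_assoc, h, inv_mul_cancel_left]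

private theorem lcs_map_eq {G H : Type*} [Group G] [Group H] (f : G →* H)
    (hf : Function.Surjective f) (n : ℕ) :
    ((⊤ : Subgroup G).lowerCentralSeries  n).map f = (⊤ : Subgroup H).lowerCentralSeries  n := by
  induction n with
  | zero => simpa using Subgroup.map_top_of_surjective f hf
  | succ n ih =>
      have h1 : (⊤ : Subgroup G).lowerCentralSeries  (n + 1) = ⁅(⊤ : Subgroup G).lowerCentralSeries  n, ⊤⁆ := rfl
      have h2 : (⊤ : Subgroup H).lowerCentralSeries  (n + 1) = ⁅(⊤ : Subgroup H).lowerCentralSeries  n, ⊤⁆ := rfl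
      rw [h1, h2, Subgroup.map_commutator, ih, Subgroup.map_top_of_surjective f hf]

private theorem aux_core {Q : Type*} [Group Q] (a b c : Q)
    (hgen : Subgroup.closure {a, b, c} = ⊤)
    (hbot : (⊤ : Subgroup Q).lowerCentralSeries  4 = ⊥)
    (hmet : ∀ x ∈ commutator Q, ∀ y ∈ commutator Q, x * y = y * x)
    (h4 : ∀ x ∈ commutator Q, x ^ 4 = 1)
    (e1 : a ^ 2 * ⁅a, b⁆⁻¹ ∈ (⊤ : Subgroup Q).lowerCentralSeries  2)
    (e2 : b ^ 2 * ⁅b, c⁆⁻¹ ∈ (⊤ : Subgroup Q).lowerCentralSeries  2)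
    (e3 : c ^ 2 * ⁅a, c⁆⁻¹ ∈ (⊤ : Subgroup Q).lowerCentralSeries  2) :
    (⊤ : Subgroup Q).lowerCentralSeries  3 = ⊥ := by
  have hs2 : (⊤ : Subgroup Q).lowerCentralSeries  2 = ⁅commutator Q, ⊤⁆ := rfl
  have hs3 : (⊤ : Subgroup Q).lowerCentralSeries  3 = ⁅(⊤ : Subgroup Q).lowerCentralSeries  2, ⊤⁆ := rfl
  have hs4 : (⊤ : Subgroup Q).lowerCentralSeries  4 = ⁅(⊤ : Subgroup Q).lowerCentralSeries  3, ⊤⁆ := rfl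
  have memC : ∀ g h : Q, ⁅g, h⁆ ∈ commutator Q := fun g h => by
    rw [commutator_def]
    exact Subgroup.commutator_mem_commutator (Subgroup.mem_top g) (Subgroup.mem_top h)
  have le21 : (⊤ : Subgroup Q).lowerCentralSeries  2 ≤ commutator Q := by
    have h := Subgroup.lowerCentralSeries_antitone (⊤ : Subgroup Q) (Nat.le_succ 1)
    exact h
  have memC3 : ∀ x : Q, x ∈ commutator Q → ∀ g : Q, ⁅x, g⁆ ∈ (⊤ : Subgroup Q).lowerCentralSeries  2 := by
    intro x hx g
    rw [hs2]
    exact Subgroup.commutator_mem_commutator hx (Subgroup.mem_top g)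
  have memC4 : ∀ x : Q, x ∈ (⊤ : Subgroup Q).lowerCentralSeries  2 → ∀ g : Q,
      ⁅x, g⁆ ∈ (⊤ : Subgroup Q).lowerCentralSeries  3 := by
    intro x hx g
    rw [hs3]
    exact Subgroup.commutator_mem_commutator hx (Subgroup.mem_top g)
  have comm4 : ∀ z ∈ (⊤ : Subgroup Q).lowerCentralSeries  3, ∀ g : Q, z * g = g * z := by
    intro z hz g
    have h : ⁅z, g⁆ ∈ (⊤ : Subgroup Q).lowerCentralSeries  4 := by
      rw [hs4]
      exact Subgroup.commutator_mem_commutator hz (Subgroup.mem_top g)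
    rw [hbot, Subgroup.mem_bot] at h
    exact commutatorElement_eq_one_iff_mul_comm.mp h
  have trivial4 : ∀ z ∈ (⊤ : Subgroup Q).lowerCentralSeries  3, ∀ g : Q, ⁅z, g⁆ = 1 := fun z hz g =>
    commutatorElement_eq_one_iff_mul_comm.mpr (comm4 z hz g)
  have ha2 : a ^ 2 ∈ commutator Q := by
    have h : a ^ 2 = a ^ 2 * ⁅a, b⁆⁻¹ * ⁅a, b⁆ := by group
    rw [h]; exact mul_mem (le21 e1) (memC a b)
  have hb2 : b ^ 2 ∈ commutator Q := by
    have h : b ^ 2 = b ^ 2 * ⁅b, c⁆⁻¹ * ⁅b, c⁆ := by group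
    rw [h]; exact mul_mem (le21 e2) (memC b c)
  have hc2 : c ^ 2 ∈ commutator Q := by
    have h : c ^ 2 = c ^ 2 * ⁅a, c⁆⁻¹ * ⁅a, c⁆ := by group
    rw [h]; exact mul_mem (le21 e3) (memC a c)
  have inv3 : ∀ t g : Q, t ∈ (⊤ : Subgroup Q).lowerCentralSeries  2 → ⁅t⁻¹, g⁆ = ⁅t, g⁆⁻¹ := by
    intro t g ht
    rw [gid_inv_left]
    have hcc : Commute ⁅t, g⁆ t := comm4 _ (memC4 t ht g) t
    exact conj_self' hcc.inv_left.eq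
  have inv2 : ∀ x g : Q, x ∈ commutator Q → ⁅x⁻¹, g⁆ = ⁅x, g⁆⁻¹ := by
    intro x g hx
    rw [gid_inv_left]
    have hcc : Commute ⁅x, g⁆ x := hmet _ (le21 (memC3 x hx g)) x hx
    exact conj_self' hcc.inv_left.eq
  have mulC3 : ∀ x t g : Q, x ∈ commutator Q → t ∈ (⊤ : Subgroup Q).lowerCentralSeries  2 →
      ⁅t * x, g⁆ = ⁅x, g⁆ * ⁅t, g⁆ := by
    intro x t g hx ht
    rw [gid_mul_left]
    congr 1
    exact conj_self (hmet _ (le21 (memC3 x hx g)) t (le21 ht))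
  have mulCent : ∀ x z g : Q, z ∈ (⊤ : Subgroup Q).lowerCentralSeries  3 → ⁅x * z, g⁆ = ⁅x, g⁆ := by
    intro x z g hz
    rw [gid_mul_left, trivial4 z hz g]
    simp
  have sqC : ∀ x g : Q, x ∈ commutator Q → ⁅x ^ 2, g⁆ = ⁅x, g⁆ * ⁅x, g⁆ := by
    intro x g hx
    rw [gid_sq_left]
    have h1 : ⁅⁅x, g⁆, x⁆ = 1 :=
      commutatorElement_eq_one_iff_mul_comm.mpr (hmet _ (le21 (memC3 x hx g)) x hx)
    rw [h1]; simp
  have L1 : ∀ x k : Q, x ∈ commutator Q → k ^ 2 ∈ commutator Q →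
      ⁅⁅x, k⁆, k⁆ = ⁅x, k⁆ * ⁅x, k⁆ := by
    intro x k hx hk
    have h0 : ⁅x, k ^ 2⁆ = 1 := commutatorElement_eq_one_iff_mul_comm.mpr (hmet x hx _ hk)
    have h1 := gid_sq_right x k
    rw [h0] at h1
    have h2 : k * ⁅x, k⁆ * k⁻¹ = ⁅x, k⁆⁻¹ := (inv_eq_of_mul_eq_one_right h1.symm).symm
    have h3 : k * ⁅x, k⁆⁻¹ * k⁻¹ = ⁅x, k⁆ := by
      rw [← gconj_inv, h2, inv_inv]
    calc ⁅⁅x, k⁆, k⁆ = ⁅x, k⁆ * (k * ⁅x, k⁆⁻¹ * k⁻¹) := by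
          simp only [commutatorElement_def]; group
      _ = ⁅x, k⁆ * ⁅x, k⁆ := by rw [h3]
  have W3 : ∀ g u h : Q, g ^ 2 * u⁻¹ ∈ (⊤ : Subgroup Q).lowerCentralSeries  2 → u ∈ commutator Q →
      ∃ z ∈ (⊤ : Subgroup Q).lowerCentralSeries  3, ⁅u, h⁆ = ⁅g ^ 2, h⁆ * z := by
    intro g u h ht hu
    have hg2 : g ^ 2 ∈ commutator Q := by
      have hrw : g ^ 2 = g ^ 2 * u⁻¹ * u := by group
      rw [hrw]; exact mul_mem (le21 ht) hu
    have hurw : u = (g ^ 2 * u⁻¹)⁻¹ * g ^ 2 := by group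
    refine ⟨⁅g ^ 2 * u⁻¹, h⁆⁻¹, inv_mem (memC4 _ ht h), ?_⟩
    conv_lhs => rw [hurw]
    rw [mulC3 _ _ _ hg2 (inv_mem ht), inv3 _ _ ht]
  have W4 : ∀ g u h k : Q, g ^ 2 * u⁻¹ ∈ (⊤ : Subgroup Q).lowerCentralSeries  2 → u ∈ commutator Q →
      k ^ 2 ∈ commutator Q →
      ⁅⁅u, h⁆, k⁆ = ⁅⁅⁅g, h⁆, k⁆, k⁆ * ⁅⁅⁅g, h⁆, g⁆, k⁆⁻¹ := by
    intro g u h k ht hu hk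
    obtain ⟨z, hz, hw⟩ := W3 g u h ht hu
    rw [hw, mulCent _ _ _ hz, gid_sq_left,
      mulC3 _ _ _ (mul_mem (memC g h) (memC g h)) (inv_mem (memC3 _ (memC g h) g)),
      ← pow_two, sqC _ _ (memC g h), inv3 _ _ (memC3 _ (memC g h) g),
      ← L1 _ _ (memC g h) hk]
  have hN : ∀ g h : Q, g ^ 2 ∈ commutator Q → h ^ 2 ∈ commutator Q →
      ⁅⁅⁅g, h⁆, h⁆, h⁆ * ⁅⁅⁅g, h⁆, g⁆, g⁆ = ⁅⁅⁅g, h⁆, g⁆, h⁆ := by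
    intro g h hg2 hh2
    have hdC : ⁅g, h⁆ ∈ commutator Q := memC g h
    have h0 : ⁅g ^ 2, h ^ 2⁆ = 1 := commutatorElement_eq_one_iff_mul_comm.mpr (hmet _ hg2 _ hh2)
    have h1 := gid_sq_right (g ^ 2) h
    rw [h0] at h1
    have h2 : h * ⁅g ^ 2, h⁆ * h⁻¹ = ⁅g ^ 2, h⁆⁻¹ := (inv_eq_of_mul_eq_one_right h1.symm).symm
    have h3 : ⁅⁅g ^ 2, h⁆, h⁆ = ⁅g ^ 2, h⁆ * ⁅g ^ 2, h⁆ := by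
      have hh3 : h * ⁅g ^ 2, h⁆⁻¹ * h⁻¹ = ⁅g ^ 2, h⁆ := by
        rw [← gconj_inv, h2, inv_inv]
      calc ⁅⁅g ^ 2, h⁆, h⁆ = ⁅g ^ 2, h⁆ * (h * ⁅g ^ 2, h⁆⁻¹ * h⁻¹) := by
            simp only [commutatorElement_def]; group
        _ = ⁅g ^ 2, h⁆ * ⁅g ^ 2, h⁆ := by rw [hh3]
    have h4' : ⁅⁅g ^ 2, h⁆, h⁆ = ⁅⁅⁅g, h⁆, h⁆, h⁆ * ⁅⁅⁅g, h⁆, g⁆, h⁆⁻¹ := by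
      rw [gid_sq_left, mulC3 _ _ _ (mul_mem hdC hdC) (inv_mem (memC3 _ hdC g)),
        ← pow_two, sqC _ _ hdC, inv3 _ _ (memC3 _ hdC g), ← L1 _ _ hdC hh2]
    have h5 : ⁅g ^ 2, h⁆ * ⁅g ^ 2, h⁆ = ⁅⁅⁅g, h⁆, g⁆, g⁆⁻¹ := by
      rw [gid_sq_left]
      have hX : ⁅⁅g, h⁆, g⁆ ∈ commutator Q := le21 (memC3 _ hdC g)
      have hcomm : (⁅g, h⁆ * ⁅g, h⁆) * ⁅⁅g, h⁆, g⁆⁻¹ = ⁅⁅g, h⁆, g⁆⁻¹ * (⁅g, h⁆ * ⁅g, h⁆) :=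
        (Commute.inv_right (hmet _ (mul_mem hdC hdC) _ hX)).eq
      calc (⁅⁅g, h⁆, g⁆⁻¹ * (⁅g, h⁆ * ⁅g, h⁆)) * (⁅⁅g, h⁆, g⁆⁻¹ * (⁅g, h⁆ * ⁅g, h⁆))
          = ⁅⁅g, h⁆, g⁆⁻¹ * (((⁅g, h⁆ * ⁅g, h⁆) * ⁅⁅g, h⁆, g⁆⁻¹) * (⁅g, h⁆ * ⁅g, h⁆)) := by
            group
        _ = ⁅⁅g, h⁆, g⁆⁻¹ * ((⁅⁅g, h⁆, g⁆⁻¹ * (⁅g, h⁆ * ⁅g, h⁆)) * (⁅g, h⁆ * ⁅g, h⁆)) := by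
            rw [hcomm]
        _ = (⁅⁅g, h⁆, g⁆⁻¹ * ⁅⁅g, h⁆, g⁆⁻¹) * (⁅g, h⁆ * ⁅g, h⁆ * ⁅g, h⁆ * ⁅g, h⁆) := by
            group
        _ = (⁅⁅g, h⁆, g⁆⁻¹ * ⁅⁅g, h⁆, g⁆⁻¹) * ⁅g, h⁆ ^ 4 := by
            rw [show ⁅g, h⁆ ^ 4 = ⁅g, h⁆ * ⁅g, h⁆ * ⁅g, h⁆ * ⁅g, h⁆ by
              rw [pow_succ, pow_succ, pow_two]]
        _ = ⁅⁅g, h⁆, g⁆⁻¹ * ⁅⁅g, h⁆, g⁆⁻¹ := by rw [h4 _ hdC, mul_one]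
        _ = (⁅⁅g, h⁆, g⁆ * ⁅⁅g, h⁆, g⁆)⁻¹ := by rw [mul_inv_rev]
        _ = ⁅⁅⁅g, h⁆, g⁆, g⁆⁻¹ := by rw [← L1 _ _ hdC hg2]
    rw [h4', h5] at h3
    have hBE : ⁅⁅⁅g, h⁆, g⁆, h⁆ * ⁅⁅⁅g, h⁆, g⁆, g⁆ = ⁅⁅⁅g, h⁆, g⁆, g⁆ * ⁅⁅⁅g, h⁆, g⁆, h⁆ :=
      comm4 _ (memC4 _ (memC3 _ hdC g) h) _
    have hA : ⁅⁅⁅g, h⁆, h⁆, h⁆ = ⁅⁅⁅g, h⁆, g⁆, g⁆⁻¹ * ⁅⁅⁅g, h⁆, g⁆, h⁆ := by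
      rw [← h3]; group
    rw [hA, mul_assoc, hBE, inv_mul_cancel_left]
  have Winv : ∀ x k m : Q, x ∈ commutator Q → ⁅⁅x⁻¹, k⁆, m⁆ = ⁅⁅x, k⁆, m⁆⁻¹ := by
    intro x k m hx
    rw [inv2 x k hx, inv3 _ m (memC3 x hx k)]
  have hPa : ∀ k : Q, k ^ 2 ∈ commutator Q → ⁅⁅⁅a, b⁆, a⁆, k⁆ = 1 := by
    intro k hk
    have h := W4 a ⁅a, b⁆ a k e1 (memC a b) hk
    simpa using h
  have hPb : ∀ k : Q, k ^ 2 ∈ commutator Q → ⁅⁅⁅a, b⁆, b⁆, k⁆ = ⁅⁅⁅a, b⁆, k⁆, k⁆ := by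
    intro k hk
    have h := W4 a ⁅a, b⁆ b k e1 (memC a b) hk
    rw [hPa k hk] at h
    simpa using h
  have hQb : ∀ k : Q, k ^ 2 ∈ commutator Q → ⁅⁅⁅b, c⁆, b⁆, k⁆ = 1 := by
    intro k hk
    have h := W4 b ⁅b, c⁆ b k e2 (memC b c) hk
    simpa using h
  have hQa : ∀ k : Q, k ^ 2 ∈ commutator Q → ⁅⁅⁅b, c⁆, a⁆, k⁆ = 1 := by
    intro k hk
    have h := W4 b ⁅b, c⁆ a k e2 (memC b c) hk
    rw [← commutatorElement_inv a b, Winv ⁅a, b⁆ k k (memC a b),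
      Winv ⁅a, b⁆ b k (memC a b), hPb k hk] at h
    simpa only [inv_inv, inv_mul_cancel] using h
  have hQc : ∀ k : Q, k ^ 2 ∈ commutator Q → ⁅⁅⁅b, c⁆, c⁆, k⁆ = ⁅⁅⁅b, c⁆, k⁆, k⁆ := by
    intro k hk
    have h := W4 b ⁅b, c⁆ c k e2 (memC b c) hk
    rw [hQb k hk] at h
    simpa using h
  have hRc : ∀ k : Q, k ^ 2 ∈ commutator Q → ⁅⁅⁅a, c⁆, c⁆, k⁆ = 1 := by
    intro k hk
    have h := W4 c ⁅a, c⁆ c k e3 (memC a c) hk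
    simpa using h
  have hRa : ∀ k : Q, k ^ 2 ∈ commutator Q → ⁅⁅⁅a, c⁆, a⁆, k⁆ = ⁅⁅⁅a, c⁆, k⁆, k⁆⁻¹ := by
    intro k hk
    have h := W4 c ⁅a, c⁆ a k e3 (memC a c) hk
    rw [← commutatorElement_inv a c, Winv ⁅a, c⁆ k k (memC a c),
      Winv ⁅a, c⁆ c k (memC a c), hRc k hk] at h
    simpa using h
  have hRb : ∀ k : Q, k ^ 2 ∈ commutator Q → ⁅⁅⁅a, c⁆, b⁆, k⁆ = 1 := by
    intro k hk
    have h := W4 c ⁅a, c⁆ b k e3 (memC a c) hk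
    rw [← commutatorElement_inv b c, Winv ⁅b, c⁆ k k (memC b c),
      Winv ⁅b, c⁆ c k (memC b c), hQc k hk] at h
    simpa only [inv_inv, inv_mul_cancel] using h
  have hPbb : ⁅⁅⁅a, b⁆, b⁆, b⁆ = 1 := by
    have h := hN a b ha2 hb2
    rw [hPa a ha2, hPa b hb2] at h
    simpa using h
  have hQcc : ⁅⁅⁅b, c⁆, c⁆, c⁆ = 1 := by
    have h := hN b c hb2 hc2
    rw [hQb b hb2, hQb c hc2] at h
    simpa using h
  have hRaa : ⁅⁅⁅a, c⁆, a⁆, a⁆ = 1 := by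
    have h := hN a c ha2 hc2
    rw [hRa c hc2, hRc c hc2] at h
    simpa using h
  have hsq : ∀ k ∈ ({a, b, c} : Set Q), k ^ 2 ∈ commutator Q := by
    intro k hk
    simp only [Set.mem_insert_iff, Set.mem_singleton_iff] at hk
    rcases hk with h | h | h <;> rw [h]
    exacts [ha2, hb2, hc2]
  have hRkk : ∀ k ∈ ({a, b, c} : Set Q), ⁅⁅⁅a, c⁆, k⁆, k⁆ = 1 := by
    intro k hk
    simp only [Set.mem_insert_iff, Set.mem_singleton_iff] at hk
    rcases hk with h | h | h <;> rw [h]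
    exacts [hRaa, hRb b hb2, hRc c hc2]
  have hQkk : ∀ k ∈ ({a, b, c} : Set Q), ⁅⁅⁅b, c⁆, k⁆, k⁆ = 1 := by
    intro k hk
    simp only [Set.mem_insert_iff, Set.mem_singleton_iff] at hk
    rcases hk with h | h | h <;> rw [h]
    exacts [hQa a ha2, hQb b hb2, hQcc]
  have hPc : ∀ k : Q, k ^ 2 ∈ commutator Q →
      ⁅⁅⁅a, b⁆, c⁆, k⁆ = ⁅⁅⁅a, c⁆, k⁆, k⁆ * ⁅⁅⁅a, c⁆, k⁆, k⁆ := by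
    intro k hk
    have h := W4 a ⁅a, b⁆ c k e1 (memC a b) hk
    rw [hRa k hk] at h
    simpa using h
  have hPkk : ∀ k ∈ ({a, b, c} : Set Q), ⁅⁅⁅a, b⁆, k⁆, k⁆ = 1 := by
    intro k hk
    simp only [Set.mem_insert_iff, Set.mem_singleton_iff] at hk
    rcases hk with h | h | h <;> rw [h]
    · exact hPa a ha2
    · exact hPbb
    · rw [hPc c hc2, hRc c hc2]; simp
  have core27 : ∀ u ∈ ({⁅a, b⁆, ⁅b, c⁆, ⁅a, c⁆} : Set Q), ∀ k ∈ ({a, b, c} : Set Q),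
      ∀ m ∈ ({a, b, c} : Set Q), ⁅⁅u, k⁆, m⁆ = 1 := by
    intro u hu k hk m hm
    have hm2 := hsq m hm
    simp only [Set.mem_insert_iff, Set.mem_singleton_iff] at hu hk
    rcases hu with hu | hu | hu <;> rw [hu] <;> (rcases hk with h | h | h <;> rw [h])
    · exact hPa m hm2
    · rw [hPb m hm2]; exact hPkk m hm
    · rw [hPc m hm2, hRkk m hm]; simp
    · exact hQa m hm2
    · exact hQb m hm2
    · rw [hQc m hm2]; exact hQkk m hm
    · rw [hRa m hm2, hRkk m hm]; simp
    · exact hRb m hm2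
    · exact hRc m hm2
  -- every weight-3 commutator of a γ₂ element with a generator centralizes the generators
  have hcent_le : (⊤ : Subgroup Q).lowerCentralSeries  3 ≤ Subgroup.centralizer ({a, b, c} : Set Q) := by
    intro z hz
    exact Subgroup.mem_centralizer_iff.mpr fun g _ => (comm4 z hz g).symm
  have hFmain : ∀ k ∈ ({a, b, c} : Set Q), ∀ u ∈ commutator Q,
      ⁅u, k⁆ ∈ Subgroup.centralizer ({a, b, c} : Set Q) := by
    intro k hk
    set F : Subgroup Q :=
      { carrier := {u : Q | u ∈ commutator Q ∧
          ⁅u, k⁆ ∈ Subgroup.centralizer ({a, b, c} : Set Q)}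
        one_mem' := ⟨one_mem _, by
          rw [commutatorElement_one_left]; exact one_mem _⟩
        mul_mem' := by
          rintro u v ⟨hu1, hu2⟩ ⟨hv1, hv2⟩
          refine ⟨mul_mem hu1 hv1, ?_⟩
          rw [gid_mul_left, conj_self (hmet _ (le21 (memC3 v hv1 k)) u hu1)]
          exact mul_mem hv2 hu2
        inv_mem' := by
          rintro u ⟨hu1, hu2⟩
          refine ⟨inv_mem hu1, ?_⟩
          rw [inv2 u k hu1]
          exact inv_mem hu2 } with hFdef
    have hC3F : ∀ t ∈ (⊤ : Subgroup Q).lowerCentralSeries  2, t ∈ F := fun t ht =>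
      ⟨le21 ht, hcent_le (memC4 t ht k)⟩
    have hFconj : ∀ w x : Q, x ∈ F → w * x * w⁻¹ ∈ F := by
      intro w x hx
      rw [gid_conj]
      exact mul_mem hx (hC3F _ (memC3 _ (inv_mem hx.1) w))
    have hbase : ∀ u ∈ ({⁅a, b⁆, ⁅b, c⁆, ⁅a, c⁆} : Set Q), u ∈ F := by
      intro u hu
      have huC : u ∈ commutator Q := by
        simp only [Set.mem_insert_iff, Set.mem_singleton_iff] at hu
        rcases hu with h | h | h <;> rw [h]
        exacts [memC a b, memC b c, memC a c]
      exact ⟨huC, Subgroup.mem_centralizer_iff.mpr fun m hm =>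
        (commutatorElement_eq_one_iff_mul_comm.mp (core27 u hu k hk m hm)).symm⟩
    have hstage1 : ∀ g ∈ ({a, b, c} : Set Q), ∀ h : Q, ⁅g, h⁆ ∈ F := by
      intro g hg h
      set S : Subgroup Q :=
        { carrier := {h : Q | ⁅g, h⁆ ∈ F}
          one_mem' := by
            simp only [Set.mem_setOf_eq, commutatorElement_one_right]
            exact one_mem F
          mul_mem' := by
            intro h1 h2 hh1 hh2
            simp only [Set.mem_setOf_eq] at *
            rw [gid_mul_right]
            exact mul_mem hh1 (hFconj h1 _ hh2)
          inv_mem' := by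
            intro h1 hh1
            simp only [Set.mem_setOf_eq] at *
            rw [gid_inv_right]
            have h' := hFconj h1⁻¹ _ (inv_mem hh1)
            rw [inv_inv] at h'
            exact h' } with hSdef
      have hsub : ({a, b, c} : Set Q) ⊆ ↑S := by
        intro m hm
        show ⁅g, m⁆ ∈ F
        simp only [Set.mem_insert_iff, Set.mem_singleton_iff] at hg hm
        rcases hg with hg | hg | hg <;> rcases hm with hm | hm | hm <;> rw [hg, hm]
        · rw [commutatorElement_self]; exact one_mem F
        · exact hbase ⁅a, b⁆ (by simp)
        · exact hbase ⁅a, c⁆ (by simp)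
        · rw [← commutatorElement_inv a b]; exact inv_mem (hbase ⁅a, b⁆ (by simp))
        · rw [commutatorElement_self]; exact one_mem F
        · exact hbase ⁅b, c⁆ (by simp)
        · rw [← commutatorElement_inv a c]; exact inv_mem (hbase ⁅a, c⁆ (by simp))
        · rw [← commutatorElement_inv b c]; exact inv_mem (hbase ⁅b, c⁆ (by simp))
        · rw [commutatorElement_self]; exact one_mem F
      have hle : Subgroup.closure ({a, b, c} : Set Q) ≤ S := (Subgroup.closure_le S).mpr hsub
      exact hle (hgen ▸ Subgroup.mem_top h)
    have hstage2 : ∀ g h : Q, ⁅g, h⁆ ∈ F := by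
      intro g h
      set T : Subgroup Q :=
        { carrier := {g : Q | ⁅g, h⁆ ∈ F}
          one_mem' := by
            simp only [Set.mem_setOf_eq, commutatorElement_one_left]
            exact one_mem F
          mul_mem' := by
            intro g1 g2 hg1 hg2
            simp only [Set.mem_setOf_eq] at *
            rw [gid_mul_left]
            exact mul_mem (hFconj g1 _ hg2) hg1
          inv_mem' := by
            intro g1 hg1
            simp only [Set.mem_setOf_eq] at *
            rw [gid_inv_left]
            have h' := hFconj g1⁻¹ _ (inv_mem hg1)
            rw [inv_inv] at h'
            exact h' } with hTdef
      have hle : Subgroup.closure ({a, b, c} : Set Q) ≤ T :=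
        (Subgroup.closure_le T).mpr fun m hm => hstage1 m hm h
      exact hle (hgen ▸ Subgroup.mem_top g)
    intro u hu
    have hCF : commutator Q ≤ F := by
      rw [commutator_def]
      exact Subgroup.commutator_le.mpr fun g _ h _ => hstage2 g h
    exact (hCF hu).2
  have hC3Z : (⊤ : Subgroup Q).lowerCentralSeries  2 ≤ Subgroup.centralizer ({a, b, c} : Set Q) := by
    rw [hs2]
    refine Subgroup.commutator_le.mpr fun u hu g _ => ?_
    set D : Subgroup Q :=
      { carrier := {g : Q | ⁅u, g⁆ ∈ Subgroup.centralizer ({a, b, c} : Set Q)}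
        one_mem' := by
          simp only [Set.mem_setOf_eq, commutatorElement_one_right]
          exact one_mem _
        mul_mem' := by
          intro g1 g2 hg1 hg2
          simp only [Set.mem_setOf_eq] at *
          rw [gid_mul_right, gid_conj]
          exact mul_mem hg1 (mul_mem hg2
            (hcent_le (memC4 _ (inv_mem (memC3 u hu g2)) g1)))
        inv_mem' := by
          intro g1 hg1
          simp only [Set.mem_setOf_eq] at *
          rw [gid_inv_right]
          have h2 := gid_conj g1⁻¹ ⁅u, g1⁆⁻¹
          simp only [inv_inv] at h2
          rw [h2]
          exact mul_mem (inv_mem hg1)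
            (hcent_le (memC4 _ (memC3 u hu g1) g1⁻¹)) } with hDdef
    have hle : Subgroup.closure ({a, b, c} : Set Q) ≤ D :=
      (Subgroup.closure_le D).mpr fun m hm => hFmain m hm u hu
    exact hle (hgen ▸ Subgroup.mem_top g)
  have hfinal : (⊤ : Subgroup Q).lowerCentralSeries  3 ≤ (⊥ : Subgroup Q) := by
    rw [hs3]
    refine Subgroup.commutator_le.mpr fun x hx g _ => ?_
    rw [Subgroup.mem_bot]
    have hgle : Subgroup.closure ({a, b, c} : Set Q) ≤
        Subgroup.centralizer ({x} : Set Q) := by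
      refine (Subgroup.closure_le _).mpr fun m hm => ?_
      refine Subgroup.mem_centralizer_iff.mpr fun y hy => ?_
      rw [Set.mem_singleton_iff] at hy
      subst hy
      exact (Subgroup.mem_centralizer_iff.mp (hC3Z hx) m hm).symm
    have hgc := hgle (hgen ▸ Subgroup.mem_top g)
    have hxg := Subgroup.mem_centralizer_iff.mp hgc x (Set.mem_singleton x)
    exact commutatorElement_eq_one_iff_mul_comm.mpr hxg
  exact le_bot_iff.mp hfinal

/-- Let `G` be a finite 2-group generated by `a₁, a₂, a₃` with `a₁² ≡ ⁅a₁,a₂⁆`,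
`a₂² ≡ ⁅a₂,a₃⁆`, `a₃² ≡ ⁅a₁,a₃⁆` modulo `G₃`, and suppose `x⁴ ∈ G''` for every `x ∈ G'`.
Then `G'' = G₄`, the fourth term of the lower central series (in Mathlib's indexing
`G₄ = lowerCentralSeries G 3`). -/
theorem stmt_6 (G : Type*) [Group G] [Finite G] (hG : IsPGroup 2 G)
    (a₁ a₂ a₃ : G) (hgen : Subgroup.closure {a₁, a₂, a₃} = ⊤)
    (h1 : a₁ ^ 2 * ⁅a₁, a₂⁆⁻¹ ∈ (⊤ : Subgroup G).lowerCentralSeries  2)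
    (h2 : a₂ ^ 2 * ⁅a₂, a₃⁆⁻¹ ∈ (⊤ : Subgroup G).lowerCentralSeries  2)
    (h3 : a₃ ^ 2 * ⁅a₁, a₃⁆⁻¹ ∈ (⊤ : Subgroup G).lowerCentralSeries  2)
    (h8 : ∀ x ∈ commutator G, x ^ 4 ∈ ⁅commutator G, commutator G⁆) :
    ⁅commutator G, commutator G⁆ = (⊤ : Subgroup G).lowerCentralSeries  3 := by
  haveI : Fact (Nat.Prime 2) := ⟨Nat.prime_two⟩
  haveI hGnil : Group.IsNilpotent G := hG.isNilpotent
  -- Easy inclusion: G'' ≤ γ₄ (a group of class ≤ 3 is metabelian).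
  have easy : ⁅commutator G, commutator G⁆ ≤ (⊤ : Subgroup G).lowerCentralSeries  3 := by
    let π := QuotientGroup.mk' ((⊤ : Subgroup G).lowerCentralSeries  3)
    have hsur : Function.Surjective π := QuotientGroup.mk'_surjective _
    have hker : π.ker = (⊤ : Subgroup G).lowerCentralSeries  3 := QuotientGroup.ker_mk' _
    have hc3 : (⊤ : Subgroup (G ⧸ (⊤ : Subgroup G).lowerCentralSeries  3)).lowerCentralSeries  3 = ⊥ := by
      rw [← lcs_map_eq π hsur 3]
      exact (Subgroup.map_eq_bot_iff _).mpr (le_of_eq hker.symm)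
    have hmapC : Subgroup.map π (commutator G) =
        commutator (G ⧸ (⊤ : Subgroup G).lowerCentralSeries  3) := by
      rw [commutator_def, commutator_def, Subgroup.map_commutator,
        Subgroup.map_top_of_surjective π hsur]
    have cent : ∀ z ∈ (⊤ : Subgroup (G ⧸ (⊤ : Subgroup G).lowerCentralSeries  3)).lowerCentralSeries  2,
        ∀ g : G ⧸ (⊤ : Subgroup G).lowerCentralSeries  3, z * g = g * z := by
      intro z hz g
      have hs : (⊤ : Subgroup (G ⧸ (⊤ : Subgroup G).lowerCentralSeries  3)).lowerCentralSeries  3 =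
          ⁅(⊤ : Subgroup (G ⧸ (⊤ : Subgroup G).lowerCentralSeries  3)).lowerCentralSeries  2, ⊤⁆ := rfl
      have h : ⁅z, g⁆ ∈ (⊤ : Subgroup (G ⧸ (⊤ : Subgroup G).lowerCentralSeries  3)).lowerCentralSeries  3 := by
        rw [hs]; exact Subgroup.commutator_mem_commutator hz (Subgroup.mem_top g)
      rw [hc3, Subgroup.mem_bot] at h
      exact commutatorElement_eq_one_iff_mul_comm.mp h
    have memK : ∀ x : G ⧸ (⊤ : Subgroup G).lowerCentralSeries  3,
        x ∈ commutator (G ⧸ (⊤ : Subgroup G).lowerCentralSeries  3) →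
        ∀ g : G ⧸ (⊤ : Subgroup G).lowerCentralSeries  3,
        ⁅x, g⁆ ∈ (⊤ : Subgroup (G ⧸ (⊤ : Subgroup G).lowerCentralSeries  3)).lowerCentralSeries  2 := by
      intro x hx g
      have hs : (⊤ : Subgroup (G ⧸ (⊤ : Subgroup G).lowerCentralSeries  3)).lowerCentralSeries  2 =
          ⁅commutator (G ⧸ (⊤ : Subgroup G).lowerCentralSeries  3), ⊤⁆ := rfl
      rw [hs]; exact Subgroup.commutator_mem_commutator hx (Subgroup.mem_top g)
    have habel : ∀ x ∈ commutator (G ⧸ (⊤ : Subgroup G).lowerCentralSeries  3),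
        ∀ y ∈ commutator (G ⧸ (⊤ : Subgroup G).lowerCentralSeries  3), ⁅x, y⁆ = 1 := by
      intro x hx y hy
      let φ : (G ⧸ (⊤ : Subgroup G).lowerCentralSeries  3) →* (G ⧸ (⊤ : Subgroup G).lowerCentralSeries  3) :=
        { toFun := fun g => ⁅x, g⁆
          map_one' := commutatorElement_one_right x
          map_mul' := fun g h => by
            show ⁅x, g * h⁆ = ⁅x, g⁆ * ⁅x, h⁆
            rw [gid_mul_right x g h, conj_self (cent _ (memK x hx h) g)] }
      have hφcomm : ∀ g h : G ⧸ (⊤ : Subgroup G).lowerCentralSeries  3, φ ⁅g, h⁆ = 1 := by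
        intro g h
        rw [map_commutatorElement]
        exact commutatorElement_eq_one_iff_mul_comm.mpr (cent _ (memK x hx g) (φ h))
      have hker2 : commutator (G ⧸ (⊤ : Subgroup G).lowerCentralSeries  3) ≤ φ.ker := by
        rw [commutator_def]
        exact Subgroup.commutator_le.mpr fun g _ h _ => MonoidHom.mem_ker.mpr (hφcomm g h)
      exact MonoidHom.mem_ker.mp (hker2 hy)
    have hbot2 : Subgroup.map π ⁅commutator G, commutator G⁆ = ⊥ := by
      rw [Subgroup.map_commutator, hmapC]
      apply le_bot_iff.mp
      exact Subgroup.commutator_le.mpr fun x hx y hy =>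
        Subgroup.mem_bot.mpr (habel x hx y hy)
    have h := (Subgroup.map_eq_bot_iff _).mp hbot2
    rwa [hker] at h
  -- Hard inclusion: γ₄ ≤ G''.
  haveI : (⁅commutator G, commutator G⁆ ⊔ (⊤ : Subgroup G).lowerCentralSeries  4).Normal :=
    Subgroup.sup_normal _ _
  have hard : (⊤ : Subgroup G).lowerCentralSeries  3 ≤ ⁅commutator G, commutator G⁆ := by
    let π := QuotientGroup.mk' (⁅commutator G, commutator G⁆ ⊔ (⊤ : Subgroup G).lowerCentralSeries  4)
    have hsur : Function.Surjective π := QuotientGroup.mk'_surjective _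
    have hker : π.ker = ⁅commutator G, commutator G⁆ ⊔ (⊤ : Subgroup G).lowerCentralSeries  4 :=
      QuotientGroup.ker_mk' _
    have hmapC : Subgroup.map π (commutator G) =
        commutator (G ⧸ (⁅commutator G, commutator G⁆ ⊔ (⊤ : Subgroup G).lowerCentralSeries  4)) := by
      rw [commutator_def (G ⧸ (⁅commutator G, commutator G⁆ ⊔ (⊤ : Subgroup G).lowerCentralSeries  4)),
        ← Subgroup.map_top_of_surjective π hsur, ← Subgroup.map_commutator]
      rfl
    have hgenQ : Subgroup.closure {π a₁, π a₂, π a₃} = ⊤ := by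
      have h := congrArg (Subgroup.map π) hgen
      rw [MonoidHom.map_closure, Subgroup.map_top_of_surjective π hsur] at h
      rw [← h]
      congr 1
      simp [Set.image_insert_eq]; rfl
    have hbotQ : (⊤ : Subgroup (G ⧸ (⁅commutator G, commutator G⁆ ⊔ (⊤ : Subgroup G).lowerCentralSeries  4))).lowerCentralSeries
         4 = ⊥ := by
      rw [← lcs_map_eq π hsur 4]
      refine (Subgroup.map_eq_bot_iff _).mpr ?_
      rw [hker]
      exact le_sup_right
    have hmetQ : ∀ x ∈ commutator (G ⧸ (⁅commutator G, commutator G⁆ ⊔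
        (⊤ : Subgroup G).lowerCentralSeries  4)), ∀ y ∈ commutator (G ⧸ (⁅commutator G, commutator G⁆ ⊔
        (⊤ : Subgroup G).lowerCentralSeries  4)), x * y = y * x := by
      intro x hx y hy
      rw [← hmapC] at hx hy
      obtain ⟨x0, hx0, rfl⟩ := hx
      obtain ⟨y0, hy0, rfl⟩ := hy
      have hmem : ⁅x0, y0⁆ ∈ π.ker := by
        rw [hker]
        exact Subgroup.mem_sup_left (Subgroup.commutator_mem_commutator hx0 hy0)
      have h2 : ⁅π x0, π y0⁆ = 1 := by
        rw [← map_commutatorElement]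
        exact MonoidHom.mem_ker.mp hmem
      exact commutatorElement_eq_one_iff_mul_comm.mp h2
    have h4Q : ∀ x ∈ commutator (G ⧸ (⁅commutator G, commutator G⁆ ⊔
        (⊤ : Subgroup G).lowerCentralSeries  4)), x ^ 4 = 1 := by
      intro x hx
      rw [← hmapC] at hx
      obtain ⟨x0, hx0, rfl⟩ := hx
      have hmem : x0 ^ 4 ∈ π.ker := by
        rw [hker]
        exact Subgroup.mem_sup_left (h8 x0 hx0)
      calc (π x0) ^ 4 = π (x0 ^ 4) := (map_pow π x0 4).symm
        _ = 1 := MonoidHom.mem_ker.mp hmem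
    have he1 : (π a₁) ^ 2 * ⁅π a₁, π a₂⁆⁻¹ ∈ (⊤ : Subgroup (G ⧸ (⁅commutator G, commutator G⁆ ⊔ (⊤ : Subgroup G).lowerCentralSeries  4))).lowerCentralSeries
         2 := by
      rw [← lcs_map_eq π hsur 2, Subgroup.mem_map]
      refine ⟨a₁ ^ 2 * ⁅a₁, a₂⁆⁻¹, h1, ?_⟩
      rw [map_mul, map_pow, map_inv, map_commutatorElement]
    have he2 : (π a₂) ^ 2 * ⁅π a₂, π a₃⁆⁻¹ ∈ (⊤ : Subgroup (G ⧸ (⁅commutator G, commutator G⁆ ⊔ (⊤ : Subgroup G).lowerCentralSeries  4))).lowerCentralSeries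
         2 := by
      rw [← lcs_map_eq π hsur 2, Subgroup.mem_map]
      refine ⟨a₂ ^ 2 * ⁅a₂, a₃⁆⁻¹, h2, ?_⟩
      rw [map_mul, map_pow, map_inv, map_commutatorElement]
    have he3 : (π a₃) ^ 2 * ⁅π a₁, π a₃⁆⁻¹ ∈ (⊤ : Subgroup (G ⧸ (⁅commutator G, commutator G⁆ ⊔ (⊤ : Subgroup G).lowerCentralSeries  4))).lowerCentralSeries
         2 := by
      rw [← lcs_map_eq π hsur 2, Subgroup.mem_map]
      refine ⟨a₃ ^ 2 * ⁅a₁, a₃⁆⁻¹, h3, ?_⟩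
      rw [map_mul, map_pow, map_inv, map_commutatorElement]
    have hQ3 := aux_core (π a₁) (π a₂) (π a₃) hgenQ hbotQ hmetQ h4Q he1 he2 he3
    have hGN : (⊤ : Subgroup G).lowerCentralSeries  3 ≤
        ⁅commutator G, commutator G⁆ ⊔ (⊤ : Subgroup G).lowerCentralSeries  4 := by
      have h := (Subgroup.map_eq_bot_iff _).mp ((lcs_map_eq π hsur 3).trans hQ3)
      rwa [hker] at h
    -- now pass to G ⧸ G''
    let ρ := QuotientGroup.mk' ⁅commutator G, commutator G⁆
    have hsurρ : Function.Surjective ρ := QuotientGroup.mk'_surjective _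
    have hkerρ : ρ.ker = ⁅commutator G, commutator G⁆ := QuotientGroup.ker_mk' _
    have h34 : (⊤ : Subgroup (G ⧸ ⁅commutator G, commutator G⁆)).lowerCentralSeries  3 ≤
        (⊤ : Subgroup (G ⧸ ⁅commutator G, commutator G⁆)).lowerCentralSeries  4 := by
      rw [← lcs_map_eq ρ hsurρ 3, ← lcs_map_eq ρ hsurρ 4]
      refine (Subgroup.map_mono hGN).trans ?_
      rw [Subgroup.map_sup]
      have hb : Subgroup.map ρ ⁅commutator G, commutator G⁆ = ⊥ :=
        (Subgroup.map_eq_bot_iff _).mpr (le_of_eq hkerρ.symm)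
      rw [hb, bot_sup_eq]
    have hmono : ∀ n, 3 ≤ n → (⊤ : Subgroup (G ⧸ ⁅commutator G, commutator G⁆)).lowerCentralSeries  3 ≤
        (⊤ : Subgroup (G ⧸ ⁅commutator G, commutator G⁆)).lowerCentralSeries  n := by
      intro n hn
      induction n, hn using Nat.le_induction with
      | base => exact le_rfl
      | succ n hn ih =>
          have hstep : (⊤ : Subgroup (G ⧸ ⁅commutator G, commutator G⁆)).lowerCentralSeries  4 ≤
              (⊤ : Subgroup (G ⧸ ⁅commutator G, commutator G⁆)).lowerCentralSeries  (n + 1) := by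
            have hs1 : (⊤ : Subgroup (G ⧸ ⁅commutator G, commutator G⁆)).lowerCentralSeries  4 =
                ⁅(⊤ : Subgroup (G ⧸ ⁅commutator G, commutator G⁆)).lowerCentralSeries  3, ⊤⁆ := rfl
            have hs2 : (⊤ : Subgroup (G ⧸ ⁅commutator G, commutator G⁆)).lowerCentralSeries  (n + 1) =
                ⁅(⊤ : Subgroup (G ⧸ ⁅commutator G, commutator G⁆)).lowerCentralSeries  n, ⊤⁆ := rfl
            rw [hs1, hs2]
            exact Subgroup.commutator_mono ih le_rfl
          exact h34.trans hstep
    obtain ⟨n, hnbot⟩ := Subgroup.nilpotent_iff_lowerCentralSeries.mp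
      (inferInstance : Group.IsNilpotent (G ⧸ ⁅commutator G, commutator G⁆))
    have hH3 : (⊤ : Subgroup (G ⧸ ⁅commutator G, commutator G⁆)).lowerCentralSeries  3 = ⊥ := by
      rcases le_or_gt 3 n with h | h
      · exact le_bot_iff.mp (hnbot ▸ hmono n h)
      · exact le_bot_iff.mp (hnbot ▸ Subgroup.lowerCentralSeries_antitone _ h.le)
    have h := (Subgroup.map_eq_bot_iff _).mp ((lcs_map_eq ρ hsurρ 3).trans hH3)
    rwa [hkerρ] at h
  exact le_antisymm easy hard
end
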